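/- arXiv:1608.04675 — 5 statements merged into one kernel-verified Lean document; each statement's English description precedes it below -/
import Mathlib

section
/- For integers r, t, n with 2 ≤ r and t ≤ n, the number of edges of the Turán graph satisfies t_r(n - t) ≥ t_r(n) - (1 - 1/r)·t·n. -/
open SimpleGraph Finset
open scoped Classical

/-- `t_r(n)`: the number of edges of the `r`-partite Turán graph on `n` vertices. -/
noncomputable def turanEdges (r n : ℕ) : ℕ := (SimpleGraph.turanGraph n r).edgeFinset.card

/-- Twice the edge count, as a sum over vertices (as naturals) of "degrees". -/
noncomputable def turanS (r m : ℕ) : ℕ :=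
  ∑ v ∈ Finset.range m, ((Finset.range m).filter fun w => w % r ≠ v % r).card

lemma turanS_handshake (r m : ℕ) : 2 * turanEdges r m = turanS r m := by
  rw [turanEdges, ← SimpleGraph.sum_degrees_eq_twice_card_edges, turanS,
    ← Fin.sum_univ_eq_sum_range
      (fun v => ((Finset.range m).filter fun w => w % r ≠ v % r).card) m]
  refine Finset.sum_congr rfl fun v _ => ?_
  rw [SimpleGraph.degree]
  refine Finset.card_bij (fun w _ => (w : ℕ)) ?_ ?_ ?_
  · intro a ha
    rw [SimpleGraph.mem_neighborFinset] at ha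
    have ha' : (v : ℕ) % r ≠ (a : ℕ) % r := ha
    simp only [Finset.mem_filter, Finset.mem_range]
    exact ⟨a.isLt, Ne.symm ha'⟩
  · intro a _ b _ h
    exact Fin.val_injective h
  · intro b hb
    simp only [Finset.mem_filter, Finset.mem_range] at hb
    refine ⟨⟨b, hb.1⟩, ?_, rfl⟩
    rw [SimpleGraph.mem_neighborFinset]
    exact (show (v : ℕ) % r ≠ b % r from Ne.symm hb.2)

lemma turanS_count_ge (r m : ℕ) (hr : 0 < r) :
    m / r ≤ ((Finset.range m).filter fun w => w % r = m % r).card := by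
  rw [← Finset.card_range (m / r)]
  apply Finset.card_le_card_of_injOn (fun k => k * r + m % r)
  · intro k hk
    simp only [Finset.mem_coe, Finset.mem_range] at hk
    simp only [Finset.mem_coe, Finset.mem_filter, Finset.mem_range]
    constructor
    · have h1 : (k + 1) * r ≤ m / r * r := Nat.mul_le_mul_right r hk
      have h2 : m / r * r ≤ m := Nat.div_mul_le_self m r
      have h3 : m % r < r := Nat.mod_lt _ hr
      have h4 : (k + 1) * r = k * r + r := by ring
      omega
    · rw [add_comm, Nat.add_mul_mod_self_right, Nat.mod_mod_of_dvd _ dvd_rfl]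
  · intro a _ b _ h
    have h' := Nat.add_right_cancel h
    exact Nat.eq_of_mul_eq_mul_right hr h'

lemma turanS_d_le (r m n : ℕ) (hr : 2 ≤ r) (hmn : m < n) :
    (((Finset.range m).filter fun w => w % r ≠ m % r).card : ℝ) ≤ (1 - 1 / r) * n := by
  have hr0 : 0 < r := by omega
  have hcount := turanS_count_ge r m hr0
  have hsplit := Finset.card_filter_add_card_filter_not
    (s := Finset.range m) (p := fun w => w % r = m % r)
  rw [Finset.card_range] at hsplit
  have hd : ((Finset.range m).filter fun w => w % r ≠ m % r).card ≤ m - m / r := by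
    have : ((Finset.range m).filter fun w => ¬ (w % r = m % r)).card
        = ((Finset.range m).filter fun w => w % r ≠ m % r).card := rfl
    omega
  have hq : m / r ≤ m := Nat.div_le_self m r
  have hdm := Nat.div_add_mod m r
  have hmodlt : m % r < r := Nat.mod_lt _ hr0
  have hcR : (((Finset.range m).filter fun w => w % r ≠ m % r).card : ℝ)
      ≤ (m : ℝ) - (m / r : ℕ) := by
    have := Nat.cast_le (α := ℝ) |>.mpr hd
    rwa [Nat.cast_sub hq] at this
  have hrR : (2 : ℝ) ≤ (r : ℝ) := by exact_mod_cast hr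
  have hnR : (m : ℝ) + 1 ≤ (n : ℝ) := by exact_mod_cast hmn
  have hdivmod : (r : ℝ) * ((m / r : ℕ) : ℝ) + ((m % r : ℕ) : ℝ) = (m : ℝ) := by
    exact_mod_cast hdm
  have hmodR : ((m % r : ℕ) : ℝ) ≤ (r : ℝ) - 1 := by
    have : (m % r : ℕ) ≤ r - 1 := by omega
    have := Nat.cast_le (α := ℝ) |>.mpr this
    rw [Nat.cast_sub (by omega)] at this
    simpa using this
  have h1 : (r : ℝ) * ((m : ℝ) - ((m / r : ℕ) : ℝ)) ≤ ((r : ℝ) - 1) * n := by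
    have hmul : ((r : ℝ) - 1) * ((m : ℝ) + 1) ≤ ((r : ℝ) - 1) * n :=
      mul_le_mul_of_nonneg_left hnR (by linarith)
    nlinarith [hdivmod, hmodR]
  have hrpos : (0 : ℝ) < (r : ℝ) := by linarith
  have h2 : (1 - 1 / (r : ℝ)) * n = ((r : ℝ) - 1) * n / r := by
    field_simp
  rw [h2, le_div_iff₀ hrpos]
  have h3 : (((Finset.range m).filter fun w => w % r ≠ m % r).card : ℝ) * r
      ≤ ((m : ℝ) - ((m / r : ℕ) : ℝ)) * r :=
    mul_le_mul_of_nonneg_right hcR (le_of_lt hrpos)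
  nlinarith [h1, h3]

lemma turanS_succ (r m : ℕ) :
    turanS r (m + 1)
      = turanS r m + 2 * ((Finset.range m).filter fun w => w % r ≠ m % r).card := by
  unfold turanS
  rw [Finset.sum_range_succ]
  have hlast : ((Finset.range (m + 1)).filter fun w => w % r ≠ m % r).card
      = ((Finset.range m).filter fun w => w % r ≠ m % r).card := by
    rw [Finset.range_add_one, Finset.filter_insert]
    simp
  have hmem : ∀ v, ((Finset.range (m + 1)).filter fun w => w % r ≠ v % r).card
      = ((Finset.range m).filter fun w => w % r ≠ v % r).card
        + (if m % r ≠ v % r then 1 else 0) := by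
    intro v
    rw [Finset.range_add_one, Finset.filter_insert]
    split_ifs with h
    · rw [Finset.card_insert_of_notMem (fun hm => by
        simp only [Finset.mem_filter, Finset.mem_range] at hm; omega)]
    · simp
  simp_rw [hmem]
  rw [Finset.sum_add_distrib]
  have hsum : (∑ v ∈ Finset.range m, if m % r ≠ v % r then 1 else 0)
      = ((Finset.range m).filter fun w => w % r ≠ m % r).card := by
    rw [Finset.card_filter]
    refine Finset.sum_congr rfl fun v _ => ?_
    by_cases h : v % r = m % r
    · simp [h]
    · simp only [ne_eq, h, not_false_eq_true, if_true]
      rw [if_pos (show ¬ m % r = v % r from fun hh => h hh.symm)]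
  rw [hsum]
  have htriv : (if m % r ≠ m % r then 1 else 0) = 0 := by simp
  rw [htriv]
  ring

lemma turanS_key (r n : ℕ) (hr : 2 ≤ r) :
    ∀ t, t ≤ n → (turanS r n : ℝ) ≤ (turanS r (n - t) : ℝ) + 2 * ((1 - 1 / r) * t * n) := by
  intro t
  induction t with
  | zero => intro _; simp
  | succ t ih =>
    intro h
    have H := ih (by omega)
    have hm : n - t = (n - (t + 1)) + 1 := by omega
    rw [hm, turanS_succ] at H
    have hb := turanS_d_le r (n - (t + 1)) n hr (by omega)
    push_cast at H ⊢
    have hexp : (1 - 1 / (r : ℝ)) * ((t : ℝ) + 1) * n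
        = (1 - 1 / (r : ℝ)) * t * n + (1 - 1 / (r : ℝ)) * n := by ring
    linarith

/-- For `2 ≤ r` and `t ≤ n`, `t_r(n - t) ≥ t_r(n) - (1 - 1/r)·t·n`. -/
theorem turanEdges_sub_ge (r t n : ℕ) (hr : 2 ≤ r) (ht : t ≤ n) :
    (turanEdges r n : ℝ) - (1 - 1 / (r : ℝ)) * t * n ≤ (turanEdges r (n - t) : ℝ) := by
  have h1 : (2 : ℝ) * (turanEdges r n : ℝ) = (turanS r n : ℝ) := by
    exact_mod_cast congrArg (Nat.cast (R := ℝ)) (turanS_handshake r n)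
  have h2 : (2 : ℝ) * (turanEdges r (n - t) : ℝ) = (turanS r (n - t) : ℝ) := by
    exact_mod_cast congrArg (Nat.cast (R := ℝ)) (turanS_handshake r (n - t))
  have h3 := turanS_key r n hr t ht
  linarith
end

section
/- Let r ≥ 2 and let G be a K_{r+1}-free graph on n vertices that is not r-partite (not r-colorable). Then G has a vertex v with degree d(v) ≤ ((3r-4)/(3r-1))·n. -/
open SimpleGraph Finset
open scoped Classical

/-- In a `K_{r+1}`-free graph that is not `r`-colorable, non-adjacency is not transitive:
there is a "cherry". -/
lemma aes_cherry {V : Type} [Fintype V] {r : ℕ} (H : SimpleGraph V)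
    (hfree : H.CliqueFree (r + 1)) (hcol : ¬ H.Colorable r) :
    ∃ v w₁ w₂ : V, H.Adj w₁ w₂ ∧ ¬ H.Adj v w₁ ∧ ¬ H.Adj v w₂ ∧ v ≠ w₁ ∧ v ≠ w₂ := by
  by_contra hch
  push_neg at hch
  set R : V → V → Prop := fun x y => x = y ∨ ¬ H.Adj x y with hR
  have hrefl : ∀ x, R x x := fun x => Or.inl rfl
  have hsymm : ∀ {x y}, R x y → R y x := by
    rintro x y (rfl | h)
    · exact Or.inl rfl
    · exact Or.inr fun a => h a.symm
  have htrans : ∀ {x y z}, R x y → R y z → R x z := by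
    rintro x y z (rfl | hxy) hyz
    · exact hyz
    rcases hyz with rfl | hyz
    · exact Or.inr hxy
    by_cases hxz : x = z
    · exact Or.inl hxz
    refine Or.inr fun hadj => ?_
    have hyx : y ≠ x := by rintro rfl; exact hyz hadj
    have hyz' : y ≠ z := by rintro rfl; exact hxy hadj
    exact hyz' (hch y x z hadj (fun a => hxy a.symm) hyz hyx)
  let S : Setoid V := ⟨R, ⟨hrefl, @hsymm, @htrans⟩⟩
  have hcard : Fintype.card (Quotient S) ≤ r := by
    by_contra hlt
    push_neg at hlt
    obtain ⟨f⟩ : Nonempty (Fin (r + 1) ↪ Quotient S) := by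
      apply Function.Embedding.nonempty_of_card_le
      simpa using hlt
    have key : ∀ a b : Quotient S, a ≠ b → H.Adj a.out b.out := by
      intro a b hab
      by_contra hn
      exact hab (by
        conv_lhs => rw [← Quotient.out_eq a]
        conv_rhs => rw [← Quotient.out_eq b]
        exact Quotient.sound (Or.inr hn))
    have emb : (⊤ : SimpleGraph (Fin (r + 1))) ↪g H := by
      refine ⟨⟨fun i => (f i).out, ?_⟩, ?_⟩
      · intro i j hij
        exact f.injective (Quotient.out_inj.1 hij)
      · intro i j
        simp only [Function.Embedding.coeFn_mk, top_adj]
        constructor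
        · intro hadj
          rintro rfl
          exact H.irrefl hadj
        · intro hij
          exact key _ _ (fun h => hij (f.injective h))
    exact SimpleGraph.not_cliqueFree_of_top_embedding emb.isContained hfree
  obtain ⟨e⟩ : Nonempty (Quotient S ↪ Fin r) := by
    apply Function.Embedding.nonempty_of_card_le
    simpa using hcard
  refine hcol ⟨Coloring.mk (fun v => e (Quotient.mk S v)) ?_⟩
  intro a b hab hEq
  have h2 : (Quotient.mk S a) = Quotient.mk S b := e.injective hEq
  rcases Quotient.exact h2 with rfl | hn
  · exact H.irrefl hab
  · exact hn hab

/-- Any `K_{r+1}`-free graph is contained in an edge-maximal one, in which every pair of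
distinct non-adjacent vertices has an `(r-1)`-clique in its common neighborhood. -/
lemma aes_maximal {V : Type} [Fintype V] {r : ℕ} (G : SimpleGraph V)
    (hfree : G.CliqueFree (r + 1)) :
    ∃ G' : SimpleGraph V, G ≤ G' ∧ G'.CliqueFree (r + 1) ∧
      ∀ x y : V, x ≠ y → ¬ G'.Adj x y →
        ∃ s : Finset V, G'.IsNClique (r - 1) s ∧ ∀ z ∈ s, G'.Adj x z ∧ G'.Adj y z := by
  classical
  obtain ⟨G', hG', hmax⟩ := Set.Finite.exists_maximalFor id
    {H : SimpleGraph V | G ≤ H ∧ H.CliqueFree (r + 1)} (Set.toFinite _) ⟨G, le_refl _, hfree⟩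
  refine ⟨G', hG'.1, hG'.2, ?_⟩
  intro x y hxy hnadj
  have hne : ¬ (G' ⊔ edge x y).CliqueFree (r + 1) := by
    intro hcf
    have hmem : (G' ⊔ edge x y) ∈ {H : SimpleGraph V | G ≤ H ∧ H.CliqueFree (r + 1)} :=
      ⟨hG'.1.trans le_sup_left, hcf⟩
    have heq := le_antisymm le_sup_left (hmax hmem le_sup_left)
    have hadj : (G' ⊔ edge x y).Adj x y := by
      rw [sup_adj, edge_adj]
      exact Or.inr ⟨Or.inl ⟨rfl, rfl⟩, hxy⟩
    rw [show G' ⊔ edge x y = G' from (congrArg id heq).symm] at hadj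
    exact hnadj hadj
  rw [CliqueFree] at hne
  push_neg at hne
  obtain ⟨K, hK⟩ := hne
  have hedge : ∀ a b : V, a ∈ K → b ∈ K → (G' ⊔ edge x y).Adj a b →
      (a = x ∧ b = y) ∨ (a = y ∧ b = x) ∨ G'.Adj a b := by
    intro a b _ _ hab
    rcases hab with h | h
    · exact Or.inr (Or.inr h)
    · rw [edge_adj] at h
      rcases h.1 with ⟨rfl, rfl⟩ | ⟨rfl, rfl⟩
      · exact Or.inl ⟨rfl, rfl⟩
      · exact Or.inr (Or.inl ⟨rfl, rfl⟩)
  have hxK : x ∈ K := by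
    by_contra hx
    refine hG'.2 K ⟨?_, hK.2⟩
    intro a ha b hb hab
    rcases hedge a b ha hb (hK.1 ha hb hab) with ⟨rfl, _⟩ | ⟨_, rfl⟩ | h
    · exact absurd ha hx
    · exact absurd hb hx
    · exact h
  have hyK : y ∈ K := by
    by_contra hy
    refine hG'.2 K ⟨?_, hK.2⟩
    intro a ha b hb hab
    rcases hedge a b ha hb (hK.1 ha hb hab) with ⟨_, rfl⟩ | ⟨rfl, _⟩ | h
    · exact absurd hb hy
    · exact absurd ha hy
    · exact h
  refine ⟨(K.erase x).erase y, ⟨?_, ?_⟩, ?_⟩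
  · intro a ha b hb hab
    have haK : a ∈ K := mem_of_mem_erase (mem_of_mem_erase ha)
    have hbK : b ∈ K := mem_of_mem_erase (mem_of_mem_erase hb)
    have hax : a ≠ x := ne_of_mem_erase (mem_of_mem_erase ha)
    have hay : a ≠ y := ne_of_mem_erase ha
    rcases hedge a b haK hbK (hK.1 (mem_coe.2 haK) (mem_coe.2 hbK) hab) with ⟨h1, _⟩ | ⟨h1, _⟩ | h
    · exact absurd h1 hax
    · exact absurd h1 hay
    · exact h
  · rw [card_erase_of_mem (mem_erase_of_ne_of_mem (Ne.symm hxy) hyK),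
      card_erase_of_mem hxK, hK.2]
    omega
  · intro z hz
    have hzK : z ∈ K := mem_of_mem_erase (mem_of_mem_erase hz)
    have hzx : z ≠ x := ne_of_mem_erase (mem_of_mem_erase hz)
    have hzy : z ≠ y := ne_of_mem_erase hz
    constructor
    · rcases hedge x z hxK hzK (hK.1 (mem_coe.2 hxK) (mem_coe.2 hzK) (Ne.symm hzx))
        with ⟨_, h2⟩ | ⟨h1, _⟩ | h
      · exact absurd h2 hzy
      · exact absurd h1 hxy
      · exact h
    · rcases hedge y z hyK hzK (hK.1 (mem_coe.2 hyK) (mem_coe.2 hzK) (Ne.symm hzy))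
        with ⟨h1, _⟩ | ⟨_, h2⟩ | h
      · exact absurd h1 (Ne.symm hxy)
      · exact absurd h2 hzx
      · exact h

/-- Andrásfai–Erdős–Sós. If `G` is a `K_{r+1}`-free graph on `n` vertices
which is not `r`-partite, then `G` has a vertex of degree at most `((3r-4)/(3r-1))·n`. -/
theorem andrasfai_erdos_sos {V : Type} [Fintype V] (r : ℕ) (hr : 2 ≤ r)
    (G : SimpleGraph V) [DecidableRel G.Adj]
    (hfree : G.CliqueFree (r + 1)) (hcol : ¬ G.Colorable r) :
    ∃ v : V, (G.degree v : ℝ) ≤ (3 * (r : ℝ) - 4) / (3 * (r : ℝ) - 1) * Fintype.card V := by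
  by_contra hcon
  push_neg at hcon
  set n := Fintype.card V with hn
  have hr1R : (2 : ℝ) ≤ (r : ℝ) := by exact_mod_cast hr
  have h3r : (0 : ℝ) < 3 * (r : ℝ) - 1 := by linarith
  obtain ⟨G', hle, hfree', hmaxE⟩ := aes_maximal G hfree
  have hcol' : ¬ G'.Colorable r := fun hc => hcol (hc.mono_left hle)
  obtain ⟨v, w₁, w₂, hw12, hv1, hv2, hne1, hne2⟩ := aes_cherry G' hfree' hcol'
  have hw12' : w₁ ≠ w₂ := hw12.ne
  obtain ⟨s₀, hs₀, hs₀adj⟩ := hmaxE v w₁ hne1 hv1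
  obtain ⟨t₀, ht₀, ht₀adj⟩ := hmaxE v w₂ hne2 hv2
  -- maximize |s ∩ t| over all wheel pairs
  have hPne : (univ.filter (fun p : Finset V × Finset V =>
      G'.IsNClique (r - 1) p.1 ∧ G'.IsNClique (r - 1) p.2 ∧
      (∀ z ∈ p.1, G'.Adj v z ∧ G'.Adj w₁ z) ∧
      (∀ z ∈ p.2, G'.Adj v z ∧ G'.Adj w₂ z))).Nonempty := by
    refine ⟨(s₀, t₀), ?_⟩
    simp only [mem_filter, mem_univ, true_and]
    exact ⟨hs₀, ht₀, hs₀adj, ht₀adj⟩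
  obtain ⟨p, hpmem, hpmax⟩ := Finset.exists_max_image _ (fun p : Finset V × Finset V =>
    (p.1 ∩ p.2).card) hPne
  obtain ⟨s, t⟩ := p
  rw [mem_filter] at hpmem
  obtain ⟨-, hs, ht, hsadj, htadj⟩ := hpmem
  -- basic membership facts
  have hvs : v ∉ s := fun h => G'.irrefl (hsadj v h).1
  have hvt : v ∉ t := fun h => G'.irrefl (htadj v h).1
  have hrr : r - 1 + 1 = r := by omega
  have hcliq_vs : G'.IsNClique r (insert v s) := by
    have := hs.insert (fun b hb => (hsadj b hb).1); rwa [hrr] at this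
  have hcliq_w1s : G'.IsNClique r (insert w₁ s) := by
    have := hs.insert (fun b hb => (hsadj b hb).2); rwa [hrr] at this
  have hcliq_vt : G'.IsNClique r (insert v t) := by
    have := ht.insert (fun b hb => (htadj b hb).1); rwa [hrr] at this
  have hcliq_w2t : G'.IsNClique r (insert w₂ t) := by
    have := ht.insert (fun b hb => (htadj b hb).2); rwa [hrr] at this
  have hst : s ≠ t := by
    rintro rfl
    have h1 : G'.IsNClique r (insert w₂ s) := by
      have := hs.insert (fun b hb => (htadj b hb).2); rwa [hrr] at this
    have h2 := h1.insert (a := w₁) (fun b hb => by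
      rcases mem_insert.1 hb with rfl | hb
      · exact hw12
      · exact (hsadj b hb).2)
    exact hfree' _ h2
  have hdcard : (s ∩ t).card ≤ r - 2 := by
    have hsub : s ∩ t ⊆ s := inter_subset_left
    have h1 : (s ∩ t).card ≤ r - 1 := hs.2 ▸ card_le_card hsub
    by_contra hcon2
    push_neg at hcon2
    have h2 : (s ∩ t).card = r - 1 := by omega
    have h3 : s ∩ t = s := eq_of_subset_of_card_le hsub (by rw [h2, hs.2])
    have h4 : s ⊆ t := by rw [← h3]; exact inter_subset_right
    exact hst (eq_of_subset_of_card_le h4 (by rw [hs.2, ht.2]))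
  by_cases hgood : ∃ c : V, (∀ h ∈ s ∩ t, G'.Adj c h) ∧ G'.Adj c v ∧ G'.Adj c w₁ ∧ G'.Adj c w₂ ∧
      ((s \ t).filter (fun h => ¬ G'.Adj c h)).card ≤ 1 ∧
      ((t \ s).filter (fun h => ¬ G'.Adj c h)).card ≤ 1
  · -- a good vertex lets us build a pair with strictly larger intersection: contradiction
    obtain ⟨c, hcd, hcv, hcw1, hcw2, hcsf, hctf⟩ := hgood
    have build : ∀ (u o : Finset V) (w : V), G'.IsNClique (r - 1) u →
        (∀ z ∈ u, G'.Adj v z ∧ G'.Adj w z) → G'.Adj c w →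
        (∀ h ∈ u ∩ o, G'.Adj c h) →
        ((u \ o).filter (fun h => ¬ G'.Adj c h)).card ≤ 1 →
        (u \ o).Nonempty →
        ∃ u' : Finset V, G'.IsNClique (r - 1) u' ∧ (∀ z ∈ u', G'.Adj v z ∧ G'.Adj w z) ∧
          c ∈ u' ∧ u ∩ o ⊆ u' := by
      intro u o w hu huadj hw' hcd' hfil hne
      obtain ⟨x', hx'mem, hx'key⟩ : ∃ x', x' ∈ u \ o ∧ ∀ h ∈ u, h ≠ x' → G'.Adj c h := by
        rcases ((u \ o).filter (fun h => ¬ G'.Adj c h)).eq_empty_or_nonempty with he | hne2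
        · obtain ⟨x₀, hx₀⟩ := hne
          refine ⟨x₀, hx₀, fun h hh _ => ?_⟩
          by_contra hnadj
          by_cases hho : h ∈ o
          · exact hnadj (hcd' h (mem_inter.2 ⟨hh, hho⟩))
          · have hmem2 : h ∈ (u \ o).filter (fun h => ¬ G'.Adj c h) :=
              mem_filter.2 ⟨mem_sdiff.2 ⟨hh, hho⟩, hnadj⟩
            rw [he] at hmem2
            exact absurd hmem2 (notMem_empty h)
        · obtain ⟨x₀, hx₀⟩ := hne2
          refine ⟨x₀, (mem_filter.1 hx₀).1, fun h hh hne3 => ?_⟩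
          by_contra hnadj
          by_cases hho : h ∈ o
          · exact hnadj (hcd' h (mem_inter.2 ⟨hh, hho⟩))
          · have hmem2 : h ∈ (u \ o).filter (fun h => ¬ G'.Adj c h) :=
              mem_filter.2 ⟨mem_sdiff.2 ⟨hh, hho⟩, hnadj⟩
            exact hne3 (Finset.card_le_one.1 hfil _ hmem2 _ hx₀)
      have hx'u : x' ∈ u := (mem_sdiff.1 hx'mem).1
      refine ⟨insert c (u.erase x'), ?_, ?_, mem_insert_self _ _, ?_⟩
      · have h1 : G'.IsNClique (r - 1 - 1) (u.erase x') := by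
          constructor
          · exact hu.1.subset (by exact_mod_cast erase_subset _ _)
          · rw [card_erase_of_mem hx'u, hu.2]
        have h2 := h1.insert (fun b hb => hx'key b (mem_of_mem_erase hb) (ne_of_mem_erase hb))
        have h3 : r - 1 - 1 + 1 = r - 1 := by omega
        rwa [h3] at h2
      · intro z hz
        rcases mem_insert.1 hz with rfl | hz
        · exact ⟨(hcv).symm, hw'.symm⟩
        · exact huadj z (mem_of_mem_erase hz)
      · intro h hh
        have hhu : h ∈ u := (mem_inter.1 hh).1
        have hho : h ∈ o := (mem_inter.1 hh).2
        have hhx : h ≠ x' := by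
          rintro rfl
          exact (mem_sdiff.1 hx'mem).2 hho
        exact mem_insert_of_mem (mem_erase_of_ne_of_mem hhx hhu)
    have hsdne : (s \ t).Nonempty := by
      rw [sdiff_nonempty]
      intro hsub
      exact hst (eq_of_subset_of_card_le hsub (by rw [hs.2, ht.2]))
    have htdne : (t \ s).Nonempty := by
      rw [sdiff_nonempty]
      intro hsub
      exact hst (eq_of_subset_of_card_le hsub (by rw [hs.2, ht.2])).symm
    obtain ⟨s', hs', hs'adj, hcs', hsub_s'⟩ := build s t w₁ hs hsadj hcw1 hcd hcsf hsdne
    obtain ⟨t', ht', ht'adj, hct', hsub_t'⟩ := build t s w₂ ht htadj hcw2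
      (fun h hh => hcd h (by rw [inter_comm] at hh; exact hh)) hctf htdne
    have hcst : c ∉ s ∩ t := fun hc => G'.irrefl (hcd c hc)
    have hsubset : insert c (s ∩ t) ⊆ s' ∩ t' := by
      intro z hz
      rcases mem_insert.1 hz with rfl | hz
      · exact mem_inter.2 ⟨hcs', hct'⟩
      · refine mem_inter.2 ⟨hsub_s' hz, hsub_t' ?_⟩
        rw [inter_comm]
        exact hz
    have hcard1 : (s ∩ t).card + 1 ≤ (s' ∩ t').card := by
      have h5 := card_le_card hsubset
      rwa [card_insert_of_notMem hcst] at h5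
    have hle2 := hpmax (s', t') (by
      simp only [mem_filter, mem_univ, true_and]
      exact ⟨hs', ht', hs'adj, ht'adj⟩)
    simp only at hle2
    omega
  · -- no good vertex: the weighted degree count gives a contradiction
    push_neg at hgood
    have hmiss : ∀ (c : V) (X : Finset V), G'.IsNClique r X → ∃ x ∈ X, ¬ G'.Adj c x := by
      intro c X hX
      by_contra h
      push_neg at h
      exact hfree' _ (hX.insert h)
    have hcard3 : ({v, w₁, w₂} : Finset V).card = 3 := by
      rw [card_insert_of_notMem (by simp [hne1, hne2]),
        card_insert_of_notMem (by simp [hw12']), card_singleton]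
    have hF : ∀ c : V,
        3 ≤ 3 * ((s ∩ t).filter (fun h => ¬ G'.Adj c h)).card
          + (({v, w₁, w₂} : Finset V).filter (fun h => ¬ G'.Adj c h)).card
          + ((s \ t).filter (fun h => ¬ G'.Adj c h)).card
          + ((t \ s).filter (fun h => ¬ G'.Adj c h)).card := by
      intro c
      by_cases hA : ((s ∩ t).filter (fun h => ¬ G'.Adj c h)).Nonempty
      · have := card_pos.2 hA
        omega
      · rw [not_nonempty_iff_eq_empty] at hA
        have hcd : ∀ h ∈ s ∩ t, G'.Adj c h := by
          intro h hh
          by_contra hnadj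
          have hmem2 : h ∈ (s ∩ t).filter (fun h => ¬ G'.Adj c h) := mem_filter.2 ⟨hh, hnadj⟩
          rw [hA] at hmem2
          exact absurd hmem2 (notMem_empty h)
        have hCpos : (G'.Adj c v ∨ G'.Adj c w₁) →
            1 ≤ ((s \ t).filter (fun h => ¬ G'.Adj c h)).card := by
          intro hor
          apply card_pos.2
          have key : ∀ a : V, G'.Adj c a → G'.IsNClique r (insert a s) →
              ((s \ t).filter (fun h => ¬ G'.Adj c h)).Nonempty := by
            intro a hca hclq
            obtain ⟨x, hx, hnx⟩ := hmiss c _ hclq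
            rcases mem_insert.1 hx with rfl | hx
            · exact absurd hca hnx
            · have hxt : x ∉ t := fun hxt => hnx (hcd x (mem_inter.2 ⟨hx, hxt⟩))
              exact ⟨x, mem_filter.2 ⟨mem_sdiff.2 ⟨hx, hxt⟩, hnx⟩⟩
          rcases hor with h' | h'
          · exact key v h' hcliq_vs
          · exact key w₁ h' hcliq_w1s
        have hDpos : (G'.Adj c v ∨ G'.Adj c w₂) →
            1 ≤ ((t \ s).filter (fun h => ¬ G'.Adj c h)).card := by
          intro hor
          apply card_pos.2
          have key : ∀ a : V, G'.Adj c a → G'.IsNClique r (insert a t) →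
              ((t \ s).filter (fun h => ¬ G'.Adj c h)).Nonempty := by
            intro a hca hclq
            obtain ⟨x, hx, hnx⟩ := hmiss c _ hclq
            rcases mem_insert.1 hx with rfl | hx
            · exact absurd hca hnx
            · have hxs : x ∉ s := fun hxs => hnx (hcd x (mem_inter.2 ⟨hxs, hx⟩))
              exact ⟨x, mem_filter.2 ⟨mem_sdiff.2 ⟨hx, hxs⟩, hnx⟩⟩
          rcases hor with h' | h'
          · exact key v h' hcliq_vt
          · exact key w₂ h' hcliq_w2t
        have hBmem : ∀ x ∈ ({v, w₁, w₂} : Finset V), ¬ G'.Adj c x →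
            x ∈ ({v, w₁, w₂} : Finset V).filter (fun h => ¬ G'.Adj c h) :=
          fun x hx hnx => mem_filter.2 ⟨hx, hnx⟩
        have hvmem : v ∈ ({v, w₁, w₂} : Finset V) := by simp
        have hw1mem : w₁ ∈ ({v, w₁, w₂} : Finset V) := by simp
        have hw2mem : w₂ ∈ ({v, w₁, w₂} : Finset V) := by simp
        by_cases hcv : G'.Adj c v <;> by_cases hcw1 : G'.Adj c w₁ <;> by_cases hcw2 : G'.Adj c w₂
        · -- all three adjacent: use stubbornness
          have hkey := hgood c hcd hcv hcw1 hcw2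
          have h1 := hCpos (Or.inl hcv)
          have h2 := hDpos (Or.inl hcv)
          by_cases hC1 : ((s \ t).filter (fun h => ¬ G'.Adj c h)).card ≤ 1
          · have := hkey hC1
            omega
          · omega
        · -- w₂ missed
          have hB : 1 ≤ (({v, w₁, w₂} : Finset V).filter (fun h => ¬ G'.Adj c h)).card :=
            card_pos.2 ⟨w₂, hBmem w₂ hw2mem hcw2⟩
          have h1 := hCpos (Or.inl hcv)
          have h2 := hDpos (Or.inl hcv)
          omega
        · -- w₁ missed
          have hB : 1 ≤ (({v, w₁, w₂} : Finset V).filter (fun h => ¬ G'.Adj c h)).card :=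
            card_pos.2 ⟨w₁, hBmem w₁ hw1mem hcw1⟩
          have h1 := hCpos (Or.inl hcv)
          have h2 := hDpos (Or.inl hcv)
          omega
        · -- w₁, w₂ missed
          have hB : 2 ≤ (({v, w₁, w₂} : Finset V).filter (fun h => ¬ G'.Adj c h)).card := by
            apply Finset.one_lt_card.2
            exact ⟨w₁, hBmem w₁ hw1mem hcw1, w₂, hBmem w₂ hw2mem hcw2, hw12'⟩
          have h1 := hCpos (Or.inl hcv)
          omega
        · -- v missed
          have hB : 1 ≤ (({v, w₁, w₂} : Finset V).filter (fun h => ¬ G'.Adj c h)).card :=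
            card_pos.2 ⟨v, hBmem v hvmem hcv⟩
          have h1 := hCpos (Or.inr hcw1)
          have h2 := hDpos (Or.inr hcw2)
          omega
        · -- v, w₂ missed
          have hB : 2 ≤ (({v, w₁, w₂} : Finset V).filter (fun h => ¬ G'.Adj c h)).card := by
            apply Finset.one_lt_card.2
            exact ⟨v, hBmem v hvmem hcv, w₂, hBmem w₂ hw2mem hcw2, hne2⟩
          have h1 := hCpos (Or.inr hcw1)
          omega
        · -- v, w₁ missed
          have hB : 2 ≤ (({v, w₁, w₂} : Finset V).filter (fun h => ¬ G'.Adj c h)).card := by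
            apply Finset.one_lt_card.2
            exact ⟨v, hBmem v hvmem hcv, w₁, hBmem w₁ hw1mem hcw1, hne1⟩
          have h2 := hDpos (Or.inr hcw2)
          omega
        · -- all three missed
          have hsub : ({v, w₁, w₂} : Finset V) ⊆
              ({v, w₁, w₂} : Finset V).filter (fun h => ¬ G'.Adj c h) := by
            intro x hx
            refine mem_filter.2 ⟨hx, ?_⟩
            rcases mem_insert.1 hx with rfl | hx
            · exact hcv
            rcases mem_insert.1 hx with rfl | hx
            · exact hcw1
            · rw [mem_singleton.1 hx]
              exact hcw2
          have hB : 3 ≤ (({v, w₁, w₂} : Finset V).filter (fun h => ¬ G'.Adj c h)).card := by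
            calc 3 = ({v, w₁, w₂} : Finset V).card := hcard3.symm
            _ ≤ _ := card_le_card hsub
          omega
    -- now the global count
    set m : V → ℕ := fun h => (univ.filter (fun c => ¬ G'.Adj c h)).card with hm
    have hswap : ∀ X : Finset V,
        (∑ c : V, (X.filter (fun h => ¬ G'.Adj c h)).card) = ∑ h ∈ X, m h := by
      intro X
      simp_rw [card_filter, hm]
      rw [Finset.sum_comm]
      simp [card_filter]
    set μ : ℝ := 3 * (n : ℝ) / (3 * (r : ℝ) - 1) with hμ
    have hmh : ∀ h : V, (m h : ℝ) < μ := by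
      intro h
      have h1 : m h ≤ (univ.filter (fun c => ¬ G.Adj c h)).card := by
        apply card_le_card
        intro c hc
        rw [mem_filter] at hc ⊢
        exact ⟨hc.1, fun hadj => hc.2 (hle hadj)⟩
      have hdegcount : (univ.filter (fun c => G.Adj c h)).card = G.degree h := by
        rw [degree]
        congr 1
        ext c
        simp [mem_neighborFinset, adj_comm]
      have h2 : (univ.filter (fun c => ¬ G.Adj c h)).card = n - G.degree h := by
        have h3 := Finset.card_filter_add_card_filter_not (s := (univ : Finset V))
          (p := fun c => G.Adj c h)
        rw [hdegcount, card_univ] at h3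
        omega
      have hdle : G.degree h ≤ n := by
        rw [degree, hn]
        exact card_le_univ _
      have hcon' := hcon h
      have hcast : ((n - G.degree h : ℕ) : ℝ) = (n : ℝ) - G.degree h := by
        rw [Nat.cast_sub hdle]
      have hkey : (n : ℝ) - G.degree h < μ := by
        rw [hμ]
        have hexp : (n : ℝ) - 3 * n / (3 * r - 1) = (3 * (r : ℝ) - 4) / (3 * (r : ℝ) - 1) * n := by
          field_simp
          ring
        linarith [hcon']
      calc (m h : ℝ) ≤ ((n - G.degree h : ℕ) : ℝ) := by
            exact_mod_cast le_trans h1 (le_of_eq h2)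
      _ = (n : ℝ) - G.degree h := hcast
      _ < μ := hkey
    have hμ0 : 0 ≤ μ := by
      rw [hμ]
      positivity
    -- sum of per-vertex bounds
    have hsumF : 3 * n ≤ 3 * (∑ h ∈ s ∩ t, m h) + (∑ h ∈ ({v, w₁, w₂} : Finset V), m h)
        + (∑ h ∈ s \ t, m h) + (∑ h ∈ t \ s, m h) := by
      have h1 : 3 * n = ∑ _c : V, 3 := by
        rw [sum_const, card_univ, smul_eq_mul, mul_comm]
      rw [h1, ← hswap, ← hswap, ← hswap, ← hswap, mul_sum, ← sum_add_distrib,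
        ← sum_add_distrib, ← sum_add_distrib]
      exact sum_le_sum (fun c _ => hF c)
    -- real bounds on each block
    have hboundX : ∀ X : Finset V, (∑ h ∈ X, (m h : ℝ)) ≤ X.card * μ := by
      intro X
      calc (∑ h ∈ X, (m h : ℝ)) ≤ ∑ _h ∈ X, μ := sum_le_sum (fun h _ => (hmh h).le)
      _ = X.card * μ := by rw [sum_const, nsmul_eq_mul]
    have hboundB : (∑ h ∈ ({v, w₁, w₂} : Finset V), (m h : ℝ)) < 3 * μ := by
      have hne : ({v, w₁, w₂} : Finset V).Nonempty := ⟨v, by simp⟩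
      calc (∑ h ∈ ({v, w₁, w₂} : Finset V), (m h : ℝ))
          < ∑ _h ∈ ({v, w₁, w₂} : Finset V), μ :=
            Finset.sum_lt_sum_of_nonempty hne (fun h _ => hmh h)
      _ = 3 * μ := by rw [sum_const, hcard3, nsmul_eq_mul]; norm_num
    -- weight count
    have hcards : (s ∩ t).card + (s \ t).card = r - 1 ∧ (s ∩ t).card + (t \ s).card = r - 1 := by
      constructor
      · rw [← hs.2]
        exact card_inter_add_card_sdiff s t
      · rw [← ht.2, inter_comm]
        exact card_inter_add_card_sdiff t s
    have hWnat : 3 * (s ∩ t).card + 3 + (s \ t).card + (t \ s).card ≤ 3 * r - 1 := by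
      obtain ⟨hc1, hc2⟩ := hcards
      omega
    -- final chain
    have hfinal : (3 : ℝ) * n < 3 * n := by
      have step1 : (3 : ℝ) * n ≤ 3 * (∑ h ∈ s ∩ t, (m h : ℝ))
          + (∑ h ∈ ({v, w₁, w₂} : Finset V), (m h : ℝ))
          + (∑ h ∈ s \ t, (m h : ℝ)) + (∑ h ∈ t \ s, (m h : ℝ)) := by
        exact_mod_cast hsumF
      have step2 : 3 * (∑ h ∈ s ∩ t, (m h : ℝ))
          + (∑ h ∈ ({v, w₁, w₂} : Finset V), (m h : ℝ))
          + (∑ h ∈ s \ t, (m h : ℝ)) + (∑ h ∈ t \ s, (m h : ℝ))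
          < (3 * ((s ∩ t).card : ℝ) + 3 + ((s \ t).card : ℝ) + ((t \ s).card : ℝ)) * μ := by
        have b1 := hboundX (s ∩ t)
        have b2 := hboundB
        have b3 := hboundX (s \ t)
        have b4 := hboundX (t \ s)
        nlinarith [hμ0]
      have step3 : (3 * ((s ∩ t).card : ℝ) + 3 + ((s \ t).card : ℝ) + ((t \ s).card : ℝ)) * μ
          ≤ (3 * (r : ℝ) - 1) * μ := by
        apply mul_le_mul_of_nonneg_right _ hμ0
        have hcast2 : ((3 * r - 1 : ℕ) : ℝ) = 3 * (r : ℝ) - 1 := by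
          have : 1 ≤ 3 * r := by omega
          push_cast [Nat.cast_sub this]
          ring
        calc 3 * ((s ∩ t).card : ℝ) + 3 + ((s \ t).card : ℝ) + ((t \ s).card : ℝ)
            = ((3 * (s ∩ t).card + 3 + (s \ t).card + (t \ s).card : ℕ) : ℝ) := by push_cast; ring
        _ ≤ ((3 * r - 1 : ℕ) : ℝ) := by exact_mod_cast hWnat
        _ = 3 * (r : ℝ) - 1 := hcast2
      have step4 : (3 * (r : ℝ) - 1) * μ = 3 * n := by
        rw [hμ]
        field_simp
      linarith
    exact lt_irrefl _ hfinal
end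

section
/- Let r ≥ 2, n ≥ 2r+1, and let G be a K_{r+1}-free graph on n vertices. If e(G) ≥ t_r(n) - ⌊n/r⌋ + 2, then G is r-partite. -/
open SimpleGraph Finset
open scoped Classical

namespace BrouwerAux

def balS (r n : ℕ) : ℕ := r * (n/r) * (n/r) + (2*(n/r)+1) * (n % r)

lemma terminal_eq {r n : ℕ} (hr : 0 < r) (x : Fin r → ℕ) (hx : ∑ i, x i = n)
    (ht : ∀ i j, x i ≤ x j + 1) : ∑ i, x i * x i = balS r n := by
  have hne : Nonempty (Fin r) := ⟨⟨0, hr⟩⟩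
  obtain ⟨i₀, -, hmin⟩ := Finset.exists_min_image (univ : Finset (Fin r)) x
    ⟨Classical.arbitrary _, mem_univ _⟩
  set μ := x i₀ with hμ
  have hbd : ∀ i, μ ≤ x i ∧ x i ≤ μ + 1 := fun i => ⟨hmin i (mem_univ i), ht i i₀⟩
  set b := #(univ.filter (fun i => x i = μ + 1)) with hb
  have hx1 : ∀ i, x i = μ + (if x i = μ + 1 then 1 else 0) := by
    intro i; have := hbd i; by_cases h : x i = μ + 1 <;> simp [h] <;> omega
  have hsum : n = r * μ + b := by
    conv_lhs => rw [← hx]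
    rw [hb, card_filter]
    calc ∑ i, x i = ∑ i, (μ + (if x i = μ + 1 then 1 else 0)) := by
          exact Finset.sum_congr rfl (fun i _ => hx1 i)
      _ = r * μ + ∑ i, (if x i = μ + 1 then 1 else 0) := by
          rw [Finset.sum_add_distrib, Finset.sum_const, card_univ, Fintype.card_fin, smul_eq_mul]
  have hsq : ∑ i, x i * x i = r * μ * μ + (2*μ+1) * b := by
    rw [hb, card_filter, Finset.mul_sum]
    calc ∑ i, x i * x i
        = ∑ i, (μ * μ + (2*μ+1) * (if x i = μ + 1 then 1 else 0)) := by
          refine Finset.sum_congr rfl (fun i _ => ?_)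
          by_cases h : x i = μ + 1
          · rw [h]; simp; ring
          · have : x i = μ := by have := hbd i; omega
            simp [this]
      _ = r * μ * μ + ∑ i, (2*μ+1) * (if x i = μ + 1 then 1 else 0) := by
          rw [Finset.sum_add_distrib, Finset.sum_const, card_univ, Fintype.card_fin,
            smul_eq_mul, mul_assoc]
  have hblt : b < r := by
    have hss : univ.filter (fun i => x i = μ + 1) ⊆ univ.erase i₀ := by
      intro i hi
      simp only [mem_filter] at hi
      refine Finset.mem_erase.2 ⟨?_, mem_univ _⟩
      rintro rfl; omega
    have := Finset.card_le_card hss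
    rw [Finset.card_erase_of_mem (mem_univ _), Finset.card_univ, Fintype.card_fin] at this
    omega
  have hdm : n / r = μ ∧ n % r = b := by
    rw [Nat.div_mod_unique hr]; omega
  rw [hsq, balS, hdm.1, hdm.2]

lemma balS_le_sum_sq {r : ℕ} (hr : 0 < r) :
    ∀ (N n : ℕ) (x : Fin r → ℕ), (∑ i, x i * x i ≤ N) → (∑ i, x i = n) →
    balS r n ≤ ∑ i, x i * x i := by
  intro N
  induction N with
  | zero =>
    intro n x hN hx
    have hz : ∀ i, x i = 0 := by
      intro i
      have h0 : ∑ i, x i * x i = 0 := by omega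
      have := (Finset.sum_eq_zero_iff).1 h0 i (mem_univ i)
      simpa using this
    exact le_of_eq (terminal_eq hr x hx (fun i j => by rw [hz i]; omega)).symm
  | succ N ihN =>
    intro n x hN hx
    by_cases hT : ∀ i j, x i ≤ x j + 1
    · exact le_of_eq (terminal_eq hr x hx hT).symm
    · push_neg at hT
      obtain ⟨i, j, hij⟩ := hT  -- x j + 1 < x i
      have hne : j ≠ i := by rintro rfl; omega
      set x' : Fin r → ℕ := Function.update (Function.update x i (x i - 1)) j (x j + 1) with hx'
      have hx'i : x' i = x i - 1 := by
        rw [hx', Function.update_of_ne (Ne.symm hne), Function.update_self]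
      have hx'j : x' j = x j + 1 := by rw [hx', Function.update_self]
      have hx'o : ∀ k, k ≠ i → k ≠ j → x' k = x k := by
        intro k h1 h2
        rw [hx', Function.update_of_ne h2, Function.update_of_ne h1]
      -- sums decompose
      have hsplit : ∀ f : Fin r → ℕ, ∑ k, f k = f i + f j + ∑ k ∈ (univ.erase i).erase j, f k := by
        intro f
        rw [← Finset.add_sum_erase _ f (mem_univ i)]
        rw [← Finset.add_sum_erase _ f (Finset.mem_erase.2 ⟨hne, mem_univ j⟩)]
        ring
      have hsum' : ∑ k, x' k = n := by
        rw [hsplit x', hx'i, hx'j, ← hx, hsplit x]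
        have : ∑ k ∈ (univ.erase i).erase j, x' k = ∑ k ∈ (univ.erase i).erase j, x k := by
          refine Finset.sum_congr rfl (fun k hk => ?_)
          simp only [Finset.mem_erase] at hk
          exact hx'o k hk.2.1 hk.1
        omega
      have hsq' : ∑ k, x' k * x' k + 2 ≤ ∑ k, x k * x k := by
        rw [hsplit (fun k => x' k * x' k), hsplit (fun k => x k * x k), hx'i, hx'j]
        have heq : ∑ k ∈ (univ.erase i).erase j, x' k * x' k
            = ∑ k ∈ (univ.erase i).erase j, x k * x k := by
          refine Finset.sum_congr rfl (fun k hk => ?_)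
          simp only [Finset.mem_erase] at hk
          rw [hx'o k hk.2.1 hk.1]
        rw [heq]
        have hkey : (x i - 1) * (x i - 1) + (x j + 1) * (x j + 1) + 2 ≤ x i * x i + x j * x j := by
          obtain ⟨c, hc⟩ : ∃ c, x i = c + 1 := ⟨x i - 1, by omega⟩
          rw [hc]
          simp only [Nat.add_sub_cancel]
          nlinarith
        omega
      have := ihN n x' (by omega) hsum'
      omega

lemma balS_le_sum_sq'' {r n : ℕ} (hr : 2 ≤ r) :
    ∀ (d : ℕ) (x : Fin r → ℕ), (∑ i, x i = n) → ∀ i₀ : Fin r, n / r ≤ x i₀ + d →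
    balS r n + 2 * (n / r) ≤ (∑ i, x i * x i) + 2 * x i₀ := by
  intro d
  induction d with
  | zero =>
    intro x hx i₀ hd
    have := balS_le_sum_sq (by omega) (∑ i, x i * x i) n x le_rfl hx
    omega
  | succ d ihd =>
    intro x hx i₀ hd
    by_cases hd' : n / r ≤ x i₀ + d
    · exact ihd x hx i₀ hd'
    push_neg at hd'
    -- x i₀ + d < n/r: find big class
    have hstep : ∃ k, k ≠ i₀ ∧ n / r + 1 ≤ x k := by
      by_contra hcon
      push_neg at hcon
      have hsum : ∑ k, x k ≤ x i₀ + (r - 1) * (n / r) := by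
        rw [← Finset.add_sum_erase _ x (mem_univ i₀)]
        have : ∑ k ∈ univ.erase i₀, x k ≤ ∑ k ∈ univ.erase i₀, (n / r) := by
          refine Finset.sum_le_sum (fun k hk => ?_)
          have := hcon k (Finset.mem_erase.1 hk).1
          omega
        rw [Finset.sum_const, Finset.card_erase_of_mem (mem_univ _), card_univ,
          Fintype.card_fin, smul_eq_mul] at this
        omega
      have hrq : r * (n / r) ≤ n := by
        calc r * (n / r) = n / r * r := mul_comm _ _
          _ ≤ n := Nat.div_mul_le_self n r
      have h1 : (r - 1) * (n / r) + (n / r) = r * (n / r) := by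
        have : r - 1 + 1 = r := by omega
        calc (r-1) * (n/r) + (n/r) = (r - 1 + 1) * (n/r) := by ring
          _ = r * (n/r) := by rw [this]
      omega
    obtain ⟨k, hki, hk⟩ := hstep
    set x' : Fin r → ℕ := Function.update (Function.update x k (x k - 1)) i₀ (x i₀ + 1) with hx'
    have hx'k : x' k = x k - 1 := by
      rw [hx', Function.update_of_ne hki, Function.update_self]
    have hx'i : x' i₀ = x i₀ + 1 := by rw [hx', Function.update_self]
    have hx'o : ∀ l, l ≠ k → l ≠ i₀ → x' l = x l := by
      intro l h1 h2
      rw [hx', Function.update_of_ne h2, Function.update_of_ne h1]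
    have hsplit : ∀ f : Fin r → ℕ, ∑ l, f l = f k + f i₀ + ∑ l ∈ (univ.erase k).erase i₀, f l := by
      intro f
      rw [← Finset.add_sum_erase _ f (mem_univ k)]
      rw [← Finset.add_sum_erase _ f (Finset.mem_erase.2 ⟨Ne.symm hki, mem_univ i₀⟩)]
      ring
    have hrest : ∑ l ∈ (univ.erase k).erase i₀, x' l = ∑ l ∈ (univ.erase k).erase i₀, x l := by
      refine Finset.sum_congr rfl (fun l hl => ?_)
      simp only [Finset.mem_erase] at hl
      exact hx'o l hl.2.1 hl.1
    have hsum' : ∑ l, x' l = n := by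
      rw [hsplit x', hx'k, hx'i, hrest, ← hx, hsplit x]; omega
    have hsq' : ∑ l, x' l * x' l + 2 ≤ ∑ l, x l * x l := by
      rw [hsplit (fun l => x' l * x' l), hsplit (fun l => x l * x l), hx'k, hx'i]
      have heq : ∑ l ∈ (univ.erase k).erase i₀, x' l * x' l
          = ∑ l ∈ (univ.erase k).erase i₀, x l * x l := by
        refine Finset.sum_congr rfl (fun l hl => ?_)
        simp only [Finset.mem_erase] at hl
        rw [hx'o l hl.2.1 hl.1]
      rw [heq]
      have hkey : (x k - 1) * (x k - 1) + (x i₀ + 1) * (x i₀ + 1) + 2 ≤ x k * x k + x i₀ * x i₀ := by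
        obtain ⟨c, hc⟩ : ∃ c, x k = c + 1 := ⟨x k - 1, by omega⟩
        have hci : x i₀ + 1 ≤ c := by omega
        rw [hc]
        simp only [Nat.add_sub_cancel]
        nlinarith
      omega
    have := ihd x' hsum' i₀ (by omega)
    rw [hx'i] at this
    omega

lemma balS_le_sum_sq' {r n : ℕ} (hr : 2 ≤ r) (x : Fin r → ℕ) (hx : ∑ i, x i = n) (i₀ : Fin r) :
    balS r n + 2 * (n / r) ≤ (∑ i, x i * x i) + 2 * x i₀ :=
  balS_le_sum_sq'' hr (n / r) x hx i₀ (by omega)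

lemma balS_succ {r n : ℕ} (hr : 0 < r) (hn : 0 < n) :
    balS r n = balS r (n-1) + 2 * ((n-1)/r) + 1 := by
  set q' := (n-1)/r with hq'
  set b' := (n-1)%r with hb'
  have hdm : r * q' + b' = n - 1 := Nat.div_add_mod _ _
  have hb'lt : b' < r := Nat.mod_lt _ hr
  by_cases hc : b' + 1 < r
  · have h2 : n / r = q' ∧ n % r = b' + 1 := by
      rw [Nat.div_mod_unique hr]; omega
    rw [balS, balS, h2.1, h2.2, ← hq', ← hb']
    ring
  · have hbr : b' + 1 = r := by omega
    have h2 : n / r = q' + 1 ∧ n % r = 0 := by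
      rw [Nat.div_mod_unique hr]
      have : r * (q' + 1) = r * q' + r := by ring
      omega
    rw [balS, balS, h2.1, h2.2, ← hq', ← hb', ← hbr]
    ring
lemma balS_ge {r n : ℕ} : n * (n / r) ≤ balS r n := by
  rcases Nat.eq_zero_or_pos r with rfl | hr
  · simp [balS]
  have hdm : r * (n/r) + n % r = n := Nat.div_add_mod _ _
  rw [balS]
  nlinarith [Nat.zero_le (n % r), Nat.zero_le (n / r)]

lemma card_comp_update {r : ℕ} {V : Type} [DecidableEq V] (F : Fin r → Finset V) (j : Fin r)
    (s : Finset V) :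
    (fun c => #(Function.update F j s c)) = Function.update (fun c => #(F c)) j #s := by
  funext c
  by_cases h : c = j
  · subst h; simp
  · simp [Function.update_of_ne h]

lemma bad_pairs_lower {V : Type} [Fintype V] {r : ℕ} {G : SimpleGraph V}
    (hf : G.CliqueFree (r+1)) (v : V) (κ : V → Fin r)
    (A : Fin r → Finset V) (hA : ∀ c, A c = (G.neighborFinset v).filter (fun x => κ x = c))
    (hne : ∀ c, (A c).Nonempty) {i₀ j₀ : Fin r} (hij : i₀ ≠ j₀)
    (hmin : ∀ i j : Fin r, i ≠ j → #(A i₀) * #(A j₀) ≤ #(A i) * #(A j)) :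
    2 * (#(A i₀) * #(A j₀)) ≤
      #(univ.filter (fun p : V × V => p.1 ∈ G.neighborFinset v ∧ p.2 ∈ G.neighborFinset v ∧
        κ p.1 ≠ κ p.2 ∧ ¬ G.Adj p.1 p.2)) := by
  set Bad := univ.filter (fun p : V × V => p.1 ∈ G.neighborFinset v ∧ p.2 ∈ G.neighborFinset v ∧
        κ p.1 ≠ κ p.2 ∧ ¬ G.Adj p.1 p.2) with hBad
  set T := Fintype.piFinset A with hT
  have hmemA : ∀ c x, x ∈ A c → κ x = c ∧ x ∈ G.neighborFinset v := by
    intro c x hx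
    rw [hA c] at hx
    exact ⟨(mem_filter.1 hx).2, (mem_filter.1 hx).1⟩
  -- every transversal contains a nonadjacent pair
  have hclaim : ∀ t ∈ T, ∃ c c' : Fin r, c ≠ c' ∧ ¬ G.Adj (t c) (t c') := by
    intro t ht
    by_contra hcon
    push_neg at hcon
    rw [hT, Fintype.mem_piFinset] at ht
    have hinj : Function.Injective t := by
      intro a b hab
      have h1 := (hmemA a (t a) (ht a)).1
      have h2 := (hmemA b (t b) (ht b)).1
      rw [← h1, ← h2, hab]
    have hvni : v ∉ univ.image t := by
      intro hv
      obtain ⟨c, -, hc⟩ := Finset.mem_image.1 hv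
      have := (hmemA c (t c) (ht c)).2
      rw [hc] at this
      exact G.notMem_neighborFinset_self v this
    refine hf (insert v (univ.image t)) ⟨?_, ?_⟩
    · intro x hx y hy hxy
      simp only [coe_insert, Set.mem_insert_iff, Finset.mem_coe, Finset.mem_image,
        mem_univ, true_and] at hx hy
      rcases hx with rfl | ⟨c, rfl⟩
      · rcases hy with rfl | ⟨c, rfl⟩
        · exact absurd rfl hxy
        · exact (mem_neighborFinset _ _ _).1 (hmemA c (t c) (ht c)).2
      · rcases hy with rfl | ⟨c', rfl⟩
        · exact ((mem_neighborFinset _ _ _).1 (hmemA c (t c) (ht c)).2).symm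
        · exact hcon c c' (fun h => hxy (by rw [h]))
    · rw [Finset.card_insert_of_notMem hvni, Finset.card_image_of_injective _ hinj,
        card_univ, Fintype.card_fin]
  -- each transversal contributes two bad ordered pairs
  have hcount1 : ∀ t ∈ T, 2 ≤ #(Bad.filter (fun p => t (κ p.1) = p.1 ∧ t (κ p.2) = p.2)) := by
    intro t ht
    obtain ⟨c, c', hcc, hnadj⟩ := hclaim t ht
    rw [hT, Fintype.mem_piFinset] at ht
    have h1 := hmemA c (t c) (ht c)
    have h2 := hmemA c' (t c') (ht c')
    have hne2 : t c ≠ t c' := by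
      intro h
      rw [← h1.1, ← h2.1] at hcc
      exact hcc (by rw [h])
    have hp1 : ((t c, t c') : V × V) ∈ Bad.filter (fun p => t (κ p.1) = p.1 ∧ t (κ p.2) = p.2) := by
      refine mem_filter.2 ⟨mem_filter.2 ⟨mem_univ _, h1.2, h2.2, by rw [h1.1, h2.1]; exact hcc, hnadj⟩, ?_⟩
      constructor
      · show t (κ (t c)) = t c; rw [h1.1]
      · show t (κ (t c')) = t c'; rw [h2.1]
    have hp2 : ((t c', t c) : V × V) ∈ Bad.filter (fun p => t (κ p.1) = p.1 ∧ t (κ p.2) = p.2) := by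
      refine mem_filter.2 ⟨mem_filter.2 ⟨mem_univ _, h2.2, h1.2, by rw [h1.1, h2.1]; exact hcc.symm,
        fun h => hnadj h.symm⟩, ?_⟩
      constructor
      · show t (κ (t c')) = t c'; rw [h2.1]
      · show t (κ (t c)) = t c; rw [h1.1]
    have : ((t c, t c') : V × V) ≠ (t c', t c) := by
      intro h
      exact hne2 (congrArg Prod.fst h)
    exact Finset.one_lt_card.2 ⟨_, hp1, _, hp2, this⟩
  -- double counting swap
  have hswap : ∑ t ∈ T, #(Bad.filter (fun p => t (κ p.1) = p.1 ∧ t (κ p.2) = p.2))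
      = ∑ p ∈ Bad, #(T.filter (fun t => t (κ p.1) = p.1 ∧ t (κ p.2) = p.2)) := by
    simp_rw [card_filter]
    exact Finset.sum_comm
  -- fiber size over each bad pair
  have hfiber : ∀ p ∈ Bad, (#(A i₀) * #(A j₀)) *
      #(T.filter (fun t => t (κ p.1) = p.1 ∧ t (κ p.2) = p.2)) ≤ ∏ c, #(A c) := by
    intro p hp
    rw [hBad, mem_filter] at hp
    obtain ⟨-, hp1, hp2, hpk, hpn⟩ := hp
    set i := κ p.1 with hi
    set j := κ p.2 with hj
    have hij2 : i ≠ j := hpk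
    have hp1A : p.1 ∈ A i := by rw [hA]; exact mem_filter.2 ⟨hp1, rfl⟩
    have hp2A : p.2 ∈ A j := by rw [hA]; exact mem_filter.2 ⟨hp2, rfl⟩
    have hTp : T.filter (fun t => t i = p.1 ∧ t j = p.2)
        = Fintype.piFinset (Function.update (Function.update A i {p.1}) j {p.2}) := by
      ext t
      simp only [mem_filter, hT, Fintype.mem_piFinset]
      constructor
      · rintro ⟨htA, ht1, ht2⟩ c
        by_cases hcj : c = j
        · subst hcj; rw [Function.update_self]; exact mem_singleton.2 ht2
        · rw [Function.update_of_ne hcj]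
          by_cases hci : c = i
          · subst hci; rw [Function.update_self]; exact mem_singleton.2 ht1
          · rw [Function.update_of_ne hci]; exact htA c
      · intro ht
        have hti : t i = p.1 := by
          have := ht i
          rw [Function.update_of_ne hij2, Function.update_self] at this
          exact mem_singleton.1 this
        have htj : t j = p.2 := by
          have := ht j
          rw [Function.update_self] at this
          exact mem_singleton.1 this
        refine ⟨fun c => ?_, hti, htj⟩
        by_cases hcj : c = j
        · subst hcj; rw [htj]; exact hp2A
        · by_cases hci : c = i
          · subst hci; rw [hti]; exact hp1A
          · have := ht c
            rw [Function.update_of_ne hcj, Function.update_of_ne hci] at this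
            exact this
    rw [hTp, Fintype.card_piFinset]
    rw [card_comp_update, card_comp_update]
    rw [Finset.prod_update_of_mem (mem_univ j), ← Finset.erase_eq]
    have hjmem : i ∈ univ.erase j := Finset.mem_erase.2 ⟨hij2, mem_univ _⟩
    rw [Finset.prod_update_of_mem hjmem, ← Finset.erase_eq]
    simp only [Finset.card_singleton, one_mul]
    calc (#(A i₀) * #(A j₀)) * ∏ c ∈ (univ.erase j).erase i, #(A c)
        ≤ (#(A i) * #(A j)) * ∏ c ∈ (univ.erase j).erase i, #(A c) :=
          Nat.mul_le_mul_right _ (hmin i j hij2)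
      _ = #(A j) * (#(A i) * ∏ c ∈ (univ.erase j).erase i, #(A c)) := by ring
      _ = #(A j) * ∏ c ∈ univ.erase j, #(A c) := by
          rw [Finset.mul_prod_erase (univ.erase j) (fun c => #(A c)) hjmem]
      _ = ∏ c, #(A c) := Finset.mul_prod_erase univ (fun c => #(A c)) (mem_univ j)
  -- assemble
  have hprodpos : 0 < ∏ c, #(A c) := Finset.prod_pos (fun c _ => Finset.card_pos.2 (hne c))
  have hTcard : #T = ∏ c, #(A c) := by rw [hT, Fintype.card_piFinset]
  have hlb : 2 * ∏ c, #(A c) ≤ ∑ p ∈ Bad, #(T.filter (fun t => t (κ p.1) = p.1 ∧ t (κ p.2) = p.2)) := by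
    rw [← hswap]
    calc 2 * ∏ c, #(A c) = ∑ _t ∈ T, 2 := by rw [Finset.sum_const, smul_eq_mul, hTcard]; ring
      _ ≤ _ := Finset.sum_le_sum hcount1
  have hmain : (2 * (#(A i₀) * #(A j₀))) * ∏ c, #(A c) ≤ #Bad * ∏ c, #(A c) := by
    calc (2 * (#(A i₀) * #(A j₀))) * ∏ c, #(A c)
        = (#(A i₀) * #(A j₀)) * (2 * ∏ c, #(A c)) := by ring
      _ ≤ (#(A i₀) * #(A j₀)) * ∑ p ∈ Bad, #(T.filter (fun t => t (κ p.1) = p.1 ∧ t (κ p.2) = p.2)) :=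
          Nat.mul_le_mul_left _ hlb
      _ = ∑ p ∈ Bad, (#(A i₀) * #(A j₀)) * #(T.filter (fun t => t (κ p.1) = p.1 ∧ t (κ p.2) = p.2)) :=
          Finset.mul_sum _ _ _
      _ ≤ ∑ _p ∈ Bad, ∏ c, #(A c) := Finset.sum_le_sum hfiber
      _ = #Bad * ∏ c, #(A c) := by rw [Finset.sum_const, smul_eq_mul]
  exact Nat.le_of_mul_le_mul_right hmain hprodpos

lemma two_turanEdges {r : ℕ} (n : ℕ) (hr : 0 < r) :
    2 * turanEdges r n + balS r n = n * n := by
  set q := n / r with hq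
  have hqr : r * q ≤ n := by
    calc r * q = q * r := mul_comm _ _
      _ ≤ n := Nat.div_mul_le_self n r
  have hnlt : n < (q + 1) * r := by
    have h1 : r * q + n % r = n := by rw [hq]; exact Nat.div_add_mod n r
    have h2 := Nat.mod_lt n hr
    have h3 : (q + 1) * r = r * q + r := by ring
    omega
  set ρ : Fin n → Fin r := fun v => ⟨(v : ℕ) % r, Nat.mod_lt _ hr⟩ with hρ
  set sz : Fin r → ℕ := fun c => #(univ.filter (fun v : Fin n => ρ v = c)) with hsz
  have hsz_eq : ∀ c : Fin r, sz c = #((range n).filter (fun m => m % r = (c : ℕ))) := by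
    intro c
    refine Finset.card_bij (fun v _ => (v : ℕ)) ?_ ?_ ?_
    · intro v hv
      simp only [hsz, mem_filter, mem_univ, true_and, hρ, Fin.ext_iff] at hv ⊢
      exact ⟨mem_range.2 v.isLt, hv⟩
    · intro a _ b _ h
      exact Fin.ext h
    · intro b hb
      simp only [mem_filter, mem_range] at hb
      exact ⟨⟨b, hb.1⟩, by simp [hsz, hρ, Fin.ext_iff, hb.2], rfl⟩
  have hsz_lb : ∀ c : Fin r, q ≤ sz c := by
    intro c
    rw [hsz_eq c]
    have himg : (range q).image (fun j => j * r + (c : ℕ))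
        ⊆ (range n).filter (fun m => m % r = (c : ℕ)) := by
      intro m hm
      simp only [mem_image, mem_range] at hm
      obtain ⟨j, hj, rfl⟩ := hm
      have hc := c.isLt
      have hlt : j * r + (c : ℕ) < n := by
        calc j * r + (c : ℕ) < j * r + r := by omega
          _ = (j + 1) * r := by ring
          _ ≤ q * r := Nat.mul_le_mul_right r (by omega)
          _ = r * q := mul_comm _ _
          _ ≤ n := hqr
      refine mem_filter.2 ⟨mem_range.2 hlt, ?_⟩
      rw [Nat.mul_add_mod', Nat.mod_eq_of_lt hc]
    calc q = #(range q) := (Finset.card_range q).symm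
      _ = #((range q).image (fun j => j * r + (c : ℕ))) := by
          rw [Finset.card_image_of_injective]
          intro a b hab
          have hab' : a * r + (c : ℕ) = b * r + (c : ℕ) := hab
          have : a * r = b * r := by omega
          exact Nat.eq_of_mul_eq_mul_right hr this
      _ ≤ _ := Finset.card_le_card himg
  have hsz_ub : ∀ c : Fin r, sz c ≤ q + 1 := by
    intro c
    rw [hsz_eq c]
    have himg : ((range n).filter (fun m => m % r = (c : ℕ))).image (· / r) ⊆ range (q + 1) := by
      intro m hm
      simp only [mem_image, mem_filter, mem_range] at hm
      obtain ⟨j, ⟨hj, -⟩, rfl⟩ := hm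
      exact mem_range.2 ((Nat.div_lt_iff_lt_mul hr).2 (lt_of_lt_of_le hj (le_of_lt hnlt)))
    calc #((range n).filter (fun m => m % r = (c : ℕ)))
        = #(((range n).filter (fun m => m % r = (c : ℕ))).image (· / r)) := by
          rw [Finset.card_image_of_injOn]
          intro a ha b hb hab
          simp only [Finset.mem_coe, mem_filter, mem_range] at ha hb
          have hab' : a / r = b / r := hab
          have h1 := Nat.div_add_mod a r
          have h2 := Nat.div_add_mod b r
          rw [hab'] at h1
          omega
      _ ≤ #(range (q+1)) := Finset.card_le_card himg
      _ = q + 1 := Finset.card_range _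
  have hsum_sz : ∑ c, sz c = n := by
    have := Finset.card_eq_sum_card_fiberwise (f := ρ) (s := (univ : Finset (Fin n)))
      (t := (univ : Finset (Fin r))) (fun x _ => mem_univ _)
    simp only [card_univ, Fintype.card_fin] at this
    rw [hsz]
    exact this.symm
  have hsq_sz : ∑ c, sz c * sz c = balS r n := by
    refine terminal_eq hr _ hsum_sz (fun i j => ?_)
    calc sz i ≤ q + 1 := hsz_ub i
      _ ≤ sz j + 1 := by have := hsz_lb j; omega
  -- degrees
  have hdeg : ∀ v : Fin n, (turanGraph n r).degree v + sz (ρ v) = n := by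
    intro v
    have h2 : sz (ρ v) = #(univ.filter (fun w => ¬ (turanGraph n r).Adj v w)) := by
      show #(univ.filter (fun w : Fin n => ρ w = ρ v)) = _
      congr 1
      refine Finset.filter_congr (fun w _ => ?_)
      have h3 : (turanGraph n r).Adj v w ↔ (v : ℕ) % r ≠ (w : ℕ) % r := Iff.rfl
      simp only [h3, hρ, Fin.ext_iff, not_not, eq_comm, eq_iff_iff]
    rw [degree, neighborFinset_eq_filter, h2,
      Finset.card_filter_add_card_filter_not (fun w => (turanGraph n r).Adj v w)]
    simp
  have hdegsum := SimpleGraph.sum_degrees_eq_twice_card_edges (turanGraph n r)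
  have hfib : ∑ v : Fin n, sz (ρ v) = ∑ c, sz c * sz c := by
    rw [← Finset.sum_fiberwise_of_maps_to (g := ρ) (t := (univ : Finset (Fin r)))
      (fun x _ => mem_univ _) (fun v => sz (ρ v))]
    refine Finset.sum_congr rfl (fun c _ => ?_)
    have : ∀ v ∈ univ.filter (fun v : Fin n => ρ v = c), sz (ρ v) = sz c := by
      intro v hv
      rw [(mem_filter.1 hv).2]
    rw [Finset.sum_congr rfl this, Finset.sum_const, smul_eq_mul]
  have htot : ∑ v : Fin n, ((turanGraph n r).degree v + sz (ρ v)) = n * n := by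
    rw [Finset.sum_congr rfl (fun v _ => hdeg v), Finset.sum_const, card_univ,
      Fintype.card_fin, smul_eq_mul]
  rw [Finset.sum_add_distrib, hdegsum, hfib, hsq_sz] at htot
  rw [turanEdges]
  convert htot using 2
lemma turanGraph_colorable {n r : ℕ} (hr : 0 < r) : (turanGraph n r).Colorable r :=
  ⟨SimpleGraph.Coloring.mk (fun v => ⟨(v : ℕ) % r, Nat.mod_lt _ hr⟩)
    (fun {v w} h => by simpa [Fin.ext_iff, turanGraph_adj] using h)⟩

lemma edge_bound {V : Type} [Fintype V] {r : ℕ} (hr : 0 < r) (G : SimpleGraph V)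
    (hf : G.CliqueFree (r+1)) : #G.edgeFinset ≤ turanEdges r (Fintype.card V) := by
  obtain ⟨H, hdec, hH⟩ := exists_isTuranMaximal (V := V) hr
  obtain ⟨f⟩ := hH.nonempty_iso_turanGraph
  have h1 : #H.edgeFinset = turanEdges r (Fintype.card V) := by
    rw [turanEdges]
    exact f.card_edgeFinset_eq
  rw [← h1]
  exact hH.2 hf

lemma colorable_of_max {V : Type} [Fintype V] {r : ℕ} (hr : 0 < r) (G : SimpleGraph V)
    (hf : G.CliqueFree (r+1)) (h : #G.edgeFinset = turanEdges r (Fintype.card V)) :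
    G.Colorable r := by
  have hmax : G.IsTuranMaximal r := by
    refine ⟨hf, fun H _ hHf => ?_⟩
    calc #H.edgeFinset ≤ turanEdges r (Fintype.card V) := by
          have := edge_bound hr H hHf
          convert this using 3
      _ = #G.edgeFinset := h.symm
  obtain ⟨f⟩ := hmax.nonempty_iso_turanGraph
  obtain ⟨C⟩ := turanGraph_colorable (n := Fintype.card V) hr
  exact ⟨C.comp f.toHom⟩

lemma caseA {V : Type} [Fintype V] {r : ℕ} (hr : 2 ≤ r) (G : SimpleGraph V)
    (hf : G.CliqueFree (r+1)) (hnc : ¬ G.Colorable r) (v : V) (κ : V → Fin r)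
    (hκ : ∀ x y, G.Adj x y → x ≠ v → y ≠ v → κ x ≠ κ y) :
    2 * #G.edgeFinset + 2 * (Fintype.card V / r) ≤ 2 * turanEdges r (Fintype.card V) + 2 := by
  set n := Fintype.card V with hn
  set s : Finset V := univ.erase v with hs
  have hms : #s + 1 = n := by
    rw [hs, Finset.card_erase_of_mem (mem_univ v), card_univ, hn]
    have : 0 < Fintype.card V := Fintype.card_pos_iff.2 ⟨v⟩
    omega
  set m := #s with hm
  set N := G.neighborFinset v with hN
  set A : Fin r → Finset V := fun c => N.filter (fun x => κ x = c) with hA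
  set nc : Fin r → ℕ := fun c => #(s.filter (fun x => κ x = c)) with hnc'
  -- A c nonempty
  have ha1 : ∀ c, (A c).Nonempty := by
    intro c
    rw [Finset.nonempty_iff_ne_empty]
    intro hemp
    apply hnc
    refine ⟨SimpleGraph.Coloring.mk (Function.update κ v c) ?_⟩
    intro x y hxy
    by_cases hx : x = v
    · have hxy' : G.Adj v y := hx ▸ hxy
      have hyv : y ≠ v := fun h => G.irrefl (h ▸ hxy')
      rw [hx, Function.update_self, Function.update_of_ne hyv]
      intro h
      have hmem : y ∈ A c := by
        rw [hA]
        exact mem_filter.2 ⟨(mem_neighborFinset _ _ _).2 hxy', h.symm⟩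
      rw [hemp] at hmem
      exact absurd hmem (Finset.notMem_empty _)
    · by_cases hy : y = v
      · have hxy' : G.Adj v x := (hy ▸ hxy).symm
        rw [hy, Function.update_self, Function.update_of_ne hx]
        intro h
        have hmem : x ∈ A c := by
          rw [hA]
          exact mem_filter.2 ⟨(mem_neighborFinset _ _ _).2 hxy', h⟩
        rw [hemp] at hmem
        exact absurd hmem (Finset.notMem_empty _)
      · rw [Function.update_of_ne hx, Function.update_of_ne hy]
        exact hκ x y hxy hx hy
  have hasub : ∀ c, #(A c) ≤ nc c := by
    intro c
    refine Finset.card_le_card (fun x hx => ?_)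
    rw [hA] at hx
    obtain ⟨hx1, hx2⟩ := mem_filter.1 hx
    refine mem_filter.2 ⟨?_, hx2⟩
    rw [hs]
    refine Finset.mem_erase.2 ⟨?_, mem_univ _⟩
    intro h
    exact G.notMem_neighborFinset_self v (by rwa [h] at hx1)
  -- choose minimizing pair
  have hPP : (univ.filter (fun q : Fin r × Fin r => q.1 ≠ q.2)).Nonempty := by
    refine ⟨(⟨0, by omega⟩, ⟨1, by omega⟩), mem_filter.2 ⟨mem_univ _, ?_⟩⟩
    simp [Fin.ext_iff]
  obtain ⟨p₀, hp₀mem, hp₀min⟩ := Finset.exists_min_image _ (fun q => #(A q.1) * #(A q.2)) hPP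
  set i₀ := p₀.1 with hi₀
  set j₀ := p₀.2 with hj₀
  have hij : i₀ ≠ j₀ := (mem_filter.1 hp₀mem).2
  have hmin : ∀ i j : Fin r, i ≠ j → #(A i₀) * #(A j₀) ≤ #(A i) * #(A j) := by
    intro i j h
    exact hp₀min (i, j) (mem_filter.2 ⟨mem_univ _, h⟩)
  have E2 := bad_pairs_lower hf v κ A (fun c => rfl) ha1 hij hmin
  -- bad pairs are in F
  set F := univ.filter (fun p : V × V => p.1 ≠ v ∧ p.2 ≠ v ∧ κ p.1 ≠ κ p.2 ∧ ¬ G.Adj p.1 p.2)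
    with hF
  have hBadF : #(univ.filter (fun p : V × V => p.1 ∈ N ∧ p.2 ∈ N ∧ κ p.1 ≠ κ p.2 ∧ ¬ G.Adj p.1 p.2))
      ≤ #F := by
    refine Finset.card_le_card (fun p hp => ?_)
    obtain ⟨-, h1, h2, h3, h4⟩ := mem_filter.1 hp
    refine mem_filter.2 ⟨mem_univ _, ?_, ?_, h3, h4⟩
    · intro h; exact G.notMem_neighborFinset_self v (by rwa [h] at h1)
    · intro h; exact G.notMem_neighborFinset_self v (by rwa [h] at h2)
  -- the B set count
  set C3 := (s ×ˢ s).filter (fun p : V × V => κ p.1 ≠ κ p.2) with hC3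
  set AllP := univ.filter (fun p : V × V => G.Adj p.1 p.2) with hAllP
  have hsplit1 : ({v} ×ˢ N) ∪ (N ×ˢ {v}) ∪ C3 = AllP ∪ F := by
    ext p
    simp only [Finset.mem_union, Finset.mem_product, Finset.mem_singleton, hC3, hAllP, hF,
      mem_filter, mem_univ, true_and, hs, Finset.mem_erase]
    constructor
    · rintro ((⟨h1, h2⟩ | ⟨h1, h2⟩) | ⟨⟨⟨h1, -⟩, ⟨h2, -⟩⟩, h3⟩)
      · exact Or.inl (h1 ▸ (mem_neighborFinset _ _ _).1 h2)
      · exact Or.inl (h2 ▸ ((mem_neighborFinset _ _ _).1 h1).symm)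
      · by_cases hadj : G.Adj p.1 p.2
        · exact Or.inl hadj
        · exact Or.inr ⟨h1, h2, h3, hadj⟩
    · rintro (hadj | ⟨h1, h2, h3, h4⟩)
      · by_cases h1 : p.1 = v
        · exact Or.inl (Or.inl ⟨h1, (mem_neighborFinset _ _ _).2 (h1 ▸ hadj)⟩)
        · by_cases h2 : p.2 = v
          · exact Or.inl (Or.inr ⟨(mem_neighborFinset _ _ _).2 (h2 ▸ hadj).symm, h2⟩)
          · exact Or.inr ⟨⟨⟨h1, trivial⟩, ⟨h2, trivial⟩⟩, hκ _ _ hadj h1 h2⟩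
      · exact Or.inr ⟨⟨⟨h1, trivial⟩, ⟨h2, trivial⟩⟩, h3⟩
  have hd1 : Disjoint ({v} ×ˢ N) (N ×ˢ {v}) := by
    rw [Finset.disjoint_left]
    intro p hp1 hp2
    obtain ⟨ha, hb⟩ := Finset.mem_product.1 hp1
    obtain ⟨hc, hd⟩ := Finset.mem_product.1 hp2
    rw [Finset.mem_singleton] at ha hd
    rw [ha] at hc
    exact G.notMem_neighborFinset_self _ hc
  have hd2 : Disjoint (({v} ×ˢ N) ∪ (N ×ˢ {v})) C3 := by
    rw [Finset.disjoint_left]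
    intro p hp1 hp2
    obtain ⟨hps, -⟩ := mem_filter.1 hp2
    obtain ⟨hp1s, hp2s⟩ := Finset.mem_product.1 hps
    rw [hs] at hp1s hp2s
    rcases Finset.mem_union.1 hp1 with h | h
    · exact (Finset.mem_erase.1 hp1s).1 (Finset.mem_singleton.1 (Finset.mem_product.1 h).1)
    · exact (Finset.mem_erase.1 hp2s).1 (Finset.mem_singleton.1 (Finset.mem_product.1 h).2)
  have hd3 : Disjoint AllP F := by
    rw [Finset.disjoint_left]
    intro p hp1 hp2
    exact (mem_filter.1 hp2).2.2.2.2 (mem_filter.1 hp1).2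
  have hcard1 : G.degree v + G.degree v + #C3 = #AllP + #F := by
    have h1 : #(({v} ×ˢ N) ∪ (N ×ˢ {v}) ∪ C3) = #(AllP ∪ F) := by rw [hsplit1]
    rw [Finset.card_union_of_disjoint hd2, Finset.card_union_of_disjoint hd1,
      Finset.card_union_of_disjoint hd3, Finset.card_product, Finset.card_product,
      Finset.card_singleton, one_mul, mul_one] at h1
    have hdegN : G.degree v = #N := rfl
    omega
  -- C3 count
  have hsame : #((s ×ˢ s).filter (fun p : V × V => κ p.1 = κ p.2)) = ∑ c, nc c * nc c := by
    rw [Finset.card_eq_sum_card_fiberwise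
      (f := fun p : V × V => κ p.1) (t := (univ : Finset (Fin r))) (fun x _ => mem_univ _)]
    refine Finset.sum_congr rfl (fun c _ => ?_)
    have : ((s ×ˢ s).filter (fun p : V × V => κ p.1 = κ p.2)).filter
        (fun p : V × V => κ p.1 = c) = (s.filter (fun x => κ x = c)) ×ˢ (s.filter (fun x => κ x = c)) := by
      ext p
      simp only [mem_filter, Finset.mem_product]
      constructor
      · rintro ⟨⟨⟨hp1, hp2⟩, he⟩, hc⟩
        exact ⟨⟨hp1, hc⟩, ⟨hp2, he ▸ hc⟩⟩
      · rintro ⟨⟨hp1, hc1⟩, ⟨hp2, hc2⟩⟩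
        exact ⟨⟨⟨hp1, hp2⟩, by rw [hc1, hc2]⟩, hc1⟩
    rw [this, Finset.card_product]
  have hC3card : #C3 + ∑ c, nc c * nc c = m * m := by
    have hsplit : #C3 + #((s ×ˢ s).filter (fun p : V × V => ¬ κ p.1 ≠ κ p.2)) = #(s ×ˢ s) :=
      Finset.card_filter_add_card_filter_not _
    have hnn : ((s ×ˢ s).filter (fun p : V × V => ¬ κ p.1 ≠ κ p.2))
        = ((s ×ˢ s).filter (fun p : V × V => κ p.1 = κ p.2)) := by
      refine Finset.filter_congr (fun p _ => ?_)
      simp [not_not]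
    rw [hnn, hsame, Finset.card_product, ← hm] at hsplit
    exact hsplit
  -- degree fiberwise
  have hdegN : G.degree v = #N := rfl
  have hdeg : G.degree v = ∑ c, #(A c) := by
    rw [hdegN]
    exact Finset.card_eq_sum_card_fiberwise (f := κ) (s := N) (t := (univ : Finset (Fin r)))
      (fun x _ => mem_univ _)
  have hncsum : ∑ c, nc c = m := by
    rw [hm]
    exact (Finset.card_eq_sum_card_fiberwise (f := κ) (s := s) (t := (univ : Finset (Fin r)))
      (fun x _ => mem_univ _)).symm
  -- sum splits
  have hj₀mem : j₀ ∈ univ.erase i₀ := Finset.mem_erase.2 ⟨(Ne.symm hij), mem_univ _⟩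
  have hsplitsum : ∀ f : Fin r → ℕ,
      ∑ c, f c = f i₀ + f j₀ + ∑ c ∈ (univ.erase i₀).erase j₀, f c := by
    intro f
    rw [← Finset.add_sum_erase _ f (mem_univ i₀), ← Finset.add_sum_erase _ f hj₀mem]
    ring
  have hprodge : #(A i₀) + #(A j₀) ≤ #(A i₀) * #(A j₀) + 1 := by
    obtain ⟨a, ha⟩ : ∃ a, #(A i₀) = a + 1 := ⟨#(A i₀) - 1, by
      have := Finset.card_pos.2 (ha1 i₀); omega⟩
    obtain ⟨b, hb⟩ : ∃ b, #(A j₀) = b + 1 := ⟨#(A j₀) - 1, by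
      have := Finset.card_pos.2 (ha1 j₀); omega⟩
    rw [ha, hb]
    nlinarith
  have E4 : (∑ c, #(A c)) + nc i₀ + nc j₀ ≤ #(A i₀) * #(A j₀) + 1 + ∑ c, nc c := by
    rw [hsplitsum (fun c => #(A c)), hsplitsum nc]
    have h1 : ∑ c ∈ (univ.erase i₀).erase j₀, #(A c) ≤ ∑ c ∈ (univ.erase i₀).erase j₀, nc c :=
      Finset.sum_le_sum (fun c _ => hasub c)
    omega
  -- the bumped partition
  set x : Fin r → ℕ := Function.update nc j₀ (nc j₀ + 1) with hx
  have hxj₀ : x j₀ = nc j₀ + 1 := by rw [hx, Function.update_self]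
  have hxi₀ : x i₀ = nc i₀ := by rw [hx, Function.update_of_ne hij]
  have hxrest : ∀ c, c ≠ j₀ → x c = nc c := fun c hc => by rw [hx, Function.update_of_ne hc]
  have hsplitj : ∀ f : Fin r → ℕ, ∑ c, f c = f j₀ + ∑ c ∈ univ.erase j₀, f c :=
    fun f => (Finset.add_sum_erase _ f (mem_univ j₀)).symm
  have hresteq : ∑ c ∈ univ.erase j₀, x c = ∑ c ∈ univ.erase j₀, nc c :=
    Finset.sum_congr rfl (fun c hc => hxrest c (Finset.mem_erase.1 hc).1)
  have hrestsq : ∑ c ∈ univ.erase j₀, x c * x c = ∑ c ∈ univ.erase j₀, nc c * nc c :=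
    Finset.sum_congr rfl (fun c hc => by rw [hxrest c (Finset.mem_erase.1 hc).1])
  have hxsum : ∑ c, x c = n := by
    have h1 := hsplitj x
    have h2 := hsplitj nc
    rw [hxj₀, hresteq] at h1
    omega
  have hxsq : ∑ c, x c * x c = (∑ c, nc c * nc c) + 2 * nc j₀ + 1 := by
    have h1 := hsplitj (fun c => x c * x c)
    have h2 := hsplitj (fun c => nc c * nc c)
    rw [hxj₀, hrestsq] at h1
    have h3 : (nc j₀ + 1) * (nc j₀ + 1) = nc j₀ * nc j₀ + 2 * nc j₀ + 1 := by ring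
    omega
  have E5 := balS_le_sum_sq' hr x hxsum i₀
  rw [hxsq, hxi₀] at E5
  have h2T := two_turanEdges n (by omega : 0 < r)
  have h2e : 2 * #G.edgeFinset = #AllP := by
    rw [SimpleGraph.two_mul_card_edgeFinset]
  have hnn : n * n = m * m + 2 * m + 1 := by
    rw [← hms]; ring
  rw [← hN] at E2
  rw [hdeg] at hcard1
  linarith [E2, hBadF, hcard1, hC3card, E4, E5, h2T, h2e, hnn, hms]

lemma edge_del {V : Type} [Fintype V] (G : SimpleGraph V) (v : V) :
    2 * #G.edgeFinset = 2 * #(G.comap (Function.Embedding.subtype (fun x => x ≠ v))).edgeFinset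
      + 2 * G.degree v := by
  have e1 : 2 * #G.edgeFinset = #(univ.filter fun (p : V × V) => G.Adj p.1 p.2) := by
    rw [SimpleGraph.two_mul_card_edgeFinset]
  have e2 : 2 * #(G.comap (Function.Embedding.subtype (fun x => x ≠ v))).edgeFinset
      = #(univ.filter fun (p : {x : V // x ≠ v} × {x : V // x ≠ v}) =>
          (G.comap (Function.Embedding.subtype (fun x => x ≠ v))).Adj p.1 p.2) := by
    rw [SimpleGraph.two_mul_card_edgeFinset]
  -- split the pair set
  have hsplit : (univ.filter fun (p : V × V) => G.Adj p.1 p.2)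
      = (({v} ×ˢ G.neighborFinset v) ∪ (G.neighborFinset v ×ˢ {v})) ∪
        (univ.filter fun (p : V × V) => G.Adj p.1 p.2 ∧ p.1 ≠ v ∧ p.2 ≠ v) := by
    ext p
    simp only [mem_filter, mem_univ, true_and, Finset.mem_union, Finset.mem_product,
      Finset.mem_singleton, mem_neighborFinset]
    constructor
    · intro h
      by_cases h1 : p.1 = v
      · exact Or.inl (Or.inl ⟨h1, h1 ▸ h⟩)
      · by_cases h2 : p.2 = v
        · exact Or.inl (Or.inr ⟨(h2 ▸ h).symm, h2⟩)
        · exact Or.inr ⟨h, h1, h2⟩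
    · rintro ((⟨h1, h2⟩ | ⟨h1, h2⟩) | ⟨h, -, -⟩)
      · exact h1 ▸ h2
      · exact h2 ▸ h1.symm
      · exact h
  have hd1 : Disjoint ({v} ×ˢ G.neighborFinset v) (G.neighborFinset v ×ˢ {v}) := by
    rw [Finset.disjoint_left]
    intro p hp1 hp2
    obtain ⟨ha, -⟩ := Finset.mem_product.1 hp1
    obtain ⟨hc, -⟩ := Finset.mem_product.1 hp2
    rw [Finset.mem_singleton] at ha
    exact G.notMem_neighborFinset_self _ (by rwa [ha] at hc)
  have hd2 : Disjoint (({v} ×ˢ G.neighborFinset v) ∪ (G.neighborFinset v ×ˢ {v}))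
      (univ.filter fun (p : V × V) => G.Adj p.1 p.2 ∧ p.1 ≠ v ∧ p.2 ≠ v) := by
    rw [Finset.disjoint_left]
    intro p hp1 hp2
    obtain ⟨-, h1, h2⟩ := (mem_filter.1 hp2).2
    rcases Finset.mem_union.1 hp1 with h | h
    · exact h1 (Finset.mem_singleton.1 (Finset.mem_product.1 h).1)
    · exact h2 (Finset.mem_singleton.1 (Finset.mem_product.1 h).2)
  have hbij : #(univ.filter fun (p : V × V) => G.Adj p.1 p.2 ∧ p.1 ≠ v ∧ p.2 ≠ v)
      = #(univ.filter fun (p : {x : V // x ≠ v} × {x : V // x ≠ v}) =>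
          (G.comap (Function.Embedding.subtype (fun x => x ≠ v))).Adj p.1 p.2) := by
    refine (Finset.card_bij (fun p _ => ((p.1 : V), (p.2 : V))) ?_ ?_ ?_).symm
    · intro p hp
      refine mem_filter.2 ⟨mem_univ _, ?_, p.1.2, p.2.2⟩
      exact (mem_filter.1 hp).2
    · intro p _ q _ h
      have h1 : (p.1 : V) = q.1 := congrArg Prod.fst h
      have h2 : (p.2 : V) = q.2 := congrArg Prod.snd h
      exact Prod.ext (Subtype.ext h1) (Subtype.ext h2)
    · intro p hp
      obtain ⟨-, h, h1, h2⟩ := mem_filter.1 hp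
      exact ⟨(⟨p.1, h1⟩, ⟨p.2, h2⟩), mem_filter.2 ⟨mem_univ _, h⟩, rfl⟩
  have hcnt : #(univ.filter fun (p : V × V) => G.Adj p.1 p.2)
      = #(univ.filter fun (p : {x : V // x ≠ v} × {x : V // x ≠ v}) =>
          (G.comap (Function.Embedding.subtype (fun x => x ≠ v))).Adj p.1 p.2)
        + 2 * G.degree v := by
    rw [hsplit, Finset.card_union_of_disjoint hd2, Finset.card_union_of_disjoint hd1,
      Finset.card_product, Finset.card_product, Finset.card_singleton, one_mul, mul_one, hbij]
    have : G.degree v = #(G.neighborFinset v) := rfl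
    omega
  omega

lemma main_bound {r : ℕ} (hr : 2 ≤ r) : ∀ (n : ℕ) (V : Type) [Fintype V] (G : SimpleGraph V),
    Fintype.card V = n → G.CliqueFree (r+1) → ¬ G.Colorable r →
    2 * #G.edgeFinset + 2 * (n / r) ≤ 2 * turanEdges r n + 2 := by
  intro n
  induction n using Nat.strong_induction_on with
  | _ n ih =>
  intro V _ G hcard hf hnc
  have hr0 : 0 < r := by omega
  have hnr : r < n := by
    by_contra h
    push_neg at h
    exact hnc ((G.colorable_of_fintype).mono (le_trans (le_of_eq hcard) h))
  by_cases hA : ∃ (v : V) (κ : V → Fin r), ∀ x y, G.Adj x y → x ≠ v → y ≠ v → κ x ≠ κ y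
  · obtain ⟨v, κ, hκ⟩ := hA
    have := caseA hr G hf hnc v κ hκ
    rwa [hcard] at this
  · push_neg at hA
    -- Case B
    have hne : Nonempty V := by
      rw [← Fintype.card_pos_iff, hcard]; omega
    -- e ≤ T - 1
    have hle : #G.edgeFinset ≤ turanEdges r n := by
      have := edge_bound hr0 G hf
      rwa [hcard] at this
    have hlt : #G.edgeFinset + 1 ≤ turanEdges r n := by
      rcases lt_or_eq_of_le hle with h | h
      · omega
      · exact absurd (colorable_of_max hr0 G hf (by rw [hcard, h])) hnc
    -- min degree vertex
    have hmind : ∃ v : V, n * G.degree v ≤ 2 * #G.edgeFinset := by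
      by_contra h
      push_neg at h
      have h1 : ∑ v : V, 2 * #G.edgeFinset < ∑ v : V, n * G.degree v :=
        Finset.sum_lt_sum_of_nonempty univ_nonempty (fun v _ => h v)
      rw [Finset.sum_const, card_univ, hcard, smul_eq_mul, ← Finset.mul_sum,
        SimpleGraph.sum_degrees_eq_twice_card_edges] at h1
      nlinarith
    obtain ⟨v, hv⟩ := hmind
    have h2T := two_turanEdges n (by omega : 0 < r)
    have hbge : n * (n / r) ≤ balS r n := balS_ge
    -- deg v + n/r < n
    have hdeg : G.degree v + n / r + 1 ≤ n := by
      by_contra h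
      push_neg at h
      have h1 : n - n/r ≤ G.degree v := by omega
      have h2 : n * (n - n/r) ≤ n * G.degree v := Nat.mul_le_mul_left n h1
      have h3 : n * (n - n/r) + n * (n/r) = n * n := by
        have : n/r ≤ n := Nat.div_le_self n r
        have := Nat.sub_add_cancel this
        calc n * (n - n/r) + n * (n/r) = n * ((n - n/r) + n/r) := by ring
          _ = n * n := by rw [Nat.sub_add_cancel (Nat.div_le_self n r)]
      omega
    -- the deleted graph
    have hcard' : Fintype.card {x : V // x ≠ v} = n - 1 := by
      have h1 : Fintype.card {x : V // ¬ (x = v)}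
          = Fintype.card V - Fintype.card {x : V // x = v} := Fintype.card_subtype_compl _
      rw [Fintype.card_subtype_eq, hcard] at h1
      exact h1
    have hf' : (G.comap (Function.Embedding.subtype (fun x => x ≠ v))).CliqueFree (r+1) :=
      hf.comap (SimpleGraph.Embedding.comap (Function.Embedding.subtype (fun x => x ≠ v)) G).isContained
    have hnc' : ¬ (G.comap (Function.Embedding.subtype (fun x => x ≠ v))).Colorable r := by
      rintro ⟨C⟩
      set κ : V → Fin r := fun x => if h : x ≠ v then C ⟨x, h⟩ else ⟨0, hr0⟩ with hκ
      obtain ⟨x, y, hadj, hx, hy, heq⟩ := hA v κ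
      have hCx : κ x = C ⟨x, hx⟩ := by rw [hκ]; simp [hx]
      have hCy : κ y = C ⟨y, hy⟩ := by rw [hκ]; simp [hy]
      have : (G.comap (Function.Embedding.subtype (fun x => x ≠ v))).Adj ⟨x, hx⟩ ⟨y, hy⟩ := hadj
      exact C.valid this (by rw [← hCx, ← hCy, heq])
    have hih := ih (n-1) (by omega) {x : V // x ≠ v}
      (G.comap (Function.Embedding.subtype (fun x => x ≠ v))) hcard' hf' hnc'
    have hedel := edge_del G v
    have hsuc := balS_succ (n := n) hr0 (by omega)
    have h2T' := two_turanEdges (n-1) (by omega : 0 < r)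
    have hnn : n * n = (n-1) * (n-1) + 2 * (n-1) + 1 := by
      have : n - 1 + 1 = n := by omega
      calc n * n = ((n-1) + 1) * ((n-1) + 1) := by rw [this]
        _ = (n-1) * (n-1) + 2 * (n-1) + 1 := by ring
    -- q' = (n-1)/r, q = n/r : q ≤ q'+... need relation: q' ≤ q and q ≤ q' + 1? not needed:
    -- final arithmetic
    have hm1 : (n - 1) + 1 = n := by omega
    have hih' : 2 * #(G.comap (Function.Embedding.subtype (fun x => x ≠ v))).edgeFinset
        + 2 * ((n - 1) / r) ≤ 2 * turanEdges r (n - 1) + 2 := by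
      convert hih using 4
      ext e
      simp only [SimpleGraph.mem_edgeFinset]
    linarith [hih', hedel, hsuc, h2T, h2T', hnn, hdeg, hm1]

end BrouwerAux

/-- Brouwer. If `r ≥ 2`, `n ≥ 2r+1` and `G` is a `K_{r+1}`-free graph on `n`
vertices with `e(G) ≥ t_r(n) - ⌊n/r⌋ + 2`, then `G` is `r`-partite. -/
theorem brouwer {V : Type} [Fintype V] (r n : ℕ) (hr : 2 ≤ r)
    (hcard : Fintype.card V = n) (hn : 2 * r + 1 ≤ n)
    (G : SimpleGraph V) (hfree : G.CliqueFree (r + 1))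
    (he : (turanEdges r n : ℤ) - ((n / r : ℕ) : ℤ) + 2 ≤ (G.edgeFinset.card : ℤ)) :
    G.Colorable r := by
  by_contra hnc
  have hb := BrouwerAux.main_bound hr n V G hcard hfree hnc
  have hb' : (2 : ℤ) * G.edgeFinset.card + 2 * ((n / r : ℕ) : ℤ)
      ≤ 2 * (turanEdges r n : ℤ) + 2 := by exact_mod_cast hb
  linarith
end

section
/- For every r ≥ 2 there is a constant d_r depending only on r such that: if n ≥ 4r, 0 ≤ ε ≤ 1/(30r³), and G is an n-vertex K_{r+1}-free graph with e(G) ≥ t_r(n) - εn², then there is a set T ⊆ V(G) with |T| ≤ d_r·ε·n such that G − T is r-partite. -/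
open SimpleGraph Finset
open scoped Classical

lemma turan_bound {V : Type} [Fintype V] {r n : ℕ} (hr : 0 < r) (hc : Fintype.card V = n)
    (H : SimpleGraph V) (hH : H.CliqueFree (r+1)) : H.edgeFinset.card ≤ turanEdges r n := by
  obtain ⟨M, _, hM⟩ := exists_isTuranMaximal (V := V) hr
  obtain ⟨f⟩ := hM.nonempty_iso_turanGraph
  have h1 : M.edgeFinset.card = turanEdges r n := by
    rw [hc] at f
    have := f.card_edgeFinset_eq
    unfold turanEdges
    convert this using 2
  calc H.edgeFinset.card ≤ M.edgeFinset.card := by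
        have := hM.2 hH
        convert this using 2
    _ = _ := h1

variable {V : Type} [Fintype V]

noncomputable def pickOf (G : SimpleGraph V) (S : Finset V) (h : S.Nonempty) : V :=
  (Finset.exists_max_image S (fun x => #(G.neighborFinset x ∩ S)) h).choose

lemma pickOf_mem (G : SimpleGraph V) (S : Finset V) (h : S.Nonempty) : pickOf G S h ∈ S :=
  (Finset.exists_max_image S (fun x => #(G.neighborFinset x ∩ S)) h).choose_spec.1

lemma pickOf_max (G : SimpleGraph V) (S : Finset V) (h : S.Nonempty) :
    ∀ y ∈ S, #(G.neighborFinset y ∩ S) ≤ #(G.neighborFinset (pickOf G S h) ∩ S) :=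
  (Finset.exists_max_image S (fun x => #(G.neighborFinset x ∩ S)) h).choose_spec.2

noncomputable def DChain (G : SimpleGraph V) : ℕ → Finset V
  | 0 => Finset.univ
  | (i+1) => if h : (DChain G i).Nonempty
      then DChain G i ∩ G.neighborFinset (pickOf G (DChain G i) h) else ∅

lemma DChain_succ_subset (G : SimpleGraph V) (i : ℕ) : DChain G (i+1) ⊆ DChain G i := by
  rw [DChain]
  split
  · exact inter_subset_left
  · exact empty_subset _

lemma DChain_anti (G : SimpleGraph V) {i j : ℕ} (h : i ≤ j) : DChain G j ⊆ DChain G i := by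
  induction j with
  | zero => simp_all
  | succ k ih =>
    rcases Nat.eq_or_lt_of_le h with rfl | h'
    · rfl
    · exact (DChain_succ_subset G k).trans (ih (Nat.lt_succ_iff.mp h'))

lemma DChain_key (G : SimpleGraph V) (i : ℕ) {v : V} (hv : v ∈ DChain G i) :
    #(G.neighborFinset v ∩ DChain G i) ≤ #(DChain G (i+1)) := by
  have h : (DChain G i).Nonempty := ⟨v, hv⟩
  rw [DChain, dif_pos h]
  calc #(G.neighborFinset v ∩ DChain G i)
      ≤ #(G.neighborFinset (pickOf G (DChain G i) h) ∩ DChain G i) := pickOf_max G _ h v hv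
    _ = #(DChain G i ∩ G.neighborFinset (pickOf G (DChain G i) h)) := by rw [inter_comm]

lemma DChain_pick_not_mem (G : SimpleGraph V) (i : ℕ) (h : (DChain G i).Nonempty) :
    pickOf G (DChain G i) h ∉ DChain G (i+1) := by
  rw [DChain, dif_pos h]
  simp [mem_inter]

lemma DChain_succ_sub_nbhd (G : SimpleGraph V) (i : ℕ) (h : (DChain G i).Nonempty) :
    DChain G (i+1) ⊆ G.neighborFinset (pickOf G (DChain G i) h) := by
  rw [DChain, dif_pos h]
  exact inter_subset_right

lemma DChain_card_lt (G : SimpleGraph V) (i : ℕ) (h : (DChain G i).Nonempty) :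
    #(DChain G (i+1)) < #(DChain G i) := by
  apply Finset.card_lt_card
  refine ⟨DChain_succ_subset G i, fun hsub => ?_⟩
  exact DChain_pick_not_mem G i h (hsub (pickOf_mem G _ h))

lemma DChain_eventually_empty (G : SimpleGraph V) : ∃ i, DChain G i = ∅ := by
  by_contra hc
  push_neg at hc
  have h : ∀ i, #(DChain G i) + i ≤ Fintype.card V := by
    intro i
    induction i with
    | zero => simpa using card_le_univ _
    | succ k ih =>
      have := DChain_card_lt G k (hc k)
      omega
  have := h (Fintype.card V + 1)
  omega

lemma DChain_empty_of_cliqueFree (G : SimpleGraph V) {r : ℕ} (hG : G.CliqueFree (r+1)) :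
    DChain G r = ∅ := by
  by_contra hne
  replace hne : (DChain G r).Nonempty := Finset.nonempty_iff_ne_empty.mpr hne
  have hnei : ∀ i, i ≤ r → (DChain G i).Nonempty := fun i hi =>
    hne.mono (DChain_anti G hi)
  obtain ⟨y, hy⟩ := hne
  set x : ℕ → V := fun i => if h : (DChain G i).Nonempty then pickOf G (DChain G i) h else y
    with hx
  have hxe : ∀ (i : ℕ) (hi : i < r), x i = pickOf G (DChain G i) (hnei i hi.le) := by
    intro i hi
    simp only [hx]
    exact dif_pos (hnei i hi.le)
  have hxm : ∀ i < r, x i ∈ DChain G i := by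
    intro i hi
    rw [hxe i hi]
    exact pickOf_mem G _ _
  have hxn : ∀ i < r, x i ∉ DChain G (i+1) := by
    intro i hi
    rw [hxe i hi]
    exact DChain_pick_not_mem G i _
  have hnb : ∀ i < r, DChain G (i+1) ⊆ G.neighborFinset (x i) := by
    intro i hi
    rw [hxe i hi]
    exact DChain_succ_sub_nbhd G i _
  -- adjacency facts
  have hadj : ∀ i < r, ∀ j < r, i < j → G.Adj (x i) (x j) := by
    intro i hi j hj hij
    have : x j ∈ DChain G (i+1) := DChain_anti G hij (hxm j hj)
    have := hnb i hi this
    rwa [mem_neighborFinset] at this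
  have hyadj : ∀ i < r, G.Adj (x i) y := by
    intro i hi
    have : y ∈ DChain G (i+1) := DChain_anti G hi hy
    have := hnb i hi this
    rwa [mem_neighborFinset] at this
  have hyne : ∀ i < r, y ≠ x i := by
    intro i hi h
    exact hxn i hi (h ▸ DChain_anti G hi hy)
  have hinj : Set.InjOn x (Finset.range r : Set ℕ) := by
    intro i hi j hj hij
    simp only [Finset.coe_range, Set.mem_Iio] at hi hj
    by_contra hne'
    rcases Nat.lt_or_ge i j with h' | h'
    · exact (hadj i hi j hj h').ne hij
    · have h'' : j < i := lt_of_le_of_ne h' (Ne.symm hne')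
      exact (hadj j hj i hi h'').ne (hij.symm)
  set K : Finset V := insert y ((Finset.range r).image x) with hK
  have hcard : K.card = r + 1 := by
    rw [hK, card_insert_of_notMem, Finset.card_image_of_injOn hinj, card_range]
    intro hmem
    obtain ⟨i, hi, hxi⟩ := Finset.mem_image.mp hmem
    exact hyne i (Finset.mem_range.mp hi) hxi.symm
  have hclique : G.IsClique K := by
    intro a ha b hb hab
    simp only [hK, coe_insert, Set.mem_insert_iff, coe_image, Set.mem_image,
      Finset.mem_coe, Finset.mem_range] at ha hb
    rcases ha with rfl | ⟨i, hi, rfl⟩ <;> rcases hb with rfl | ⟨j, hj, rfl⟩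
    · exact absurd rfl hab
    · exact (hyadj j hj).symm
    · exact hyadj i hi
    · have hij : i ≠ j := fun h => hab (h ▸ rfl)
      rcases Nat.lt_or_ge i j with h' | h'
      · exact hadj i hi j hj h'
      · exact (hadj j hj i hi (lt_of_le_of_ne h' (Ne.symm hij))).symm
  exact hG K ⟨hclique, hcard⟩

lemma colV_ex (G : SimpleGraph V) (v : V) : ∃ i, v ∉ DChain G i := by
  obtain ⟨i, hi⟩ := DChain_eventually_empty G
  exact ⟨i, by simp [hi]⟩

noncomputable def colV (G : SimpleGraph V) (v : V) : ℕ := Nat.find (colV_ex G v) - 1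

lemma colV_find_pos (G : SimpleGraph V) (v : V) : 0 < Nat.find (colV_ex G v) := by
  rcases Nat.eq_zero_or_pos (Nat.find (colV_ex G v)) with h | h
  · have := Nat.find_spec (colV_ex G v)
    rw [h] at this
    simp [DChain] at this
  · exact h

lemma mem_DChain_iff (G : SimpleGraph V) (v : V) (i : ℕ) :
    v ∈ DChain G i ↔ i ≤ colV G v := by
  have hpos := colV_find_pos G v
  have hcol : colV G v + 1 = Nat.find (colV_ex G v) := by unfold colV; omega
  constructor
  · intro h
    by_contra hi
    push_neg at hi
    have : colV G v + 1 ≤ i := hi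
    have := DChain_anti G this h
    rw [hcol] at this
    exact Nat.find_spec (colV_ex G v) this
  · intro h
    have hlt : i < Nat.find (colV_ex G v) := by omega
    have := Nat.find_min (colV_ex G v) hlt
    simpa using this

lemma colV_lt (G : SimpleGraph V) {r : ℕ} (hDr : DChain G r = ∅) (v : V) : colV G v < r := by
  by_contra h
  push_neg at h
  have : v ∈ DChain G r := (mem_DChain_iff G v r).mpr h
  simp [hDr] at this

noncomputable def BPart (G : SimpleGraph V) (j : ℕ) : Finset V :=
  Finset.univ.filter (fun v => colV G v = j)

lemma mem_BPart (G : SimpleGraph V) (j : ℕ) (v : V) : v ∈ BPart G j ↔ colV G v = j := by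
  simp [BPart]

lemma BPart_eq (G : SimpleGraph V) (j : ℕ) :
    BPart G j = DChain G j \ DChain G (j+1) := by
  ext v
  simp only [mem_BPart, mem_sdiff, mem_DChain_iff]
  omega

lemma q_sym (G : SimpleGraph V) (A B : Finset V) :
    ∑ v ∈ A, #(G.neighborFinset v ∩ B) = ∑ v ∈ B, #(G.neighborFinset v ∩ A) := by
  have h : ∀ (X Y : Finset V), ∑ v ∈ X, #(G.neighborFinset v ∩ Y)
      = ∑ v ∈ X, ∑ w ∈ Y, if G.Adj v w then 1 else 0 := by
    intro X Y
    refine Finset.sum_congr rfl fun v _ => ?_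
    have hNY : G.neighborFinset v ∩ Y = Y.filter (fun w => G.Adj v w) := by
      ext w
      simp [mem_neighborFinset, and_comm]
    rw [hNY, Finset.card_filter]
  rw [h, h, Finset.sum_comm]
  refine Finset.sum_congr rfl fun w _ => Finset.sum_congr rfl fun v _ => ?_
  exact if_congr (G.adj_comm v w) rfl rfl

-- step inequality
lemma step_ineq (G : SimpleGraph V) (i : ℕ) :
    (∑ v ∈ DChain G i, #(G.neighborFinset v ∩ DChain G i))
      + (∑ v ∈ BPart G i, #(G.neighborFinset v ∩ BPart G i))
    ≤ (∑ v ∈ DChain G (i+1), #(G.neighborFinset v ∩ DChain G (i+1)))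
      + 2 * #(BPart G i) * #(DChain G (i+1)) := by
  set D := DChain G i
  set D' := DChain G (i+1)
  set B := BPart G i with hB
  have hBd : B = D \ D' := BPart_eq G i
  have hsub : D' ⊆ D := DChain_succ_subset G i
  have hdisj : Disjoint D' B := by rw [hBd]; exact disjoint_sdiff
  have hunion : D' ∪ B = D := by rw [hBd]; exact union_sdiff_of_subset hsub
  have hsplit : ∀ v, #(G.neighborFinset v ∩ D) =
      #(G.neighborFinset v ∩ D') + #(G.neighborFinset v ∩ B) := by
    intro v
    rw [← card_union_of_disjoint (hdisj.mono inter_subset_right inter_subset_right),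
      ← inter_union_distrib_left, hunion]
  have hkey : ∀ v ∈ B, #(G.neighborFinset v ∩ D) ≤ #D' := by
    intro v hv
    have hvD : v ∈ D := by rw [← hunion]; exact mem_union_right _ hv
    exact DChain_key G i hvD
  have e1 : ∑ v ∈ D, #(G.neighborFinset v ∩ D)
      = ∑ v ∈ D', #(G.neighborFinset v ∩ D) + ∑ v ∈ B, #(G.neighborFinset v ∩ D) := by
    rw [← Finset.sum_union hdisj, hunion]
  have e2 : ∑ v ∈ D', #(G.neighborFinset v ∩ D)
      = ∑ v ∈ D', #(G.neighborFinset v ∩ D') + ∑ v ∈ B, #(G.neighborFinset v ∩ D') := by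
    rw [Finset.sum_congr rfl (fun v _ => hsplit v), Finset.sum_add_distrib,
      q_sym G D' B]
  have e3 : ∑ v ∈ B, #(G.neighborFinset v ∩ D') + ∑ v ∈ B, #(G.neighborFinset v ∩ B)
      = ∑ v ∈ B, #(G.neighborFinset v ∩ D) := by
    rw [← Finset.sum_add_distrib]
    exact Finset.sum_congr rfl (fun v _ => (hsplit v).symm)
  have e4 : ∑ v ∈ B, #(G.neighborFinset v ∩ D) ≤ #B * #D' :=
    (Finset.sum_le_sum hkey).trans (by rw [Finset.sum_const, smul_eq_mul])
  calc ∑ v ∈ D, #(G.neighborFinset v ∩ D) + ∑ v ∈ B, #(G.neighborFinset v ∩ B)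
      = ∑ v ∈ D', #(G.neighborFinset v ∩ D')
        + (∑ v ∈ B, #(G.neighborFinset v ∩ D') + ∑ v ∈ B, #(G.neighborFinset v ∩ B))
        + ∑ v ∈ B, #(G.neighborFinset v ∩ D) := by rw [e1, e2]; ring
    _ ≤ ∑ v ∈ D', #(G.neighborFinset v ∩ D') + #B * #D' + #B * #D' := by
        rw [e3]; omega
    _ = ∑ v ∈ D', #(G.neighborFinset v ∩ D') + 2 * #B * #D' := by ring

section Tele
variable (G : SimpleGraph V) {r : ℕ}

lemma tele_ineq (k : ℕ) :
    (∑ v ∈ DChain G 0, #(G.neighborFinset v ∩ DChain G 0))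
      + ∑ i ∈ Finset.range k, ∑ v ∈ BPart G i, #(G.neighborFinset v ∩ BPart G i)
    ≤ (∑ v ∈ DChain G k, #(G.neighborFinset v ∩ DChain G k))
      + 2 * ∑ i ∈ Finset.range k, #(BPart G i) * #(DChain G (i+1)) := by
  induction k with
  | zero => simp
  | succ m ih =>
    rw [Finset.sum_range_succ, Finset.sum_range_succ]
    have hs := step_ineq G m
    have hmul : 2 * #(BPart G m) * #(DChain G (m+1))
        = 2 * (#(BPart G m) * #(DChain G (m+1))) := by ring
    omega

-- main inequality I1, real version
lemma main_count (hDr : DChain G r = ∅) :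
    2 * (#G.edgeFinset : ℝ)
      + ∑ i ∈ Finset.range r, ∑ v ∈ BPart G i, (#(G.neighborFinset v ∩ BPart G i) : ℝ)
    ≤ (Fintype.card V : ℝ)^2 - ∑ i ∈ Finset.range r, (#(BPart G i) : ℝ)^2 := by
  have hD0 : DChain G 0 = Finset.univ := rfl
  have h0 : ∑ v ∈ DChain G 0, #(G.neighborFinset v ∩ DChain G 0) = 2 * #G.edgeFinset := by
    rw [hD0]
    rw [← G.sum_degrees_eq_twice_card_edges]
    refine Finset.sum_congr rfl fun v _ => ?_
    rw [Finset.inter_univ]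
    rfl
  have hr0 : ∑ v ∈ DChain G r, #(G.neighborFinset v ∩ DChain G r) = 0 := by
    rw [hDr]; simp
  have h1 := tele_ineq G r
  rw [h0, hr0, zero_add] at h1
  -- cast to ℝ
  have h2 : (2 * #G.edgeFinset
      + ∑ i ∈ Finset.range r, ∑ v ∈ BPart G i, #(G.neighborFinset v ∩ BPart G i) : ℝ)
    ≤ (2 * ∑ i ∈ Finset.range r, #(BPart G i) * #(DChain G (i+1)) : ℝ) := by
    exact_mod_cast h1
  push_cast at h2
  refine h2.trans (le_of_eq ?_)
  -- identity: 2 Σ b_i S_{i+1} = n² - Σ b_i²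
  have hb : ∀ i, (#(BPart G i) : ℝ) = (#(DChain G i) : ℝ) - (#(DChain G (i+1)) : ℝ) := by
    intro i
    rw [BPart_eq, Finset.card_sdiff_of_subset (DChain_succ_subset G i)]
    have := Finset.card_le_card (DChain_succ_subset G i)
    push_cast [Nat.cast_sub this]
    ring
  have hid : ∀ i, 2 * (#(BPart G i) : ℝ) * (#(DChain G (i+1)) : ℝ)
      = ((#(DChain G i):ℝ)^2 - (#(DChain G (i+1)):ℝ)^2) - (#(BPart G i):ℝ)^2 := by
    intro i
    rw [hb i]
    ring
  calc 2 * ∑ i ∈ Finset.range r, (#(BPart G i) : ℝ) * (#(DChain G (i+1)) : ℝ)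
      = ∑ i ∈ Finset.range r, (((#(DChain G i):ℝ)^2 - (#(DChain G (i+1)):ℝ)^2)
          - (#(BPart G i):ℝ)^2) := by
        rw [Finset.mul_sum]
        exact Finset.sum_congr rfl fun i _ => by rw [← hid i]; ring
    _ = ((#(DChain G 0):ℝ)^2 - (#(DChain G r):ℝ)^2)
          - ∑ i ∈ Finset.range r, (#(BPart G i):ℝ)^2 := by
        rw [Finset.sum_sub_distrib, Finset.sum_range_sub' (fun i => (#(DChain G i):ℝ)^2)]
    _ = (Fintype.card V : ℝ)^2 - ∑ i ∈ Finset.range r, (#(BPart G i):ℝ)^2 := by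
        rw [hD0, hDr]
        simp

section S
variable (G : SimpleGraph V) (r : ℕ)

lemma sum_b (hcol : ∀ v, colV G v < r) : ∑ j ∈ Finset.range r, #(BPart G j) = Fintype.card V := by
  rw [← Finset.card_univ]
  exact (Finset.card_eq_sum_card_fiberwise (fun v _ => Finset.mem_range.mpr (hcol v))).symm

lemma nbhd_split (hcol : ∀ v, colV G v < r) (v : V) :
    ∑ j ∈ Finset.range r, #(G.neighborFinset v ∩ BPart G j) = G.degree v := by
  have : ∀ j, G.neighborFinset v ∩ BPart G j
      = (G.neighborFinset v).filter (fun u => colV G u = j) := by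
    intro j
    ext u
    simp [BPart, mem_neighborFinset, and_comm]
  simp_rw [this]
  rw [← Finset.card_eq_sum_card_fiberwise (fun u _ => Finset.mem_range.mpr (hcol u))]
  rfl

noncomputable def cmV (v : V) : ℕ :=
  ∑ j ∈ (Finset.range r).erase (colV G v), (#(BPart G j) - #(G.neighborFinset v ∩ BPart G j))

lemma cm_key {v : V} {j : ℕ} (hj : j ∈ Finset.range r) (hne : j ≠ colV G v) :
    #(BPart G j \ G.neighborFinset v) ≤ cmV G r v := by
  have h1 : #(BPart G j \ G.neighborFinset v)
      = #(BPart G j) - #(G.neighborFinset v ∩ BPart G j) := by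
    have := Finset.card_sdiff_add_card_inter (BPart G j) (G.neighborFinset v)
    have h2 : #(BPart G j ∩ G.neighborFinset v) = #(G.neighborFinset v ∩ BPart G j) := by
      rw [Finset.inter_comm]
    omega
  rw [h1]
  exact Finset.single_le_sum (f := fun j => #(BPart G j) - #(G.neighborFinset v ∩ BPart G j))
    (fun _ _ => Nat.zero_le _) (Finset.mem_erase.mpr ⟨hne, hj⟩)

lemma cm_cast (hcol : ∀ v, colV G v < r) (v : V) :
    (cmV G r v : ℝ) = ((Fintype.card V : ℝ) - #(BPart G (colV G v)))
      - ((G.degree v : ℝ) - #(G.neighborFinset v ∩ BPart G (colV G v))) := by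
  have hcast : (cmV G r v : ℝ) = ∑ j ∈ (Finset.range r).erase (colV G v),
      ((#(BPart G j) : ℝ) - (#(G.neighborFinset v ∩ BPart G j) : ℝ)) := by
    rw [cmV, Nat.cast_sum]
    refine Finset.sum_congr rfl fun j _ => ?_
    have : #(G.neighborFinset v ∩ BPart G j) ≤ #(BPart G j) :=
      Finset.card_le_card Finset.inter_subset_right
    push_cast [this]
    ring
  rw [hcast, Finset.sum_sub_distrib]
  have hmem : colV G v ∈ Finset.range r := Finset.mem_range.mpr (hcol v)
  have e1 : ∑ j ∈ (Finset.range r).erase (colV G v), (#(BPart G j) : ℝ)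
      = (Fintype.card V : ℝ) - #(BPart G (colV G v)) := by
    have := Finset.sum_erase_add (Finset.range r) (fun j => (#(BPart G j) : ℝ)) hmem
    have hs : ∑ j ∈ Finset.range r, (#(BPart G j) : ℝ) = (Fintype.card V : ℝ) := by
      rw [← sum_b G r hcol]
      push_cast
      rfl
    linarith [this, hs]
  have e2 : ∑ j ∈ (Finset.range r).erase (colV G v), (#(G.neighborFinset v ∩ BPart G j) : ℝ)
      = (G.degree v : ℝ) - #(G.neighborFinset v ∩ BPart G (colV G v)) := by
    have := Finset.sum_erase_add (Finset.range r)
      (fun j => (#(G.neighborFinset v ∩ BPart G j) : ℝ)) hmem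
    have hs : ∑ j ∈ Finset.range r, (#(G.neighborFinset v ∩ BPart G j) : ℝ)
        = (G.degree v : ℝ) := by
      rw [← nbhd_split G r hcol v]
      push_cast
      rfl
    linarith [this, hs]
  rw [e1, e2]

-- Σ_v (n - b(col v)) = n² - Σ b²  (the "P" identity)
lemma sumP (hcol : ∀ v, colV G v < r) :
    ∑ v : V, ((Fintype.card V : ℝ) - #(BPart G (colV G v)))
      = (Fintype.card V : ℝ)^2 - ∑ j ∈ Finset.range r, (#(BPart G j) : ℝ)^2 := by
  have hn : ∑ j ∈ Finset.range r, (#(BPart G j) : ℝ) = (Fintype.card V : ℝ) := by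
    rw [← sum_b G r hcol]; push_cast; rfl
  calc ∑ v : V, ((Fintype.card V : ℝ) - #(BPart G (colV G v)))
      = ∑ j ∈ Finset.range r, ∑ v ∈ Finset.univ.filter (fun v => colV G v = j),
          ((Fintype.card V : ℝ) - #(BPart G (colV G v))) :=
        (Finset.sum_fiberwise_of_maps_to
          (fun v (_ : v ∈ Finset.univ) => Finset.mem_range.mpr (hcol v)) _).symm
    _ = ∑ j ∈ Finset.range r,
          ((Fintype.card V : ℝ) * #(BPart G j) - (#(BPart G j) : ℝ)^2) := by
        refine Finset.sum_congr rfl fun j _ => ?_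
        rw [Finset.sum_congr rfl (fun v hv => by rw [(Finset.mem_filter.mp hv).2])]
        rw [Finset.sum_const]
        have hBj : Finset.univ.filter (fun v => colV G v = j) = BPart G j := rfl
        rw [hBj, nsmul_eq_mul]
        ring
    _ = (Fintype.card V : ℝ)^2 - ∑ j ∈ Finset.range r, (#(BPart G j) : ℝ)^2 := by
        rw [Finset.sum_sub_distrib, ← Finset.mul_sum, hn]
        ring

lemma sum_qint (hcol : ∀ v, colV G v < r) :
    ∑ v : V, (#(G.neighborFinset v ∩ BPart G (colV G v)) : ℝ)
      = ∑ j ∈ Finset.range r, ∑ v ∈ BPart G j, (#(G.neighborFinset v ∩ BPart G j) : ℝ) := by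
  rw [← Finset.sum_fiberwise_of_maps_to
    (fun v (_ : v ∈ Finset.univ) => Finset.mem_range.mpr (hcol v))
    (fun v => (#(G.neighborFinset v ∩ BPart G (colV G v)) : ℝ))]
  refine Finset.sum_congr rfl fun j _ => Finset.sum_congr rfl fun v hv => ?_
  rw [(Finset.mem_filter.mp hv).2]
end S

section MPsec
variable {V : Type} [Fintype V] (G : SimpleGraph V) (r n : ℕ)
-- the complete multipartite graph w.r.t. colV
noncomputable def MP : SimpleGraph V where
  Adj u v := colV G u ≠ colV G v
  symm := ⟨fun u v h => Ne.symm h⟩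
  loopless := ⟨fun u h => h rfl⟩

lemma MP_bound (hr : 0 < r) (hc : Fintype.card V = n) (hcol : ∀ v, colV G v < r) :
    (Fintype.card V : ℝ)^2 - ∑ j ∈ Finset.range r, (#(BPart G j) : ℝ)^2
      ≤ 2 * (turanEdges r n : ℝ) := by
  have hcolor : (MP G).Colorable r := by
    refine ⟨SimpleGraph.Coloring.mk (fun v => ⟨colV G v, hcol v⟩) ?_⟩
    intro a b hab h
    exact hab (congrArg Fin.val h)
  have hcf : (MP G).CliqueFree (r+1) := hcolor.cliqueFree (Nat.lt_succ_self r)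
  have hedge : (MP G).edgeFinset.card ≤ turanEdges r n := turan_bound hr hc (MP G) hcf
  have hdeg : ∀ v, ((MP G).degree v : ℝ) = (Fintype.card V : ℝ) - #(BPart G (colV G v)) := by
    intro v
    have h1 : (MP G).neighborFinset v = Finset.univ.filter (fun u => ¬ colV G u = colV G v) := by
      ext u
      simp [mem_neighborFinset, MP, adj_comm]
      exact (mem_neighborFinset (MP G) v u).trans ⟨fun h e => h e.symm, fun h e => h e.symm⟩
    have h2 : #(Finset.univ.filter (fun u => ¬ colV G u = colV G v))
        + #(BPart G (colV G v)) = Fintype.card V := by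
      have := Finset.card_filter_add_card_filter_not
        (s := (Finset.univ : Finset V)) (p := fun u => colV G u = colV G v)
      rw [← Finset.card_univ]
      unfold BPart
      omega
    have h3 : ((MP G).degree v) = #(Finset.univ.filter (fun u => ¬ colV G u = colV G v)) := by
      rw [← SimpleGraph.card_neighborFinset_eq_degree, h1]
    rw [h3]
    have := h2
    push_cast [← h2]
    ring
  have hsum : ∑ v : V, ((MP G).degree v : ℝ) = 2 * ((MP G).edgeFinset.card : ℝ) := by
    rw [← Nat.cast_sum]
    rw [SimpleGraph.sum_degrees_eq_twice_card_edges]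
    push_cast
    ring
  calc (Fintype.card V : ℝ)^2 - ∑ j ∈ Finset.range r, (#(BPart G j) : ℝ)^2
      = ∑ v : V, ((Fintype.card V : ℝ) - #(BPart G (colV G v))) := (sumP G r hcol).symm
    _ = ∑ v : V, ((MP G).degree v : ℝ) := by
        exact Finset.sum_congr rfl fun v _ => (hdeg v).symm
    _ = 2 * ((MP G).edgeFinset.card : ℝ) := hsum
    _ ≤ 2 * (turanEdges r n : ℝ) := by
        have := hedge
        exact_mod_cast mul_le_mul_of_nonneg_left (by exact_mod_cast this) (by norm_num)

end MPsec

lemma mcount {r : ℕ} (hr : 0 < r) (n : ℕ) {i : ℕ} (hi : i < r) :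
    #((Finset.range n).filter (fun k => k % r = i)) = n / r + if i < n % r then 1 else 0 := by
  induction n with
  | zero => simp
  | succ m ih =>
    have hm : m % r < r := Nat.mod_lt m hr
    have hdm : r * (m / r) + m % r = m := Nat.div_add_mod m r
    have hcard : #((Finset.range (m+1)).filter (fun k => k % r = i))
        = #((Finset.range m).filter (fun k => k % r = i)) + if m % r = i then 1 else 0 := by
      rw [Finset.range_add_one, Finset.filter_insert]
      split_ifs with h
      · rw [Finset.card_insert_of_notMem (fun hmem => by
          exact absurd (Finset.mem_of_mem_filter m hmem) (by simp))]
      · simp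
    by_cases hd : m % r + 1 = r
    · have key : m + 1 = (m/r + 1) * r := by
        have h' : (m/r + 1) * r = r * (m/r) + r := by ring
        omega
      have e1 : (m+1)/r = m/r + 1 := by rw [key, Nat.mul_div_cancel _ hr]
      have e2 : (m+1)%r = 0 := by rw [key]; exact Nat.mul_mod_left _ _
      rw [hcard, ih, e1, e2]
      clear key hdm
      split_ifs <;> omega
    · have key : m + 1 = (m % r + 1) + (m/r) * r := by
        have h' : (m/r) * r = r * (m/r) := by ring
        omega
      have e1 : (m+1)/r = m/r := by
        rw [key, Nat.add_mul_div_right _ _ hr, Nat.div_eq_of_lt (by omega)]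
        omega
      have e2 : (m+1)%r = m % r + 1 := by
        rw [key, Nat.add_mul_mod_self_right, Nat.mod_eq_of_lt (by omega)]
      rw [hcard, ih, e1, e2]
      clear key hdm
      split_ifs <;> omega

lemma mfin (n r i : ℕ) :
    #(Finset.univ.filter (fun v : Fin n => v.val % r = i))
      = #((Finset.range n).filter (fun k => k % r = i)) := by
  apply Finset.card_bij (fun v _ => v.val)
  · intro v hv
    simp only [Finset.mem_filter, Finset.mem_range]
    exact ⟨v.isLt, (Finset.mem_filter.mp hv).2⟩
  · intro a _ b _ h
    exact Fin.val_injective h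
  · intro k hk
    simp only [Finset.mem_filter, Finset.mem_range] at hk
    exact ⟨⟨k, hk.1⟩, Finset.mem_filter.mpr ⟨Finset.mem_univ _, hk.2⟩, rfl⟩

lemma msum_sq {r : ℕ} (hr : 0 < r) (n : ℕ) :
    ∑ i ∈ Finset.range r, (#((Finset.range n).filter (fun k => k % r = i)) : ℝ)^2
      ≤ (n:ℝ)^2/r + r/4 := by
  have hslt : n % r < r := Nat.mod_lt _ hr
  have hn : (n : ℝ) = ((n/r : ℕ) : ℝ) * r + ((n % r : ℕ) : ℝ) := by
    exact_mod_cast (Nat.div_add_mod' n r).symm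
  have hval : ∀ i ∈ Finset.range r, (#((Finset.range n).filter (fun k => k % r = i)) : ℝ)^2
      = if i < n % r then (((n/r : ℕ):ℝ)+1)^2 else (((n/r : ℕ):ℝ))^2 := by
    intro i hir
    rw [mcount hr n (Finset.mem_range.mp hir)]
    split_ifs with h
    · push_cast; ring
    · push_cast; ring
  rw [Finset.sum_congr rfl hval, Finset.sum_ite, Finset.sum_const, Finset.sum_const]
  have hflt : (Finset.range r).filter (fun i => i < n % r) = Finset.range (n % r) := by
    ext i
    simp only [Finset.mem_filter, Finset.mem_range]
    omega
  have hfge : #((Finset.range r).filter (fun i => ¬ i < n % r)) = r - n % r := by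
    have h := Finset.card_filter_add_card_filter_not
      (s := Finset.range r) (p := fun i => i < n % r)
    rw [hflt] at h
    simp only [Finset.card_range] at h
    omega
  rw [hflt, hfge, Finset.card_range, nsmul_eq_mul, nsmul_eq_mul]
  have hcast : ((r - n % r : ℕ) : ℝ) = (r:ℝ) - ((n % r : ℕ) : ℝ) := by
    push_cast [Nat.cast_sub hslt.le]
    ring
  rw [hcast]
  have hrpos : (0:ℝ) < r := by exact_mod_cast hr
  rw [div_add' _ _ _ (ne_of_gt hrpos), le_div_iff₀ hrpos]
  have hS0 : (0:ℝ) ≤ ((n % r : ℕ) : ℝ) := by positivity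
  have hSr : ((n % r : ℕ) : ℝ) ≤ (r:ℝ) := by exact_mod_cast hslt.le
  set Q := ((n/r : ℕ) : ℝ)
  set S := ((n % r : ℕ) : ℝ)
  rw [hn]
  nlinarith [sq_nonneg ((r:ℝ) - 2*S)]

lemma turan_lower {r : ℕ} (hr : 0 < r) (n : ℕ) :
    (n:ℝ)^2 - (n:ℝ)^2/r - r/4 ≤ 2 * (turanEdges r n : ℝ) := by
  classical
  have hdeg : ∀ v : Fin n, ((SimpleGraph.turanGraph n r).degree v : ℝ)
      = (n : ℝ) - #((Finset.range n).filter (fun k => k % r = v.val % r)) := by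
    intro v
    have h1 : (SimpleGraph.turanGraph n r).neighborFinset v
        = Finset.univ.filter (fun w : Fin n => ¬ (w.val % r = v.val % r)) := by
      ext w
      simp only [mem_neighborFinset, Finset.mem_filter, Finset.mem_univ, true_and]
      show (SimpleGraph.turanGraph n r).Adj v w ↔ ¬ ((w:ℕ) % r = (v:ℕ) % r)
      have hadj : (SimpleGraph.turanGraph n r).Adj v w ↔ ¬ ((v:ℕ) % r = (w:ℕ) % r) :=
        Iff.rfl
      rw [hadj]
      constructor
      · intro h he
        exact h he.symm
      · intro h he
        exact h he.symm
    have h2 : #(Finset.univ.filter (fun w : Fin n => ¬ (w.val % r = v.val % r)))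
        + #(Finset.univ.filter (fun w : Fin n => w.val % r = v.val % r)) = n := by
      have h := Finset.card_filter_add_card_filter_not
        (s := (Finset.univ : Finset (Fin n))) (p := fun w : Fin n => w.val % r = v.val % r)
      simp only [Finset.card_univ, Fintype.card_fin] at h
      omega
    have h3 : (SimpleGraph.turanGraph n r).degree v
        = #(Finset.univ.filter (fun w : Fin n => ¬ (w.val % r = v.val % r))) := by
      rw [← SimpleGraph.card_neighborFinset_eq_degree, h1]
    rw [h3, ← mfin n r (v.val % r)]
    push_cast [← h2]
    ring
  have hsum : 2 * (turanEdges r n : ℝ)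
      = ∑ v : Fin n, ((SimpleGraph.turanGraph n r).degree v : ℝ) := by
    rw [← Nat.cast_sum, SimpleGraph.sum_degrees_eq_twice_card_edges]
    have : turanEdges r n = #(SimpleGraph.turanGraph n r).edgeFinset := by
      unfold turanEdges
      convert rfl using 2
    rw [this]
    push_cast
    ring
  have hfib : ∑ v : Fin n, (#((Finset.range n).filter (fun k => k % r = v.val % r)) : ℝ)
      = ∑ i ∈ Finset.range r, (#((Finset.range n).filter (fun k => k % r = i)) : ℝ)^2 := by
    rw [← Finset.sum_fiberwise_of_maps_to
      (fun (v : Fin n) (_ : v ∈ Finset.univ) => Finset.mem_range.mpr (Nat.mod_lt _ hr))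
      (fun v : Fin n => (#((Finset.range n).filter (fun k => k % r = v.val % r)) : ℝ))]
    refine Finset.sum_congr rfl fun i _ => ?_
    rw [Finset.sum_congr rfl (fun v hv => by rw [(Finset.mem_filter.mp hv).2]),
      Finset.sum_const, nsmul_eq_mul, mfin n r i]
    ring
  rw [hsum, Finset.sum_congr rfl (fun v _ => hdeg v), Finset.sum_sub_distrib, hfib,
    Finset.sum_const, Finset.card_univ, Fintype.card_fin, nsmul_eq_mul]
  have := msum_sq hr n
  have hrpos : (0:ℝ) < r := by exact_mod_cast hr
  nlinarith [this]

lemma num_key {r : ℕ} (hr : 2 ≤ r) {n ε b T' : ℝ}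
    (hn2 : 30 * (r:ℝ)^3 ≤ n^2) (hn0 : 0 < n)
    (he0 : 0 ≤ ε) (he1 : 30 * (r:ℝ)^3 * ε ≤ 1)
    (hdev : ((n:ℝ)/r - b)^2 ≤ 2*ε*n^2 + (r:ℝ)/4)
    (hT2 : T' ≤ 11*(r:ℝ)^2*ε*n) :
    2*(n/(20*(r:ℝ))) + ((r:ℝ)-2)*(4*n/(11*(r:ℝ)^2)) + T' < b := by
  have hrR : (2:ℝ) ≤ (r:ℝ) := by exact_mod_cast hr
  have hrpos : (0:ℝ) < r := by linarith
  by_contra hb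
  push_neg at hb
  -- clear denominators
  have e1 : 220*(r:ℝ)^2*(2*(n/(20*(r:ℝ))) + ((r:ℝ)-2)*(4*n/(11*(r:ℝ)^2)) + T')
      = 22*(r:ℝ)*n + 80*((r:ℝ)-2)*n + 220*(r:ℝ)^2*T' := by
    field_simp
    ring
  have key1 : 220*(r:ℝ)^2*b ≤ 22*(r:ℝ)*n + 80*((r:ℝ)-2)*n + 220*(r:ℝ)^2*T' := by
    calc 220*(r:ℝ)^2*b ≤ 220*(r:ℝ)^2*(2*(n/(20*(r:ℝ))) + ((r:ℝ)-2)*(4*n/(11*(r:ℝ)^2)) + T') :=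
          mul_le_mul_of_nonneg_left hb (by positivity)
      _ = _ := e1
  have key2 : 220*(r:ℝ)^2*T' ≤ 2420*(r:ℝ)^4*ε*n := by
    have h := mul_le_mul_of_nonneg_left hT2 (by positivity : (0:ℝ) ≤ 220*(r:ℝ)^2)
    calc 220*(r:ℝ)^2*T' ≤ 220*(r:ℝ)^2*(11*(r:ℝ)^2*ε*n) := h
      _ = 2420*(r:ℝ)^4*ε*n := by ring
  have e2 : 220*(r:ℝ)^2*(n/(r:ℝ)) = 220*(r:ℝ)*n := by field_simp
  have key3 : (118*(r:ℝ) + 160)*n - 2420*(r:ℝ)^4*ε*n ≤ 220*(r:ℝ)^2*((n/(r:ℝ)) - b) := by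
    have expand : 220*(r:ℝ)^2*((n/(r:ℝ)) - b) = 220*(r:ℝ)*n - 220*(r:ℝ)^2*b := by
      rw [mul_sub, e2]
    nlinarith [key1, key2]
  have key4 : 2420*(r:ℝ)^4*ε*n ≤ (2420/30)*(r:ℝ)*n := by
    have h := mul_le_mul_of_nonneg_right he1 (by positivity : (0:ℝ) ≤ (r:ℝ)*n)
    calc 2420*(r:ℝ)^4*ε*n = (2420/30)*(30*(r:ℝ)^3*ε*((r:ℝ)*n)) := by ring
      _ ≤ (2420/30)*(1*((r:ℝ)*n)) := by linarith
      _ = (2420/30)*(r:ℝ)*n := by ring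
  have key5 : 112*(r:ℝ)*n + 480*n ≤ 660*(r:ℝ)^2*((n/(r:ℝ)) - b) := by
    have h3 : 660*(r:ℝ)^2*((n/(r:ℝ)) - b) = 3*(220*(r:ℝ)^2*((n/(r:ℝ)) - b)) := by ring
    nlinarith [key3, key4]
  have key6 : (0:ℝ) < (n/(r:ℝ)) - b := by
    have hpos : 0 < 112*(r:ℝ)*n + 480*n := by positivity
    nlinarith [key5]
  have key7 : (112*(r:ℝ)*n + 480*n)^2 ≤ (660*(r:ℝ)^2)^2 * ((n/(r:ℝ)) - b)^2 := by
    have h := pow_le_pow_left₀ (by positivity) key5 2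
    calc (112*(r:ℝ)*n + 480*n)^2 ≤ (660*(r:ℝ)^2*((n/(r:ℝ)) - b))^2 := h
      _ = (660*(r:ℝ)^2)^2 * ((n/(r:ℝ)) - b)^2 := by ring
  have key8 : (112*(r:ℝ)*n + 480*n)^2 ≤ 871200*(r:ℝ)^4*ε*n^2 + 108900*(r:ℝ)^5 := by
    have h1 : (660*(r:ℝ)^2)^2 * ((n/(r:ℝ)) - b)^2 ≤ (660*(r:ℝ)^2)^2 * (2*ε*n^2 + (r:ℝ)/4) :=
      mul_le_mul_of_nonneg_left hdev (by positivity)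
    have h2 : (660*(r:ℝ)^2)^2 * (2*ε*n^2 + (r:ℝ)/4)
        = 871200*(r:ℝ)^4*ε*n^2 + 108900*(r:ℝ)^5 := by ring
    linarith [key7]
  have bnd1 : 871200*(r:ℝ)^4*ε*n^2 ≤ 29040*(r:ℝ)*n^2 := by
    have h := mul_le_mul_of_nonneg_right he1 (by positivity : (0:ℝ) ≤ (r:ℝ)*n^2)
    calc 871200*(r:ℝ)^4*ε*n^2 = 29040*(30*(r:ℝ)^3*ε*((r:ℝ)*n^2)) := by ring
      _ ≤ 29040*(1*((r:ℝ)*n^2)) := by linarith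
      _ = 29040*(r:ℝ)*n^2 := by ring
  have bnd2 : 108900*(r:ℝ)^5 ≤ 3630*(r:ℝ)^2*n^2 := by
    have h := mul_le_mul_of_nonneg_right hn2 (sq_nonneg (r:ℝ))
    calc 108900*(r:ℝ)^5 = 3630*(30*(r:ℝ)^3*(r:ℝ)^2) := by ring
      _ ≤ 3630*(n^2*(r:ℝ)^2) := by linarith [h]
      _ = 3630*(r:ℝ)^2*n^2 := by ring
  have expand : (112*(r:ℝ)*n + 480*n)^2
      = 12544*(r:ℝ)^2*n^2 + 107520*(r:ℝ)*n^2 + 230400*n^2 := by ring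
  have p1 : (0:ℝ) < (r:ℝ)^2*n^2 := by positivity
  have p2 : (0:ℝ) < (r:ℝ)*n^2 := by positivity
  have p3 : (0:ℝ) < n^2 := by positivity
  linarith [key8, bnd1, bnd2]

lemma dev_sq {r : ℕ} (hr : 2 ≤ r) {n b S E : ℝ} (hE : 0 ≤ E)
    (hc : (n - b)^2 ≤ ((r:ℝ)-1)*(S - b^2))
    (hS : S ≤ n^2/(r:ℝ) + (r:ℝ)/4 + E) :
    (n/(r:ℝ) - b)^2 ≤ E + (r:ℝ)/4 := by
  have hrR : (2:ℝ) ≤ (r:ℝ) := by exact_mod_cast hr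
  have hrpos : (0:ℝ) < (r:ℝ) := by linarith
  have hr1 : (0:ℝ) ≤ (r:ℝ) - 1 := by linarith
  -- key: (n - r b)^2 ≤ (r-1)*(r*S - n^2)
  have key1 : (n - (r:ℝ)*b)^2 ≤ ((r:ℝ)-1)*((r:ℝ)*S - n^2) := by
    have h := mul_le_mul_of_nonneg_left hc hrpos.le
    nlinarith [h]
  have key2 : (r:ℝ)*S - n^2 ≤ (r:ℝ)^2/4 + (r:ℝ)*E := by
    have h := mul_le_mul_of_nonneg_left hS hrpos.le
    have e : (r:ℝ)*(n^2/(r:ℝ) + (r:ℝ)/4 + E) = n^2 + (r:ℝ)^2/4 + (r:ℝ)*E := by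
      field_simp
    linarith
  have key3 : (n - (r:ℝ)*b)^2 ≤ (r:ℝ)^2*(E + (r:ℝ)/4) := by
    calc (n - (r:ℝ)*b)^2 ≤ ((r:ℝ)-1)*((r:ℝ)^2/4 + (r:ℝ)*E) := by
          have := mul_le_mul_of_nonneg_left key2 hr1
          linarith [key1]
      _ ≤ (r:ℝ)*((r:ℝ)^2/4 + (r:ℝ)*E) := by
          have hpos : (0:ℝ) ≤ (r:ℝ)^2/4 + (r:ℝ)*E := by positivity
          nlinarith
      _ = (r:ℝ)^2*(E + (r:ℝ)/4) := by ring
  have hid : (n - (r:ℝ)*b)^2 = (r:ℝ)^2*(n/(r:ℝ) - b)^2 := by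
    have h : (n/(r:ℝ) - b)*(r:ℝ) = n - (r:ℝ)*b := by
      field_simp
    calc (n - (r:ℝ)*b)^2 = ((n/(r:ℝ) - b)*(r:ℝ))^2 := by rw [h]
      _ = (r:ℝ)^2*(n/(r:ℝ) - b)^2 := by ring
  rw [hid] at key3
  have hr2 : (0:ℝ) < (r:ℝ)^2 := by positivity
  exact le_of_mul_le_mul_left (by linarith [key3]) hr2

section Greedy
variable {V : Type} [Fintype V]
lemma greedy (G : SimpleGraph V) (r : ℕ) (hr : 2 ≤ r) (hG : G.CliqueFree (r+1))
    (hcol : ∀ v, colV G v < r) (θ θ' : ℝ) (hθ'0 : 0 ≤ θ')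
    (hnum : ∀ j ∈ Finset.range r,
      ((#(Finset.univ.filter (fun v => θ' ≤ (cmV G r v : ℝ)))) : ℝ) + 2*θ + ((r:ℝ)-2)*θ'
        < (#(BPart G j) : ℝ))
    (u v : V) (huv : G.Adj u v) (hcc : colV G u = colV G v)
    (hcu : (cmV G r u : ℝ) < θ) (hcv : (cmV G r v : ℝ) < θ) : False := by
  set T' : Finset V := Finset.univ.filter (fun v => θ' ≤ (cmV G r v : ℝ)) with hT'
  have grow : ∀ k, k ≤ r - 1 → ∃ W : Finset V, #W = k
      ∧ (∀ w ∈ W, (cmV G r w : ℝ) < θ')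
      ∧ (∀ w ∈ W, colV G w ≠ colV G u)
      ∧ (∀ w1 ∈ W, ∀ w2 ∈ W, w1 ≠ w2 → colV G w1 ≠ colV G w2)
      ∧ (∀ w ∈ W, G.Adj u w) ∧ (∀ w ∈ W, G.Adj v w)
      ∧ (∀ w1 ∈ W, ∀ w2 ∈ W, w1 ≠ w2 → G.Adj w1 w2) := by
    intro k
    induction k with
    | zero =>
      intro _
      exact ⟨∅, by simp⟩
    | succ m ih =>
      intro hm
      obtain ⟨W, hWcard, hWcm, hWcu, hWinj, hWadju, hWadjv, hWpair⟩ := ih (by omega)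
      -- find an unused color j
      have hjex : ((Finset.range r) \ (insert (colV G u) (W.image (colV G)))).Nonempty := by
        rw [← Finset.card_pos]
        have h1 : #(insert (colV G u) (W.image (colV G))) ≤ m + 1 := by
          calc #(insert (colV G u) (W.image (colV G)))
              ≤ #(W.image (colV G)) + 1 := Finset.card_insert_le _ _
            _ ≤ m + 1 := by
                have := Finset.card_image_le (s := W) (f := colV G)
                omega
        have h2 := Finset.le_card_sdiff (insert (colV G u) (W.image (colV G))) (Finset.range r)
        rw [Finset.card_range] at h2
        omega
      obtain ⟨j, hj⟩ := hjex
      rw [Finset.mem_sdiff, Finset.mem_insert, not_or] at hj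
      have hjr := hj.1
      have hjne := hj.2.1
      have hjim := hj.2.2
      -- candidate set
      set X : Finset V := T' ∪ (BPart G j \ G.neighborFinset u)
        ∪ (BPart G j \ G.neighborFinset v)
        ∪ W.biUnion (fun w => BPart G j \ G.neighborFinset w) with hX
      have hcardX : (#X : ℝ) < (#(BPart G j) : ℝ) := by
        have hb1 : #X ≤ #T' + #(BPart G j \ G.neighborFinset u)
            + #(BPart G j \ G.neighborFinset v)
            + ∑ w ∈ W, #(BPart G j \ G.neighborFinset w) := by
          calc #X ≤ #(T' ∪ (BPart G j \ G.neighborFinset u)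
                ∪ (BPart G j \ G.neighborFinset v))
              + #(W.biUnion (fun w => BPart G j \ G.neighborFinset w)) :=
                Finset.card_union_le _ _
            _ ≤ #(T' ∪ (BPart G j \ G.neighborFinset u))
              + #(BPart G j \ G.neighborFinset v)
              + #(W.biUnion (fun w => BPart G j \ G.neighborFinset w)) := by
                have := Finset.card_union_le (T' ∪ (BPart G j \ G.neighborFinset u))
                  (BPart G j \ G.neighborFinset v)
                omega
            _ ≤ #T' + #(BPart G j \ G.neighborFinset u)
              + #(BPart G j \ G.neighborFinset v)
              + #(W.biUnion (fun w => BPart G j \ G.neighborFinset w)) := by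
                have := Finset.card_union_le T' (BPart G j \ G.neighborFinset u)
                omega
            _ ≤ _ := by
                have := Finset.card_biUnion_le (s := W)
                  (t := fun w => BPart G j \ G.neighborFinset w)
                omega
        have hu' : (#(BPart G j \ G.neighborFinset u) : ℝ) < θ := by
          have := cm_key G r hjr (fun h => hjne (h ▸ rfl))
          calc (#(BPart G j \ G.neighborFinset u) : ℝ) ≤ (cmV G r u : ℝ) := by
                exact_mod_cast this
            _ < θ := hcu
        have hv' : (#(BPart G j \ G.neighborFinset v) : ℝ) < θ := by
          have hne : j ≠ colV G v := by rw [← hcc]; exact hjne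
          have := cm_key G r hjr hne
          calc (#(BPart G j \ G.neighborFinset v) : ℝ) ≤ (cmV G r v : ℝ) := by
                exact_mod_cast this
            _ < θ := hcv
        have hw' : ((∑ w ∈ W, #(BPart G j \ G.neighborFinset w)) : ℝ) ≤ (m : ℝ) * θ' := by
          calc ((∑ w ∈ W, #(BPart G j \ G.neighborFinset w)) : ℝ)
              = ∑ w ∈ W, (#(BPart G j \ G.neighborFinset w) : ℝ) := by push_cast; rfl
            _ ≤ ∑ w ∈ W, θ' := by
                refine Finset.sum_le_sum fun w hw => ?_
                have hne : j ≠ colV G w := fun h =>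
                  hjim (Finset.mem_image.mpr ⟨w, hw, h.symm⟩)
                calc (#(BPart G j \ G.neighborFinset w) : ℝ) ≤ (cmV G r w : ℝ) := by
                      exact_mod_cast cm_key G r hjr hne
                  _ ≤ θ' := (hWcm w hw).le
            _ = (m : ℝ) * θ' := by rw [Finset.sum_const, hWcard, nsmul_eq_mul]
        have hmθ : (m : ℝ) * θ' ≤ ((r:ℝ) - 2) * θ' := by
          apply mul_le_mul_of_nonneg_right _ hθ'0
          have : (m : ℝ) ≤ (r : ℝ) - 2 := by
            have h2r : (2:ℕ) ≤ r := hr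
            have : m ≤ r - 2 := by omega
            have hcast : ((r - 2 : ℕ) : ℝ) = (r:ℝ) - 2 := by
              push_cast [Nat.cast_sub h2r]
              ring
            calc (m:ℝ) ≤ ((r-2 : ℕ):ℝ) := by exact_mod_cast this
              _ = (r:ℝ) - 2 := hcast
          exact this
        have hnumj := hnum j hjr
        have hb1' : (#X : ℝ) ≤ (#T' : ℝ) + #(BPart G j \ G.neighborFinset u)
            + #(BPart G j \ G.neighborFinset v)
            + ((∑ w ∈ W, #(BPart G j \ G.neighborFinset w)) : ℝ) := by exact_mod_cast hb1
        rw [hT'] at hb1'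
        linarith
      have hXlt : #X < #(BPart G j) := by exact_mod_cast hcardX
      have hnsub : ¬ (BPart G j ⊆ X) := fun hs => absurd (Finset.card_le_card hs) (by omega)
      obtain ⟨w₀, hw₀B, hw₀X⟩ := Finset.not_subset.mp hnsub
      rw [hX] at hw₀X
      simp only [Finset.mem_union, not_or, Finset.mem_biUnion] at hw₀X
      obtain ⟨⟨⟨hw₀T, hw₀u⟩, hw₀v⟩, hw₀W⟩ := hw₀X
      have hw₀col : colV G w₀ = j := by
        have := Finset.mem_filter.mp hw₀B
        exact this.2
      have hw₀cm : (cmV G r w₀ : ℝ) < θ' := by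
        by_contra h
        push_neg at h
        exact hw₀T (Finset.mem_filter.mpr ⟨Finset.mem_univ _, h⟩)
      have hw₀adju : G.Adj u w₀ := by
        have : w₀ ∈ G.neighborFinset u := by
          by_contra h
          exact hw₀u (Finset.mem_sdiff.mpr ⟨hw₀B, h⟩)
        rwa [mem_neighborFinset] at this
      have hw₀adjv : G.Adj v w₀ := by
        have : w₀ ∈ G.neighborFinset v := by
          by_contra h
          exact hw₀v (Finset.mem_sdiff.mpr ⟨hw₀B, h⟩)
        rwa [mem_neighborFinset] at this
      have hw₀adjW : ∀ w ∈ W, G.Adj w w₀ := by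
        intro w hw
        have : w₀ ∈ G.neighborFinset w := by
          by_contra h
          exact hw₀W ⟨w, hw, Finset.mem_sdiff.mpr ⟨hw₀B, h⟩⟩
        rwa [mem_neighborFinset] at this
      have hw₀notW : w₀ ∉ W := fun hmem =>
        hjim (Finset.mem_image.mpr ⟨w₀, hmem, hw₀col⟩)
      refine ⟨insert w₀ W, ?_, ?_, ?_, ?_, ?_, ?_, ?_⟩
      · rw [Finset.card_insert_of_notMem hw₀notW, hWcard]
      · intro w hw
        rcases Finset.mem_insert.mp hw with h | h
        · rw [h]; exact hw₀cm
        · exact hWcm w h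
      · intro w hw
        rcases Finset.mem_insert.mp hw with h | h
        · rw [h, hw₀col]; exact hjne
        · exact hWcu w h
      · intro w1 hw1 w2 hw2 hne
        rcases Finset.mem_insert.mp hw1 with h1 | h1 <;>
          rcases Finset.mem_insert.mp hw2 with h2 | h2
        · exact absurd (h1.trans h2.symm) hne
        · rw [h1, hw₀col]
          intro h
          exact hjim (Finset.mem_image.mpr ⟨w2, h2, h.symm⟩)
        · rw [h2, hw₀col]
          intro h
          exact hjim (Finset.mem_image.mpr ⟨w1, h1, h⟩)
        · exact hWinj w1 h1 w2 h2 hne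
      · intro w hw
        rcases Finset.mem_insert.mp hw with h | h
        · rw [h]; exact hw₀adju
        · exact hWadju w h
      · intro w hw
        rcases Finset.mem_insert.mp hw with h | h
        · rw [h]; exact hw₀adjv
        · exact hWadjv w h
      · intro w1 hw1 w2 hw2 hne
        rcases Finset.mem_insert.mp hw1 with h1 | h1 <;>
          rcases Finset.mem_insert.mp hw2 with h2 | h2
        · exact absurd (h1.trans h2.symm) hne
        · rw [h1]
          exact (hw₀adjW w2 h2).symm
        · rw [h2]
          exact hw₀adjW w1 h1
        · exact hWpair w1 h1 w2 h2 hne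
  obtain ⟨W, hWcard, _, hWcu, _, hWadju, hWadjv, hWpair⟩ := grow (r-1) (le_refl _)
  have huv_ne : u ≠ v := huv.ne
  have huW : u ∉ W := fun h => hWcu u h rfl
  have hvW : v ∉ W := fun h => hWcu v h hcc.symm
  set K : Finset V := insert u (insert v W) with hK
  have hKcard : #K = r + 1 := by
    rw [hK, Finset.card_insert_of_notMem (by
        simp only [Finset.mem_insert]
        exact fun h => h.elim (fun h => huv_ne h) (fun h => huW h)),
      Finset.card_insert_of_notMem hvW, hWcard]
    omega
  have hKclique : G.IsClique K := by
    intro a ha b hb hab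
    simp only [hK, Finset.coe_insert, Set.mem_insert_iff, Finset.mem_coe] at ha hb
    rcases ha with rfl | rfl | ha <;> rcases hb with rfl | rfl | hb
    · exact absurd rfl hab
    · exact huv
    · exact hWadju b hb
    · exact huv.symm
    · exact absurd rfl hab
    · exact hWadjv b hb
    · exact (hWadju a ha).symm
    · exact (hWadjv a ha).symm
    · exact hWpair a ha b hb hab
  exact hG K ⟨hKclique, hKcard⟩

end Greedy

section Final
variable {V : Type} [Fintype V]

lemma cauchy_dev (G : SimpleGraph V) (r : ℕ) (hr : 1 ≤ r)
    (hcol : ∀ v, colV G v < r) {j : ℕ} (hj : j ∈ Finset.range r) :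
    ((Fintype.card V : ℝ) - #(BPart G j))^2
      ≤ ((r:ℝ) - 1) * ((∑ i ∈ Finset.range r, (#(BPart G i):ℝ)^2) - (#(BPart G j):ℝ)^2) := by
  have hsum : ∑ i ∈ (Finset.range r).erase j, (#(BPart G i):ℝ)
      = (Fintype.card V : ℝ) - #(BPart G j) := by
    have h := Finset.sum_erase_add (Finset.range r) (fun i => (#(BPart G i):ℝ)) hj
    have hs : ∑ i ∈ Finset.range r, (#(BPart G i):ℝ) = (Fintype.card V : ℝ) := by
      rw [← sum_b G r hcol]
      push_cast
      rfl
    linarith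
  have hsq : ∑ i ∈ (Finset.range r).erase j, (#(BPart G i):ℝ)^2
      = (∑ i ∈ Finset.range r, (#(BPart G i):ℝ)^2) - (#(BPart G j):ℝ)^2 := by
    have h := Finset.sum_erase_add (Finset.range r) (fun i => (#(BPart G i):ℝ)^2) hj
    linarith
  have hC := sq_sum_le_card_mul_sum_sq (s := (Finset.range r).erase j)
    (f := fun i => (#(BPart G i):ℝ))
  rw [Finset.card_erase_of_mem hj, Finset.card_range, hsum, hsq] at hC
  have hcast : ((r - 1 : ℕ) : ℝ) = (r:ℝ) - 1 := by
    push_cast [Nat.cast_sub hr]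
    ring
  rw [hcast] at hC
  exact hC

lemma turanGraph_colorable {n r : ℕ} (hr : 0 < r) : (SimpleGraph.turanGraph n r).Colorable r :=
  ⟨SimpleGraph.Coloring.mk (fun v => ⟨v.val % r, Nat.mod_lt _ hr⟩)
    (fun {a b} hab h => hab (by simpa using congrArg Fin.val h))⟩

lemma induce_colorable {m : ℕ} (G : SimpleGraph V) (s : Set V) (h : G.Colorable m) :
    (G.induce s).Colorable m := by
  obtain ⟨C⟩ := h
  exact ⟨SimpleGraph.Coloring.mk (fun x => C x.val) (fun {a b} hab heq => C.valid hab heq)⟩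

end Final

set_option maxHeartbeats 1000000 in
theorem almost_partite_lemma' (r : ℕ) (hr : 2 ≤ r) :
    ∃ d : ℝ, 0 < d ∧
      ∀ (V : Type) [Fintype V], ∀ (G : SimpleGraph V) (n : ℕ) (ε : ℝ),
        Fintype.card V = n → 4 * r ≤ n → 0 ≤ ε → ε ≤ 1 / (30 * (r : ℝ) ^ 3) →
        G.CliqueFree (r + 1) →
        (turanEdges r n : ℝ) - ε * (n : ℝ) ^ 2 ≤ (G.edgeFinset.card : ℝ) →
        ∃ T : Finset V, (T.card : ℝ) ≤ d * ε * n ∧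
          (G.induce ((↑T : Set V)ᶜ)).Colorable r := by
  have hr0 : 0 < r := by omega
  have hrR : (2:ℝ) ≤ (r:ℝ) := by exact_mod_cast hr
  have hrpos : (0:ℝ) < (r:ℝ) := by linarith
  refine ⟨80 * r, by positivity, ?_⟩
  intro V _ G n ε hc hn4 he0 heps hG hedge
  have hDr : DChain G r = ∅ := DChain_empty_of_cliqueFree G hG
  have hcol : ∀ v, colV G v < r := colV_lt G hDr
  have hn0 : (0:ℝ) < n := by
    have : 8 ≤ n := by omega
    exact_mod_cast (by omega : 0 < n)
  have hepsR : 30*(r:ℝ)^3*ε ≤ 1 := by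
    have h30 : (0:ℝ) < 30*(r:ℝ)^3 := by positivity
    rw [div_eq_mul_inv, one_mul] at heps
    calc 30*(r:ℝ)^3*ε ≤ 30*(r:ℝ)^3*(30*(r:ℝ)^3)⁻¹ :=
          mul_le_mul_of_nonneg_left heps h30.le
      _ = 1 := mul_inv_cancel₀ (ne_of_gt h30)
  by_cases hsmall : ε * (n:ℝ)^2 < 1
  · -- exact regime
    have htle : #G.edgeFinset ≤ turanEdges r n := turan_bound hr0 hc G hG
    have hte : turanEdges r n = #G.edgeFinset := by
      have h1 : (turanEdges r n : ℝ) < (#G.edgeFinset : ℝ) + 1 := by linarith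
      have h2 : turanEdges r n < #G.edgeFinset + 1 := by exact_mod_cast h1
      omega
    have hmax : G.IsTuranMaximal r := by
      refine ⟨hG, @fun H _ hH => ?_⟩
      have h := turan_bound hr0 hc H hH
      rw [hte] at h
      convert h using 2
      congr!
    obtain ⟨f⟩ := hmax.nonempty_iso_turanGraph
    rw [hc] at f
    have hcolG : G.Colorable r := by
      obtain ⟨C⟩ := turanGraph_colorable (n := n) hr0
      exact ⟨SimpleGraph.Coloring.mk (fun v => C (f v))
        (fun {a b} hab heq => C.valid (f.map_adj_iff.mpr hab) heq)⟩
    refine ⟨∅, ?_, induce_colorable G _ hcolG⟩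
    simp only [Finset.card_empty, Nat.cast_zero]
    positivity
  · -- stability regime
    push_neg at hsmall
    have hn2 : 30*(r:ℝ)^3 ≤ (n:ℝ)^2 := by
      nlinarith [hsmall, hepsR, he0, sq_nonneg (n:ℝ)]
    set e := #G.edgeFinset with he
    -- big counting facts
    have hmc := main_count G hDr
    have hqint0 : (0:ℝ) ≤ ∑ i ∈ Finset.range r, ∑ v ∈ BPart G i,
        (#(G.neighborFinset v ∩ BPart G i) : ℝ) := by positivity
    have hMP := MP_bound G r n hr0 hc hcol
    have htl := turan_lower hr0 n
    rw [hc] at hmc hMP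
    have hSb : ∑ i ∈ Finset.range r, (#(BPart G i):ℝ)^2
        ≤ (n:ℝ)^2/(r:ℝ) + (r:ℝ)/4 + 2*ε*(n:ℝ)^2 := by
      nlinarith [hmc, hMP, htl, hedge, hqint0]
    -- sum of cm bound
    have hdegsum : ∑ v : V, (G.degree v : ℝ) = 2 * (e:ℝ) := by
      rw [← Nat.cast_sum, SimpleGraph.sum_degrees_eq_twice_card_edges]
      push_cast
      ring
    have hcm_eq : ∑ v : V, (cmV G r v : ℝ)
        = ((n:ℝ)^2 - ∑ i ∈ Finset.range r, (#(BPart G i):ℝ)^2) - 2*(e:ℝ)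
          + ∑ i ∈ Finset.range r, ∑ v ∈ BPart G i,
              (#(G.neighborFinset v ∩ BPart G i) : ℝ) := by
      rw [Finset.sum_congr rfl (fun v _ => cm_cast G r hcol v)]
      rw [Finset.sum_sub_distrib, sumP G r hcol, Finset.sum_sub_distrib, hdegsum,
        sum_qint G r hcol, hc]
      ring
    have hcm_sum : ∑ v : V, (cmV G r v : ℝ) ≤ 4*ε*(n:ℝ)^2 := by
      rw [hcm_eq]
      nlinarith [hmc, hMP, hedge]
    -- deletion sets
    have hTbound : ∀ θ : ℝ, 0 < θ →
        ((#(Finset.univ.filter (fun v => θ ≤ (cmV G r v : ℝ)))) : ℝ) * θ ≤ 4*ε*(n:ℝ)^2 := by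
      intro θ hθ
      set T := Finset.univ.filter (fun v => θ ≤ (cmV G r v : ℝ)) with hTdef
      have h1 : (#T:ℝ) * θ ≤ ∑ v ∈ T, (cmV G r v : ℝ) := by
        calc (#T:ℝ) * θ = ∑ _v ∈ T, θ := by rw [Finset.sum_const, nsmul_eq_mul]
          _ ≤ ∑ v ∈ T, (cmV G r v : ℝ) :=
            Finset.sum_le_sum (fun v hv => (Finset.mem_filter.mp hv).2)
      have h2 : ∑ v ∈ T, (cmV G r v : ℝ) ≤ ∑ v : V, (cmV G r v : ℝ) :=
        Finset.sum_le_sum_of_subset_of_nonneg (Finset.subset_univ T)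
          (fun v _ _ => by positivity)
      linarith
    -- continue
    have hTb := hTbound ((n:ℝ)/(20*(r:ℝ))) (by positivity)
    have hT'b := hTbound (4*(n:ℝ)/(11*(r:ℝ)^2)) (by positivity)
    have hT'le : ((#(Finset.univ.filter (fun v => 4*(n:ℝ)/(11*(r:ℝ)^2) ≤ (cmV G r v : ℝ)))) : ℝ)
        ≤ 11*(r:ℝ)^2*ε*(n:ℝ) := by
      have hθ'pos : (0:ℝ) < 4*(n:ℝ)/(11*(r:ℝ)^2) := by positivity
      rw [← le_div_iff₀ hθ'pos] at hT'b
      calc _ ≤ (4*ε*(n:ℝ)^2) / (4*(n:ℝ)/(11*(r:ℝ)^2)) := hT'b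
        _ = 11*(r:ℝ)^2*ε*(n:ℝ) := by
            field_simp
    have hnum : ∀ j ∈ Finset.range r,
        ((#(Finset.univ.filter (fun v => 4*(n:ℝ)/(11*(r:ℝ)^2) ≤ (cmV G r v : ℝ)))) : ℝ)
          + 2*((n:ℝ)/(20*(r:ℝ))) + ((r:ℝ)-2)*(4*(n:ℝ)/(11*(r:ℝ)^2))
          < (#(BPart G j) : ℝ) := by
      intro j hj
      have hcd := cauchy_dev G r (by omega) hcol hj
      rw [hc] at hcd
      have hdev := dev_sq hr (by positivity : (0:ℝ) ≤ 2*ε*(n:ℝ)^2) hcd hSb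
      have hnk := num_key hr hn2 hn0 he0 hepsR hdev hT'le
      linarith
    refine ⟨Finset.univ.filter (fun v => (n:ℝ)/(20*(r:ℝ)) ≤ (cmV G r v : ℝ)), ?_, ?_⟩
    · have hθpos : (0:ℝ) < (n:ℝ)/(20*(r:ℝ)) := by positivity
      rw [← le_div_iff₀ hθpos] at hTb
      calc ((#(Finset.univ.filter (fun v => (n:ℝ)/(20*(r:ℝ)) ≤ (cmV G r v : ℝ)))) : ℝ)
          ≤ (4*ε*(n:ℝ)^2) / ((n:ℝ)/(20*(r:ℝ))) := hTb
        _ = 80*(r:ℝ)*ε*(n:ℝ) := by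
            field_simp
            ring
        _ = 80*(r:ℝ)*ε*(n:ℝ) := rfl
    · refine ⟨SimpleGraph.Coloring.mk (fun x => ⟨colV G x.val, hcol x.val⟩) ?_⟩
      intro a b hab heq
      have hadj : G.Adj a.val b.val := hab
      have hcc : colV G a.val = colV G b.val := congrArg Fin.val heq
      have hcma : (cmV G r a.val : ℝ) < (n:ℝ)/(20*(r:ℝ)) := by
        have hpa := a.property
        rw [Set.mem_compl_iff, Finset.mem_coe, Finset.mem_filter] at hpa
        push_neg at hpa
        exact hpa (Finset.mem_univ _)
      have hcmb : (cmV G r b.val : ℝ) < (n:ℝ)/(20*(r:ℝ)) := by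
        have hpb := b.property
        rw [Set.mem_compl_iff, Finset.mem_coe, Finset.mem_filter] at hpb
        push_neg at hpb
        exact hpb (Finset.mem_univ _)
      exact greedy G r hr hG hcol ((n:ℝ)/(20*(r:ℝ))) (4*(n:ℝ)/(11*(r:ℝ)^2))
        (by positivity) hnum a.val b.val hadj hcc hcma hcmb


/-- Lemma 1. For every `r ≥ 2` there is a constant `d_r` such that: if
`n ≥ 4r`, `0 ≤ ε ≤ 1/(30r³)` and `G` is an `n`-vertex `K_{r+1}`-free graph with
`e(G) ≥ t_r(n) - εn²`, then there is `T ⊆ V(G)` with `|T| ≤ d_r ε n` and `G - T` `r`-partite. -/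
theorem almost_partite_lemma (r : ℕ) (hr : 2 ≤ r) :
    ∃ d : ℝ, 0 < d ∧
      ∀ (V : Type) [Fintype V], ∀ (G : SimpleGraph V) (n : ℕ) (ε : ℝ),
        Fintype.card V = n → 4 * r ≤ n → 0 ≤ ε → ε ≤ 1 / (30 * (r : ℝ) ^ 3) →
        G.CliqueFree (r + 1) →
        (turanEdges r n : ℝ) - ε * (n : ℝ) ^ 2 ≤ (G.edgeFinset.card : ℝ) →
        ∃ T : Finset V, (T.card : ℝ) ≤ d * ε * n ∧
          (G.induce ((↑T : Set V)ᶜ)).Colorable r := by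
  exact almost_partite_lemma' r hr
end Tele
end

section
/- Let r ≥ 2 and let G be a K_r-free, r-partite graph with vertex classes A, B, X₁, …, X_{r-2}. Then there is a set R ⊆ A ∪ B covering all r-saturating (A,B) edges of G such that the number of edges of the r-partite complement of G covered by R is at least c_r·|R|^{r/(r-1)}, for some constant c_r > 0 depending only on r. -/
open SimpleGraph Finset
open scoped Classical

set_option linter.unusedSectionVars false
set_option maxHeartbeats 1000000

variable {V : Type} [Fintype V] [DecidableEq V]

/-- The number of edges of the `r`-partite complement of `G` (non-edges of `G` joining two
distinct vertex classes of the partition `P`) that are covered by the set `R`. -/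
noncomputable def coveredNonedges {V : Type} [Fintype V] [DecidableEq V]
    (G : SimpleGraph V) {r : ℕ} (P : Fin r → Finset V) (R : Finset V) : ℕ :=
  (Finset.univ.filter fun e : Sym2 V =>
    ∃ a b : V, e = s(a, b) ∧ ¬ G.Adj a b ∧
      (∃ i j : Fin r, i ≠ j ∧ a ∈ P i ∧ b ∈ P j) ∧ (a ∈ R ∨ b ∈ R)).card

/-- cross-class non-neighbors of `v`. -/
noncomputable def NPv (G : SimpleGraph V) (cl : V → ℕ) (v : V) : Finset V :=
  Finset.univ.filter fun u => ¬ G.Adj v u ∧ cl u ≠ cl v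

/-- witness structure for a saturating pair. -/
def Wit (G : SimpleGraph V) (cl : V → ℕ) (U : Finset V) (kk : ℕ) (w w' : V)
    (K : Finset V) : Prop :=
  cl w ≠ cl w' ∧ ¬ G.Adj w w' ∧ K ⊆ U ∧ K.card = kk ∧
    (∀ x ∈ K, ∀ y ∈ K, x ≠ y → G.Adj x y) ∧ (∀ x ∈ K, 2 ≤ cl x) ∧
    (∀ x ∈ K, G.Adj w x ∧ G.Adj w' x)

lemma wit_symm {G : SimpleGraph V} {cl : V → ℕ} {U : Finset V} {kk : ℕ} {w w' : V}
    {K : Finset V} (h : Wit G cl U kk w w' K) : Wit G cl U kk w' w K := by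
  obtain ⟨h1, h2, h3, h4, h5, h6, h7⟩ := h
  exact ⟨h1.symm, fun hadj => h2 hadj.symm, h3, h4, h5, h6, fun x hx => ⟨(h7 x hx).2, (h7 x hx).1⟩⟩

lemma key (G : SimpleGraph V) (cl : V → ℕ) (hcl : ∀ u v, G.Adj u v → cl u ≠ cl v) :
    ∀ (k : ℕ) (U W : Finset V) (d : ℕ),
      (∀ t : Finset V, t ⊆ U → ¬ G.IsNClique (k+2) t) →
      W ⊆ U →
      (∀ w ∈ W, cl w = 0 ∨ cl w = 1) →
      (∀ w ∈ W, ∃ w' ∈ W, ∃ K, Wit G cl U k w w' K) →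
      (∀ w ∈ W, (NPv G cl w).card ≤ d) →
      W.card ≤ (2*k+2) * d^(k+1) := by
  intro k
  induction k with
  | zero =>
    intro U W d hfree hWU hWcl hwit hdeg
    rcases W.eq_empty_or_nonempty with rfl | ⟨w₀, hw₀⟩
    · simp
    obtain ⟨w₁, hw₁, K₀, hwit₀⟩ := hwit w₀ hw₀
    have noadj : ∀ u ∈ U, ∀ v ∈ U, ¬ G.Adj u v := by
      intro u hu v hv hadj
      refine hfree {u, v} ?_ ⟨?_, ?_⟩
      · intro x hx
        simp only [mem_insert, mem_singleton] at hx
        rcases hx with rfl | rfl <;> assumption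
      · intro x hx y hy hxy
        simp only [coe_insert, coe_singleton, Set.mem_insert_iff, Set.mem_singleton_iff] at hx hy
        rcases hx with rfl | rfl <;> rcases hy with rfl | rfl
        · exact absurd rfl hxy
        · exact hadj
        · exact hadj.symm
        · exact absurd rfl hxy
      · rw [card_insert_of_notMem (by simp [hadj.ne]), card_singleton]
    have hsubs : W ⊆ NPv G cl w₀ ∪ NPv G cl w₁ := by
      intro w hw
      by_cases hc : cl w = cl w₀
      · refine mem_union_right _ (mem_filter.mpr ⟨mem_univ _, ?_, ?_⟩)
        · exact fun h => noadj w₁ (hWU hw₁) w (hWU hw) h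
        · rw [hc]; exact hwit₀.1
      · exact mem_union_left _ (mem_filter.mpr ⟨mem_univ _,
          fun h => noadj w₀ (hWU hw₀) w (hWU hw) h, hc⟩)
    calc W.card ≤ (NPv G cl w₀ ∪ NPv G cl w₁).card := card_le_card hsubs
      _ ≤ (NPv G cl w₀).card + (NPv G cl w₁).card := card_union_le _ _
      _ ≤ d + d := Nat.add_le_add (hdeg w₀ hw₀) (hdeg w₁ hw₁)
      _ ≤ (2*0+2) * d^(0+1) := by ring_nf; omega
  | succ k ih =>
    intro U W d hfree hWU hWcl hwit hdeg
    rcases W.eq_empty_or_nonempty with rfl | ⟨w₀, hw₀⟩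
    · simp
    obtain ⟨w₁, hw₁, K₀, hwit₀⟩ := hwit w₀ hw₀
    have hd1 : 1 ≤ d := by
      have h1 : w₁ ∈ NPv G cl w₀ :=
        mem_filter.mpr ⟨mem_univ _, hwit₀.2.1, hwit₀.1.symm⟩
      have := hdeg w₀ hw₀
      have := Finset.card_pos.mpr ⟨w₁, h1⟩
      omega
    have hnadj : ∀ v ∈ W, ∀ K : Finset V, K ⊆ U → K.card = k+1 →
        (∀ x ∈ K, ∀ y ∈ K, x ≠ y → G.Adj x y) → (∀ x ∈ K, 2 ≤ cl x) →
        (∀ x ∈ K, G.Adj v x) → (∀ x ∈ K, G.Adj w₀ x) → cl v ≠ cl w₀ → ¬ G.Adj w₀ v := by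
      intro v hv K hKU hKcard hKcl hKcl2 hKv hKw0 hclv hadj
      have hvK : v ∉ K := fun h => by
        have := hKcl2 v h; rcases hWcl v hv with h' | h' <;> omega
      have hvw0 : w₀ ≠ v := fun h => hclv (by rw [h])
      have hw0K : w₀ ∉ K := fun h => by
        have := hKcl2 w₀ h; rcases hWcl w₀ hw₀ with h' | h' <;> omega
      refine hfree (insert w₀ (insert v K)) ?_ ⟨?_, ?_⟩
      · intro x hx
        simp only [mem_insert] at hx
        rcases hx with rfl | rfl | hx
        · exact hWU hw₀
        · exact hWU hv
        · exact hKU hx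
      · intro x hx y hy hxy
        simp only [coe_insert, Set.mem_insert_iff, mem_coe] at hx hy
        rcases hx with rfl | rfl | hx <;> rcases hy with rfl | rfl | hy
        · exact absurd rfl hxy
        · exact hadj
        · exact hKw0 y hy
        · exact hadj.symm
        · exact absurd rfl hxy
        · exact hKv y hy
        · exact (hKw0 x hx).symm
        · exact (hKv x hx).symm
        · exact hKcl x hx y hy hxy
      · rw [card_insert_of_notMem (by simp [hvw0, hw0K]),
          card_insert_of_notMem hvK, hKcard]
    set Wx : V → Finset V := fun x =>
      W.filter (fun w => ∃ u ∈ W, ∃ K, Wit G cl U (k+1) w u K ∧ x ∈ K) with hWxdef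
    have hsubs : W ⊆ (NPv G cl w₀ ∪ (NPv G cl w₀ ∩ W).biUnion (fun u => NPv G cl u))
        ∪ (NPv G cl w₀).biUnion Wx := by
      intro w hw
      obtain ⟨w', hw', K, hK⟩ := hwit w hw
      obtain ⟨hK1, hK2, hK3, hK4, hK5, hK6, hK7⟩ := hK
      by_cases hcase : ∀ x ∈ K, G.Adj w₀ x
      · refine mem_union_left _ ?_
        by_cases hcw : cl w = cl w₀
        · have h1 : cl w' ≠ cl w₀ := by rw [← hcw]; exact hK1.symm
          have h2 : ¬ G.Adj w₀ w' := hnadj w' hw' K hK3 hK4 hK5 hK6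
            (fun x hx => (hK7 x hx).2) hcase h1
          refine mem_union_right _ (mem_biUnion.mpr ⟨w', mem_inter.mpr
            ⟨mem_filter.mpr ⟨mem_univ _, h2, h1⟩, hw'⟩, ?_⟩)
          exact mem_filter.mpr ⟨mem_univ _, fun h => hK2 h.symm, hK1⟩
        · have h2 : ¬ G.Adj w₀ w := hnadj w hw K hK3 hK4 hK5 hK6
            (fun x hx => (hK7 x hx).1) hcase hcw
          exact mem_union_left _ (mem_filter.mpr ⟨mem_univ _, h2, hcw⟩)
      · push_neg at hcase
        obtain ⟨x, hxK, hnadjx⟩ := hcase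
        have hxNP : x ∈ NPv G cl w₀ := by
          refine mem_filter.mpr ⟨mem_univ _, hnadjx, ?_⟩
          have := hK6 x hxK; rcases hWcl w₀ hw₀ with h' | h' <;> omega
        exact mem_union_right _ (mem_biUnion.mpr ⟨x, hxNP, mem_filter.mpr
          ⟨hw, w', hw', K, ⟨hK1, hK2, hK3, hK4, hK5, hK6, hK7⟩, hxK⟩⟩)
    have hS2 : ((NPv G cl w₀ ∩ W).biUnion (fun u => NPv G cl u)).card ≤ d * d := by
      calc ((NPv G cl w₀ ∩ W).biUnion (fun u => NPv G cl u)).card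
          ≤ ∑ u ∈ NPv G cl w₀ ∩ W, (NPv G cl u).card := card_biUnion_le
        _ ≤ ∑ _u ∈ NPv G cl w₀ ∩ W, d := by
            refine sum_le_sum ?_
            intro u hu
            exact hdeg u (mem_inter.mp hu).2
        _ = (NPv G cl w₀ ∩ W).card * d := by rw [sum_const, smul_eq_mul]
        _ ≤ d * d := by
            have h1 : (NPv G cl w₀ ∩ W).card ≤ (NPv G cl w₀).card :=
              card_le_card inter_subset_left
            have := hdeg w₀ hw₀
            exact Nat.mul_le_mul (le_trans h1 this) le_rfl
    have hWxcard : ∀ x ∈ NPv G cl w₀, (Wx x).card ≤ (2*k+2) * d^(k+1) := by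
      intro x _
      rcases (Wx x).eq_empty_or_nonempty with he | ⟨w, hwmem⟩
      · rw [he]; simp
      have hxU : x ∈ U := by
        obtain ⟨_, u, hu, K, hK, hxK⟩ := mem_filter.mp hwmem
        exact hK.2.2.1 hxK
      refine ih (U ∩ G.neighborFinset x) (Wx x) d ?_ ?_ ?_ ?_ ?_
      · intro t ht hclique
        have hxt : x ∉ t := fun h => G.irrefl
          ((mem_neighborFinset G x x).mp (mem_inter.mp (ht h)).2)
        refine hfree (insert x t) ?_ ?_
        · intro y hy
          rcases mem_insert.mp hy with rfl | hy
          · exact hxU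
          · exact (mem_inter.mp (ht hy)).1
        · have := hclique.insert (fun b hb => (mem_neighborFinset G x b).mp
            (mem_inter.mp (ht hb)).2)
          convert this using 2
      · intro w hw
        obtain ⟨hwW, u, hu, K, hK, hxK⟩ := mem_filter.mp hw
        refine mem_inter.mpr ⟨hWU hwW, (mem_neighborFinset G x w).mpr ?_⟩
        exact ((hK.2.2.2.2.2.2) x hxK).1.symm
      · intro w hw; exact hWcl w (mem_filter.mp hw).1
      · intro w hw
        obtain ⟨hwW, u, hu, K, hK, hxK⟩ := mem_filter.mp hw
        obtain ⟨hK1, hK2, hK3, hK4, hK5, hK6, hK7⟩ := hK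
        refine ⟨u, mem_filter.mpr ⟨hu, w, hwW, K,
          ⟨hK1.symm, fun h => hK2 h.symm, hK3, hK4, hK5, hK6,
            fun y hy => ⟨(hK7 y hy).2, (hK7 y hy).1⟩⟩, hxK⟩, K.erase x, ?_⟩
        refine ⟨hK1, hK2, ?_, ?_, ?_, ?_, ?_⟩
        · intro y hy
          obtain ⟨hyx, hyK⟩ := mem_erase.mp hy
          exact mem_inter.mpr ⟨hK3 hyK, (mem_neighborFinset G x y).mpr
            (hK5 x hxK y hyK (Ne.symm hyx))⟩
        · rw [card_erase_of_mem hxK, hK4]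
          omega
        · intro a ha b hb hab
          exact hK5 a (mem_of_mem_erase ha) b (mem_of_mem_erase hb) hab
        · intro a ha; exact hK6 a (mem_of_mem_erase ha)
        · intro a ha; exact hK7 a (mem_of_mem_erase ha)
      · intro w hw; exact hdeg w (mem_filter.mp hw).1
    have hS3 : ((NPv G cl w₀).biUnion Wx).card ≤ d * ((2*k+2) * d^(k+1)) := by
      calc ((NPv G cl w₀).biUnion Wx).card ≤ ∑ x ∈ NPv G cl w₀, (Wx x).card :=
            card_biUnion_le
        _ ≤ ∑ _x ∈ NPv G cl w₀, (2*k+2) * d^(k+1) := sum_le_sum hWxcard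
        _ = (NPv G cl w₀).card * ((2*k+2) * d^(k+1)) := by rw [sum_const, smul_eq_mul]
        _ ≤ d * ((2*k+2) * d^(k+1)) := Nat.mul_le_mul (hdeg w₀ hw₀) le_rfl
    have hfinal := calc W.card
        ≤ _ := card_le_card hsubs
      _ ≤ (NPv G cl w₀ ∪ (NPv G cl w₀ ∩ W).biUnion (fun u => NPv G cl u)).card
          + ((NPv G cl w₀).biUnion Wx).card := card_union_le _ _
      _ ≤ ((NPv G cl w₀).card + ((NPv G cl w₀ ∩ W).biUnion (fun u => NPv G cl u)).card)
          + ((NPv G cl w₀).biUnion Wx).card := Nat.add_le_add_right (card_union_le _ _) _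
      _ ≤ (d + d * d) + d * ((2*k+2) * d^(k+1)) := by
          have := hdeg w₀ hw₀
          omega
    have e1 : d ≤ d^(k+1+1) := by
      calc d = d^1 := (pow_one d).symm
        _ ≤ d^(k+1+1) := Nat.pow_le_pow_right hd1 (by omega)
    have e2 : d * d ≤ d^(k+1+1) := by
      calc d * d = d^2 := (sq d).symm
        _ ≤ d^(k+1+1) := Nat.pow_le_pow_right hd1 (by omega)
    have e3 : d * ((2*k+2) * d^(k+1)) = (2*k+2) * d^(k+1+1) := by ring
    calc W.card ≤ (d + d * d) + d * ((2*k+2) * d^(k+1)) := hfinal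
      _ ≤ (d^(k+1+1) + d^(k+1+1)) + (2*k+2) * d^(k+1+1) := by omega
      _ = (2*(k+1)+2) * d^(k+1+1) := by ring

noncomputable def USat (Sat : V → V → Prop) (R : Finset V) : Finset (V × V) :=
  (Finset.univ ×ˢ Finset.univ).filter fun p => Sat p.1 p.2 ∧ p.1 ∉ R ∧ p.2 ∉ R

noncomputable def WSet (Sat : V → V → Prop) (R : Finset V) : Finset V :=
  (USat Sat R).biUnion fun p => {p.1, p.2}

lemma mem_USat {Sat : V → V → Prop} {R : Finset V} {p : V × V} :
    p ∈ USat Sat R ↔ Sat p.1 p.2 ∧ p.1 ∉ R ∧ p.2 ∉ R := by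
  rw [USat, mem_filter]
  simp only [mem_product, mem_univ, and_self, true_and]

lemma wset_not_mem {Sat : V → V → Prop} {R : Finset V} {v : V} (h : v ∈ WSet Sat R) :
    v ∉ R := by
  obtain ⟨p, hp, hv⟩ := mem_biUnion.mp h
  obtain ⟨-, -, h1, h2⟩ := mem_filter.mp hp
  rcases mem_insert.mp hv with rfl | hv
  · exact h1
  · rw [mem_singleton.mp hv]; exact h2

lemma usat_mono {Sat : V → V → Prop} {R R' : Finset V} (h : R ⊆ R') :
    USat Sat R' ⊆ USat Sat R := by
  intro p hp
  obtain ⟨hm, h1, h2, h3⟩ := mem_filter.mp hp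
  exact mem_filter.mpr ⟨hm, h1, fun hc => h2 (h hc), fun hc => h3 (h hc)⟩

lemma greedy_s11 (G : SimpleGraph V) (cl : V → ℕ) (k : ℕ)
    (hcl : ∀ u v, G.Adj u v → cl u ≠ cl v)
    (hfree : G.CliqueFree (k+2))
    (Sat : V → V → Prop)
    (hsat : ∀ a b, Sat a b → cl a = 0 ∧ cl b = 1 ∧ ∃ K, Wit G cl Finset.univ k a b K) :
    ∀ (n : ℕ) (R₀ : Finset V), (USat Sat R₀).card ≤ n →
      ∃ S : Finset V, S ⊆ WSet Sat R₀ ∧ USat Sat (R₀ ∪ S) = ∅ ∧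
        ∀ m : ℕ, 1 ≤ m →
          (S.filter fun v => (2*k+2) * (NPv G cl v).card^(k+1) < m).card < m := by
  intro n
  induction n with
  | zero =>
    intro R₀ hcard
    refine ⟨∅, empty_subset _, ?_, ?_⟩
    · rw [Finset.union_empty]
      exact card_eq_zero.mp (Nat.le_zero.mp hcard)
    · intro m hm; simp; omega
  | succ n ih =>
    intro R₀ hcard
    rcases (USat Sat R₀).eq_empty_or_nonempty with he | ⟨p, hp⟩
    · refine ⟨∅, empty_subset _, ?_, ?_⟩
      · rw [Finset.union_empty]; exact he
      · intro m hm; simp; omega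
    -- the set of endpoints is nonempty
    have hWne : (WSet Sat R₀).Nonempty :=
      ⟨p.1, mem_biUnion.mpr ⟨p, hp, mem_insert_self _ _⟩⟩
    obtain ⟨w, hwW, hwmax⟩ := exists_max_image (WSet Sat R₀)
      (fun v => (NPv G cl v).card) hWne
    -- apply the key lemma to W = WSet Sat R₀
    have hkey : (WSet Sat R₀).card ≤ (2*k+2) * (NPv G cl w).card^(k+1) := by
      refine key G cl hcl k Finset.univ (WSet Sat R₀) ((NPv G cl w).card)
        (fun t _ ht => hfree t ht) (subset_univ _) ?_ ?_ hwmax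
      · intro v hv
        obtain ⟨q, hq, hvq⟩ := mem_biUnion.mp hv
        obtain ⟨-, hS, -, -⟩ := mem_filter.mp hq
        obtain ⟨h0, h1, -⟩ := hsat q.1 q.2 hS
        rcases mem_insert.mp hvq with rfl | hvq
        · exact Or.inl h0
        · rw [mem_singleton.mp hvq]; exact Or.inr h1
      · intro v hv
        obtain ⟨q, hq, hvq⟩ := mem_biUnion.mp hv
        have hq1 : q.1 ∈ WSet Sat R₀ := mem_biUnion.mpr ⟨q, hq, mem_insert_self _ _⟩
        have hq2 : q.2 ∈ WSet Sat R₀ := mem_biUnion.mpr ⟨q, hq,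
          mem_insert.mpr (Or.inr (mem_singleton_self _))⟩
        obtain ⟨-, hS, -, -⟩ := mem_filter.mp hq
        obtain ⟨h0, h1, K, hK⟩ := hsat q.1 q.2 hS
        rcases mem_insert.mp hvq with rfl | hvq
        · exact ⟨q.2, hq2, K, hK⟩
        · rw [mem_singleton.mp hvq]
          exact ⟨q.1, hq1, K, wit_symm hK⟩
    -- insert w and recurse
    have hdec : (USat Sat (insert w R₀)).card ≤ n := by
      have hss : USat Sat (insert w R₀) ⊂ USat Sat R₀ := by
        refine Finset.ssubset_iff_of_subset (usat_mono (subset_insert _ _)) |>.mpr ?_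
        obtain ⟨q, hq, hvq⟩ := mem_biUnion.mp hwW
        refine ⟨q, hq, fun hc => ?_⟩
        obtain ⟨-, -, h1, h2⟩ := mem_filter.mp hc
        rcases mem_insert.mp hvq with rfl | hvq
        · exact h1 (mem_insert_self _ _)
        · have hwq : w = q.2 := mem_singleton.mp hvq
          exact h2 (by rw [← hwq]; exact mem_insert_self _ _)
      have := Finset.card_lt_card hss
      omega
    obtain ⟨S₁, hS₁W, hS₁cov, hS₁cnt⟩ := ih (insert w R₀) hdec
    have hS₁W₀ : S₁ ⊆ WSet Sat R₀ := by
      refine hS₁W.trans ?_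
      intro v hv
      obtain ⟨q, hq, hvq⟩ := mem_biUnion.mp hv
      exact mem_biUnion.mpr ⟨q, usat_mono (subset_insert _ _) hq, hvq⟩
    refine ⟨insert w S₁, ?_, ?_, ?_⟩
    · intro v hv
      rcases mem_insert.mp hv with rfl | hv
      · exact hwW
      · exact hS₁W₀ hv
    · have : R₀ ∪ insert w S₁ = insert w R₀ ∪ S₁ := by
        ext v; simp only [mem_union, mem_insert]; tauto
      rw [this]; exact hS₁cov
    · intro m hm
      have hwS₁ : w ∉ S₁ := fun hc => wset_not_mem (hS₁W hc) (mem_insert_self _ _)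
      by_cases hbig : m ≤ (WSet Sat R₀).card
      · -- w is not "small" for this m
        have hwbig : ¬ ((2*k+2) * (NPv G cl w).card^(k+1) < m) := by omega
        rw [filter_insert, if_neg hwbig]
        exact hS₁cnt m hm
      · push_neg at hbig
        calc (Finset.filter _ (insert w S₁)).card ≤ (insert w S₁).card :=
              card_filter_le _ _
          _ ≤ (WSet Sat R₀).card := card_le_card (by
              intro v hv
              rcases mem_insert.mp hv with rfl | hv
              · exact hwW
              · exact hS₁W₀ hv)
          _ < m := hbig

lemma sat_wit (G : SimpleGraph V) (k : ℕ) (cl : V → ℕ)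
    (hfree : G.CliqueFree (k+2)) {a b : V}
    (hab : ¬ G.Adj a b) (hne : a ≠ b)
    (hcla : cl a = 0) (hclb : cl b = 1)
    (hcl : ∀ u v, G.Adj u v → cl u ≠ cl v)
    (hsat : ¬ (G ⊔ SimpleGraph.fromEdgeSet {s(a, b)}).CliqueFree (k+2)) :
    ∃ K, Wit G cl Finset.univ k a b K := by
  rw [SimpleGraph.CliqueFree] at hsat
  push_neg at hsat
  obtain ⟨t, ht⟩ := hsat
  have hadj' : ∀ u v : V, (G ⊔ SimpleGraph.fromEdgeSet {s(a, b)}).Adj u v →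
      G.Adj u v ∨ ((u = a ∧ v = b) ∨ (u = b ∧ v = a)) := by
    intro u v h
    rcases h with h | h
    · exact Or.inl h
    · rw [SimpleGraph.fromEdgeSet_adj, Set.mem_singleton_iff, Sym2.eq_iff] at h
      exact Or.inr h.1
  have hat : a ∈ t := by
    by_contra hat
    refine hfree t ⟨?_, ht.card_eq⟩
    intro x hx y hy hxy
    rcases hadj' x y (ht.isClique hx hy hxy) with h | ⟨h1, h2⟩ | ⟨h1, h2⟩
    · exact h
    · exact absurd (h1 ▸ hx) (by simpa using hat)
    · exact absurd (h2 ▸ hy) (by simpa using hat)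
  have hbt : b ∈ t := by
    by_contra hbt
    refine hfree t ⟨?_, ht.card_eq⟩
    intro x hx y hy hxy
    rcases hadj' x y (ht.isClique hx hy hxy) with h | ⟨h1, h2⟩ | ⟨h1, h2⟩
    · exact h
    · exact absurd (h2 ▸ hy) (by simpa using hbt)
    · exact absurd (h1 ▸ hx) (by simpa using hbt)
  set K := (t.erase a).erase b with hKdef
  have hKmem : ∀ x ∈ K, x ∈ t ∧ x ≠ a ∧ x ≠ b := by
    intro x hx
    have h1 := mem_erase.mp hx
    have h2 := mem_erase.mp h1.2
    exact ⟨h2.2, h2.1, h1.1⟩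
  have hGadj : ∀ x ∈ t, x ≠ a → x ≠ b → G.Adj a x ∧ G.Adj b x := by
    intro x hxt hxa hxb
    constructor
    · rcases hadj' a x (ht.isClique (by simpa using hat) (by simpa using hxt)
        (fun h => hxa h.symm)) with h | ⟨h1, h2⟩ | ⟨h1, h2⟩
      · exact h
      · exact absurd h2 hxb
      · exact absurd h1 hne
    · rcases hadj' b x (ht.isClique (by simpa using hbt) (by simpa using hxt)
        (fun h => hxb h.symm)) with h | ⟨h1, h2⟩ | ⟨h1, h2⟩
      · exact h
      · exact absurd h1.symm hne
      · exact absurd h2 hxa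
  refine ⟨K, ?_, hab, subset_univ _, ?_, ?_, ?_, ?_⟩
  · omega
  · have hbea : b ∈ t.erase a := mem_erase.mpr ⟨hne.symm, hbt⟩
    rw [hKdef, card_erase_of_mem hbea, card_erase_of_mem hat, ht.card_eq]
    omega
  · intro x hx y hy hxy
    obtain ⟨hxt, hxa, hxb⟩ := hKmem x hx
    obtain ⟨hyt, hya, hyb⟩ := hKmem y hy
    rcases hadj' x y (ht.isClique (by simpa using hxt) (by simpa using hyt) hxy)
      with h | ⟨h1, h2⟩ | ⟨h1, h2⟩
    · exact h
    · exact absurd h1 hxa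
    · exact absurd h1 hxb
  · intro x hx
    obtain ⟨hxt, hxa, hxb⟩ := hKmem x hx
    obtain ⟨ha1, hb1⟩ := hGadj x hxt hxa hxb
    have := hcl a x ha1
    have := hcl b x hb1
    omega
  · intro x hx
    obtain ⟨hxt, hxa, hxb⟩ := hKmem x hx
    exact hGadj x hxt hxa hxb

lemma double_count (G : SimpleGraph V) {r : ℕ} (P : Fin r → Finset V) (cl : V → ℕ)
    (R : Finset V)
    (hPmem : ∀ v u, v ∈ R → u ∈ NPv G cl v →
      ∃ i j : Fin r, i ≠ j ∧ v ∈ P i ∧ u ∈ P j) :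
    ∑ v ∈ R, (NPv G cl v).card ≤ 2 * coveredNonedges G P R := by
  classical
  rw [← Finset.card_sigma]
  rw [coveredNonedges]
  set E := Finset.univ.filter fun e : Sym2 V =>
    ∃ a b : V, e = s(a, b) ∧ ¬ G.Adj a b ∧
      (∃ i j : Fin r, i ≠ j ∧ a ∈ P i ∧ b ∈ P j) ∧ (a ∈ R ∨ b ∈ R) with hEdef
  refine card_le_mul_card_image_of_maps_to (f := fun p : (Σ _ : V, V) => s(p.1, p.2))
    (t := E) ?_ 2 ?_
  · rintro ⟨v, u⟩ hp
    obtain ⟨hvR, hu⟩ := Finset.mem_sigma.mp hp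
    obtain ⟨-, hnadj, hne⟩ := mem_filter.mp hu
    exact mem_filter.mpr ⟨mem_univ _, v, u, rfl, hnadj, hPmem v u hvR hu, Or.inl hvR⟩
  · intro e he
    induction e using Sym2.ind with
    | _ x y =>
      have hsub : ((R.sigma fun v => NPv G cl v).filter
          (fun p : (Σ _ : V, V) => s(p.1, p.2) = s(x, y))) ⊆ {⟨x, y⟩, ⟨y, x⟩} := by
        rintro ⟨v, u⟩ hp
        obtain ⟨-, hequ⟩ := mem_filter.mp hp
        rw [Sym2.eq_iff] at hequ
        rcases hequ with ⟨rfl, rfl⟩ | ⟨rfl, rfl⟩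
        · exact mem_insert_self _ _
        · exact mem_insert.mpr (Or.inr (mem_singleton_self _))
      calc _ ≤ ({⟨x, y⟩, ⟨y, x⟩} : Finset (Σ _ : V, V)).card := card_le_card hsub
        _ ≤ 2 := by
            refine le_trans (card_insert_le _ _) ?_
            simp

lemma deg_low (k T d : ℕ) (h : T ≤ 2*((2*k+2)*d^(k+1))) :
    ((T:ℝ)/(2*(2*(k:ℝ)+2)))^((1:ℝ)/((k:ℝ)+1)) ≤ (d:ℝ) := by
  have hC : (0:ℝ) < 2*(2*(k:ℝ)+2) := by positivity
  have h1 : (T:ℝ)/(2*(2*(k:ℝ)+2)) ≤ ((d:ℝ))^(k+1:ℕ) := by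
    rw [div_le_iff₀ hC]
    calc (T:ℝ) ≤ ((2*((2*k+2)*d^(k+1)):ℕ):ℝ) := Nat.cast_le.mpr h
      _ = (d:ℝ)^(k+1:ℕ) * (2*(2*(k:ℝ)+2)) := by push_cast; ring
  calc ((T:ℝ)/(2*(2*(k:ℝ)+2)))^((1:ℝ)/((k:ℝ)+1))
      ≤ ((d:ℝ)^(k+1:ℕ))^((1:ℝ)/((k:ℝ)+1)) :=
        Real.rpow_le_rpow (by positivity) h1 (by positivity)
    _ = (d:ℝ) := by
        rw [← Real.rpow_natCast (d:ℝ) (k+1), ← Real.rpow_mul (Nat.cast_nonneg _)]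
        rw [show ((k+1:ℕ):ℝ) * ((1:ℝ)/((k:ℝ)+1)) = 1 from by push_cast; field_simp]
        exact Real.rpow_one _

lemma final_num (k T big cov : ℕ) (s : ℝ) (hTpos : 0 < T) (hbigT : T ≤ 2*big)
    (h1 : (big:ℝ) * (((T:ℝ)/(2*(2*(k:ℝ)+2)))^((1:ℝ)/((k:ℝ)+1))) ≤ s)
    (h2 : s ≤ 2*(cov:ℝ)) :
    (16*(k:ℝ)+16)⁻¹ * (T:ℝ)^(1 + (1:ℝ)/((k:ℝ)+1)) ≤ (cov:ℝ) := by
  have hk : (0:ℝ) ≤ (k:ℝ) := Nat.cast_nonneg _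
  have hTpos' : (0:ℝ) < (T:ℝ) := by exact_mod_cast hTpos
  have hC : (0:ℝ) < 2*(2*(k:ℝ)+2) := by positivity
  have hβpos : (0:ℝ) < (1:ℝ)/((k:ℝ)+1) := by positivity
  have hβle : (1:ℝ)/((k:ℝ)+1) ≤ 1 := by
    rw [div_le_one (by positivity)]; linarith
  have hq : (T:ℝ)^((1:ℝ)/((k:ℝ)+1)) / (2*(2*(k:ℝ)+2))
      ≤ ((T:ℝ)/(2*(2*(k:ℝ)+2)))^((1:ℝ)/((k:ℝ)+1)) := by
    rw [Real.div_rpow (Nat.cast_nonneg _) hC.le]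
    rw [div_le_div_iff_of_pos_left (Real.rpow_pos_of_pos hTpos' _) hC (Real.rpow_pos_of_pos hC _)]
    calc (2*(2*(k:ℝ)+2))^((1:ℝ)/((k:ℝ)+1)) ≤ (2*(2*(k:ℝ)+2))^(1:ℝ) :=
          Real.rpow_le_rpow_of_exponent_le (by linarith) hβle
      _ = _ := Real.rpow_one _
  have hbc : (T:ℝ)/2 ≤ (big:ℝ) := by
    rw [div_le_iff₀ (by norm_num : (0:ℝ) < 2)]
    have h3 : (T:ℝ) ≤ ((2*big:ℕ):ℝ) := Nat.cast_le.mpr hbigT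
    push_cast at h3
    linarith
  have hm1 : ((T:ℝ)/2) * ((T:ℝ)^((1:ℝ)/((k:ℝ)+1)) / (2*(2*(k:ℝ)+2)))
      ≤ (big:ℝ) * ((T:ℝ)/(2*(2*(k:ℝ)+2)))^((1:ℝ)/((k:ℝ)+1)) :=
    mul_le_mul hbc hq (div_nonneg (Real.rpow_nonneg (Nat.cast_nonneg _) _) hC.le)
      (Nat.cast_nonneg _)
  have hsplit : (T:ℝ)^(1 + (1:ℝ)/((k:ℝ)+1)) = (T:ℝ) * (T:ℝ)^((1:ℝ)/((k:ℝ)+1)) := by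
    rw [Real.rpow_add hTpos', Real.rpow_one]
  rw [hsplit]
  have hkey2 : ((16*(k:ℝ)+16)⁻¹ * ((T:ℝ) * (T:ℝ)^((1:ℝ)/((k:ℝ)+1)))) * 2
      = ((T:ℝ)/2) * ((T:ℝ)^((1:ℝ)/((k:ℝ)+1)) / (2*(2*(k:ℝ)+2))) := by
    field_simp
    ring
  linarith

noncomputable def clFn {n : ℕ} (P : Fin n → Finset V)
    (hpart : ∀ v : V, ∃! i : Fin n, v ∈ P i) (v : V) : Fin n :=
  Classical.choose (hpart v)

lemma clFn_mem {n : ℕ} (P : Fin n → Finset V) (hpart : ∀ v : V, ∃! i : Fin n, v ∈ P i)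
    (v : V) : v ∈ P (clFn P hpart v) :=
  (Classical.choose_spec (hpart v)).1

lemma clFn_eq {n : ℕ} (P : Fin n → Finset V) (hpart : ∀ v : V, ∃! i : Fin n, v ∈ P i)
    {v : V} {i : Fin n} (h : v ∈ P i) : clFn P hpart v = i :=
  ((Classical.choose_spec (hpart v)).2 i h).symm

/-- Lemma 2, Part 1. Let `r ≥ 2` and let `G` be a `K_r`-free `r`-partite
graph with vertex classes `A = P 0`, `B = P 1`, `X₁ = P 2, …`. Then there is `R ⊆ A ∪ B`
covering all `r`-saturating `(A,B)` edges with `|I_{G̃}(R)| ≥ c_r |R|^{r/(r-1)}`. -/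
theorem cover_saturating_edges (r : ℕ) (hr : 2 ≤ r) :
    ∃ c : ℝ, 0 < c ∧
      ∀ (V : Type) [Fintype V] [DecidableEq V],
        ∀ (G : SimpleGraph V) (P : Fin r → Finset V),
        (∀ v : V, ∃! i : Fin r, v ∈ P i) →
        (∀ i : Fin r, ∀ v ∈ P i, ∀ w ∈ P i, ¬ G.Adj v w) →
        G.CliqueFree r →
        ∃ R : Finset V, R ⊆ P ⟨0, by omega⟩ ∪ P ⟨1, by omega⟩ ∧
          (∀ a ∈ P ⟨0, by omega⟩, ∀ b ∈ P ⟨1, by omega⟩, ¬ G.Adj a b →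
            ¬ (G ⊔ SimpleGraph.fromEdgeSet {s(a, b)}).CliqueFree r → a ∈ R ∨ b ∈ R) ∧
          c * (R.card : ℝ) ^ ((r : ℝ) / ((r : ℝ) - 1)) ≤ (coveredNonedges G P R : ℝ) := by
  obtain ⟨k, rfl⟩ : ∃ k, r = k + 2 := ⟨r - 2, by omega⟩
  refine ⟨(16 * (k : ℝ) + 16)⁻¹, by positivity, ?_⟩
  intro V _ _ G P hpart hind hfree
  set i0 : Fin (k+2) := ⟨0, by omega⟩ with hi0
  set i1 : Fin (k+2) := ⟨1, by omega⟩ with hi1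
  set cl : V → ℕ := fun v => (clFn P hpart v).val with hcldef
  have hclP : ∀ u v, G.Adj u v → cl u ≠ cl v := by
    intro u v hadj hequ
    have h2 : clFn P hpart u = clFn P hpart v := Fin.val_injective hequ
    exact hind _ u (clFn_mem P hpart u) v (h2 ▸ clFn_mem P hpart v) hadj
  have hclmem : ∀ v (i : Fin (k+2)), v ∈ P i → cl v = i.val := by
    intro v i h; rw [hcldef]; simp only []; rw [clFn_eq P hpart h]
  set Sat : V → V → Prop := fun a b =>
    a ∈ P i0 ∧ b ∈ P i1 ∧ ¬ G.Adj a b ∧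
      ¬ (G ⊔ SimpleGraph.fromEdgeSet {s(a, b)}).CliqueFree (k+2) with hSatdef
  have hsat : ∀ a b, Sat a b → cl a = 0 ∧ cl b = 1 ∧ ∃ K, Wit G cl Finset.univ k a b K := by
    intro a b ⟨h1, h2, h3, h4⟩
    have hca : cl a = 0 := hclmem a i0 h1
    have hcb : cl b = 1 := hclmem b i1 h2
    have hne : a ≠ b := fun h => by rw [h, hcb] at hca; omega
    exact ⟨hca, hcb, sat_wit G k cl hfree h3 hne hca hcb hclP h4⟩
  obtain ⟨R, hRW, hRcov, hRcnt⟩ :=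
    greedy_s11 G cl k hclP hfree Sat hsat (USat Sat ∅).card ∅ le_rfl
  rw [Finset.empty_union] at hRcov
  have hRAB : R ⊆ P i0 ∪ P i1 := by
    intro v hv
    obtain ⟨q, hq, hvq⟩ := mem_biUnion.mp (hRW hv)
    obtain ⟨hS, -, -⟩ := mem_USat.mp hq
    rcases mem_insert.mp hvq with rfl | hvq
    · exact mem_union_left _ hS.1
    · rw [mem_singleton.mp hvq]; exact mem_union_right _ hS.2.1
  refine ⟨R, hRAB, ?_, ?_⟩
  · intro a ha b hb hnadj hncf
    by_contra hcon
    push_neg at hcon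
    have : (a, b) ∈ USat Sat R := mem_USat.mpr
      ⟨⟨ha, hb, hnadj, hncf⟩, hcon.1, hcon.2⟩
    rw [hRcov] at this
    exact absurd this (notMem_empty _)
  -- the numerical bound
  have hPmem : ∀ v u, v ∈ R → u ∈ NPv G cl v →
      ∃ i j : Fin (k+2), i ≠ j ∧ v ∈ P i ∧ u ∈ P j := by
    intro v u _ hu
    obtain ⟨-, -, hnecl⟩ := mem_filter.mp hu
    refine ⟨clFn P hpart v, clFn P hpart u, ?_, clFn_mem P hpart v, clFn_mem P hpart u⟩
    intro h
    exact hnecl (congrArg Fin.val h.symm)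
  have hdc := double_count G P cl R hPmem
  set T := R.card with hTdef
  have hee : (((k:ℕ)+2 : ℕ) : ℝ) / ((((k:ℕ)+2 : ℕ) : ℝ) - 1) = 1 + 1/((k:ℝ)+1) := by
    push_cast
    rw [show (k:ℝ) + 2 - 1 = (k:ℝ)+1 from by ring]
    field_simp
    ring
  rw [hee]
  rcases Nat.eq_zero_or_pos T with hT0 | hTpos
  · rw [hT0]
    push_cast
    rw [Real.zero_rpow (by positivity)]
    rw [mul_zero]
    positivity
  set Sm := R.filter (fun v => (2*k+2) * (NPv G cl v).card^(k+1) < T/2 + 1) with hSm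
  have hSmR : Sm ⊆ R := by rw [hSm]; exact filter_subset _ _
  have hsmall : Sm.card < T/2 + 1 := hRcnt (T/2 + 1) (by omega)
  have hdeglow : ∀ v ∈ R \ Sm,
      ((T:ℝ)/(2*(2*(k:ℝ)+2)))^((1:ℝ)/((k:ℝ)+1)) ≤ ((NPv G cl v).card:ℝ) := by
    intro v hv
    obtain ⟨hvR, hvn⟩ := mem_sdiff.mp hv
    have h1 : ¬ ((2*k+2) * (NPv G cl v).card^(k+1) < T/2 + 1) := fun hc =>
      hvn (by rw [hSm]; exact mem_filter.mpr ⟨hvR, hc⟩)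
    push_neg at h1
    refine deg_low k T _ ?_
    calc T ≤ 2*(T/2+1) := by omega
      _ ≤ 2*((2*k+2) * (NPv G cl v).card^(k+1)) := Nat.mul_le_mul_left 2 h1
  have hsumlow : ((R \ Sm).card : ℝ) * (((T:ℝ)/(2*(2*(k:ℝ)+2)))^((1:ℝ)/((k:ℝ)+1)))
      ≤ ∑ v ∈ R, ((NPv G cl v).card:ℝ) := by
    have hstep := Finset.card_nsmul_le_sum (R \ Sm)
      (fun v => ((NPv G cl v).card:ℝ)) _ hdeglow
    rw [nsmul_eq_mul] at hstep
    exact le_trans hstep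
      (sum_le_sum_of_subset_of_nonneg sdiff_subset (fun i _ _ => Nat.cast_nonneg _))
  have hsum2 : (∑ v ∈ R, ((NPv G cl v).card:ℝ)) ≤ 2 * (coveredNonedges G P R : ℝ) := by
    exact_mod_cast hdc
  have hbigT : T ≤ 2 * (R \ Sm).card := by
    rw [card_sdiff_of_subset hSmR]
    omega
  exact final_num k T (R \ Sm).card (coveredNonedges G P R) _ hTpos hbigT hsumlow hsum2
end
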